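/- arXiv:1905.06062 — 8 statements merged into one kernel-verified Lean document; each statement's English description precedes it below -/
import Mathlib

section
/- The structure T_ℚ of all partial functions f : ℚ → ω whose domain is a proper initial segment of ℚ, such that f is empty or dom(f) has a maximum and f is a finite step function (piecewise constant on finitely many half-open intervals (q_i, q_{i+1}] with q_0 = -∞), ordered by inclusion, satisfies the axioms DPM: it is a pseudotree with least element, every two elements have an infimum, it satisfies Infinite Splitting, and it satisfies Density. -/
/-- The pseudotree `T_ℚ`: partial functions `f : ℚ → ω` (coded with `Option`) whose domain
is a proper initial segment of `ℚ` and which are empty or finite step functions whose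
domain has a maximum: there are `-∞ = q₀ < q₁ < ⋯ < qₙ = max (dom f)` with `f` constant on
each piece `(qᵢ, qᵢ₊₁]`. -/
def TQ : Set (ℚ → Option ℕ) :=
  {f | (∀ q, f q = none) ∨
    ∃ (n : ℕ) (q : Fin (n + 1) → ℚ) (c : Fin (n + 1) → ℕ),
      StrictMono q ∧
      (∀ r : ℚ, f r ≠ none ↔ r ≤ q (Fin.last n)) ∧
      (∀ r : ℚ, r ≤ q 0 → f r = some (c 0)) ∧
      ∀ i : Fin n, ∀ r : ℚ, q i.castSucc < r → r ≤ q i.succ → f r = some (c i.succ)}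

/-- The extension (inclusion) order on partial functions. -/
def TQle (f g : ℚ → Option ℕ) : Prop := ∀ (q : ℚ) (m : ℕ), f q = some m → g q = some m

/-- Strict extension. -/
def TQlt (f g : ℚ → Option ℕ) : Prop := TQle f g ∧ ¬ TQle g f

/-- `m` is the infimum of `f` and `g` in `T_ℚ`. -/
def TQIsInf (f g m : ↥TQ) : Prop :=
  TQle m.1 f.1 ∧ TQle m.1 g.1 ∧ ∀ h : ↥TQ, TQle h.1 f.1 → TQle h.1 g.1 → TQle h.1 m.1

lemma tq_dom {f : ℚ → Option ℕ} (hf : f ∈ TQ) :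
    ∀ ⦃r s : ℚ⦄, r ≤ s → f s ≠ none → f r ≠ none := by
  intro r s hrs hs
  rcases hf with h | ⟨n, q, c, _, hdom, _, _⟩
  · exact absurd (h s) hs
  · exact (hdom r).2 (le_trans hrs ((hdom s).1 hs))

lemma tq_locate {f : ℚ → Option ℕ} {n : ℕ} {q : Fin (n+1) → ℚ} {c : Fin (n+1) → ℕ}
    (hq : StrictMono q)
    (h0 : ∀ r : ℚ, r ≤ q 0 → f r = some (c 0))
    (hi : ∀ i : Fin n, ∀ r : ℚ, q i.castSucc < r → r ≤ q i.succ → f r = some (c i.succ))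
    (r : ℚ) (hr : r ≤ q (Fin.last n)) :
    ∃ j : Fin (n+1), r ≤ q j ∧ ∀ x : ℚ, r ≤ x → x ≤ q j → f x = some (c j) := by
  classical
  by_cases h : r ≤ q 0
  · exact ⟨0, h, fun x _ hx => h0 x hx⟩
  push_neg at h
  set S : Finset (Fin (n+1)) := Finset.univ.filter (fun j => q j < r) with hS
  have hne : S.Nonempty := ⟨0, by simp [hS, h]⟩
  have hjr : q (S.max' hne) < r := by
    exact (Finset.mem_filter.1 (S.max'_mem hne)).2
  have hjlast : S.max' hne ≠ Fin.last n := by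
    intro e; rw [e] at hjr; exact absurd hr (not_le.2 hjr)
  obtain ⟨i, hicast⟩ : ∃ i : Fin n, S.max' hne = i.castSucc :=
    ⟨(S.max' hne).castPred hjlast, by simp⟩
  rw [hicast] at hjr
  have hsucc : ¬ q i.succ < r := by
    intro hlt
    have hmem : i.succ ∈ S := by simp [hS, hlt]
    have := S.le_max' _ hmem
    rw [hicast] at this
    exact absurd this (not_le.2 Fin.castSucc_lt_succ)
  exact ⟨i.succ, not_lt.1 hsucc, fun x hx hx' => hi i x (lt_of_lt_of_le hjr hx) hx'⟩

lemma tq_bounded {f : ℚ → Option ℕ} (hf : f ∈ TQ) : ∃ N, ∀ r v, f r = some v → v < N := by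
  rcases hf with h | ⟨n, q, c, hq, hdom, h0, hi⟩
  · exact ⟨1, fun r v hv => by rw [h r] at hv; cases hv⟩
  refine ⟨(Finset.univ.sup c) + 1, fun r v hv => ?_⟩
  have hr : r ≤ q (Fin.last n) := (hdom r).1 (by rw [hv]; simp)
  obtain ⟨j, hj1, hj⟩ := tq_locate hq h0 hi r hr
  have h2 := hj r le_rfl hj1
  rw [hv] at h2
  have hv2 : v = c j := Option.some.inj h2
  exact hv2 ▸ Nat.lt_succ_of_le (Finset.le_sup (Finset.mem_univ j))

lemma tq_restrict {f : ℚ → Option ℕ} (hf : f ∈ TQ) (p : ℚ) (hp : f p ≠ none) :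
    (fun r => if r ≤ p then f r else none) ∈ TQ := by
  classical
  rcases hf with h | ⟨n, q, c, hq, hdom, h0, hi⟩
  · exact absurd (h p) hp
  have hple : p ≤ q (Fin.last n) := (hdom p).1 hp
  have hex : ∃ j, ∃ h : j < n + 1, ¬ q ⟨j, h⟩ < p :=
    ⟨n, n.lt_succ_self, by exact not_lt.2 hple⟩
  set k := Nat.find hex with hk
  obtain ⟨hk1, hk2⟩ := Nat.find_spec hex
  have hkn : k < n + 1 := hk1
  have hprop : ∀ (j : Fin (n+1)), (q j < p ↔ (j : ℕ) < k) := by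
    intro j
    constructor
    · intro hlt
      by_contra hge
      push_neg at hge
      have hmono : q ⟨k, hkn⟩ ≤ q j := hq.monotone (by simpa [Fin.le_def] using hge)
      exact hk2 (lt_of_le_of_lt hmono hlt)
    · intro hlt
      have h2 := Nat.find_min hex hlt
      push_neg at h2
      have := h2 j.isLt
      simpa using this
  right
  refine ⟨k, (fun j => if h : (j:ℕ) < k then q ⟨j, by omega⟩ else p),
    (fun j => if h : (j:ℕ) < k then c ⟨j, by omega⟩ else c ⟨k, hkn⟩), ?_, ?_, ?_, ?_⟩
  · intro j1 j2 h12
    dsimp only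
    have h12' : (j1 : ℕ) < (j2 : ℕ) := Fin.lt_def.1 h12
    rcases lt_or_ge (j1 : ℕ) k with h1 | h1
    · rcases lt_or_ge (j2 : ℕ) k with h2 | h2
      · rw [dif_pos h1, dif_pos h2]
        exact hq h12'
      · rw [dif_pos h1, dif_neg (not_lt.2 h2)]
        exact (hprop ⟨j1, by omega⟩).2 h1
    · exfalso
      have hj2 : (j2 : ℕ) ≤ k := by omega
      omega
  · intro r
    dsimp only
    have hlastv : ((Fin.last k : Fin (k+1)) : ℕ) = k := rfl
    rw [dif_neg (by omega : ¬ ((Fin.last k : Fin (k+1)) : ℕ) < k)]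
    constructor
    · intro hne
      by_contra hrp
      rw [if_neg hrp] at hne
      exact hne rfl
    · intro hrp
      rw [if_pos hrp]
      exact (hdom r).2 (hrp.trans hple)
  · intro r hr
    dsimp only at hr ⊢
    have h0v : (((0 : Fin (k+1))) : ℕ) = 0 := rfl
    rcases lt_or_ge 0 k with h1 | h1
    · rw [dif_pos (by omega : (((0 : Fin (k+1))) : ℕ) < k)] at hr ⊢
      have hrp : r ≤ p := hr.trans (le_of_lt ((hprop ⟨0, by omega⟩).2 h1))
      rw [if_pos hrp]
      have h00 : (⟨(((0 : Fin (k+1))) : ℕ), by omega⟩ : Fin (n+1)) = 0 := by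
        apply Fin.ext
        show ((0 : Fin (k+1)) : ℕ) = ((0 : Fin (n+1)) : ℕ)
        rw [Fin.val_zero, Fin.val_zero]
      rw [h00]
      exact h0 r (h00 ▸ hr)
    · rw [dif_neg (by omega : ¬ (((0 : Fin (k+1))) : ℕ) < k)] at hr ⊢
      have hq0 : p ≤ q 0 := by
        by_contra hlt
        have := (hprop 0).1 (not_le.1 hlt)
        simp at this
        omega
      rw [if_pos hr]
      have hck : (⟨k, hkn⟩ : Fin (n+1)) = 0 := by apply Fin.ext; simp; omega
      rw [hck]
      exact h0 r (hr.trans hq0)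
  · intro i r hr1 hr2
    dsimp only at hr1 hr2 ⊢
    have hic : ((i.castSucc : Fin (k+1)) : ℕ) = (i : ℕ) := rfl
    have his : ((i.succ : Fin (k+1)) : ℕ) = (i : ℕ) + 1 := rfl
    have hik : (i : ℕ) < k := i.isLt
    rw [dif_pos (by omega : ((i.castSucc : Fin (k+1)) : ℕ) < k)] at hr1
    rcases lt_or_ge ((i : ℕ) + 1) k with h2 | h2
    · rw [dif_pos (by omega : ((i.succ : Fin (k+1)) : ℕ) < k)] at hr2 ⊢
      have hin : (i : ℕ) < n := by omega
      have hval : f r = some (c (Fin.succ ⟨(i:ℕ), hin⟩)) := hi ⟨(i:ℕ), hin⟩ r hr1 hr2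
      have hrp : r ≤ p :=
        hr2.trans (le_of_lt ((hprop ⟨(i:ℕ)+1, by omega⟩).2 h2))
      rw [if_pos hrp]
      exact hval
    · have h2' : (i : ℕ) + 1 = k := by omega
      rw [dif_neg (by omega : ¬ ((i.succ : Fin (k+1)) : ℕ) < k)] at hr2 ⊢
      have hin : (i : ℕ) < n := by omega
      have hrq : r ≤ q (Fin.succ ⟨(i:ℕ), hin⟩) := by
        have hsv : q (Fin.succ ⟨(i:ℕ), hin⟩) = q ⟨k, hkn⟩ := by
          congr 1; apply Fin.ext; simp [Fin.succ]; omega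
        rw [hsv]
        exact hr2.trans (not_lt.1 hk2)
      have hval : f r = some (c (Fin.succ ⟨(i:ℕ), hin⟩)) := hi ⟨(i:ℕ), hin⟩ r hr1 hrq
      rw [if_pos hr2]
      rw [hval]
      congr 1
      congr 1
      apply Fin.ext
      simp [Fin.succ]
      omega

lemma tq_extend {g : ℚ → Option ℕ} (hg : g ∈ TQ) (p : ℚ) (c : ℕ)
    (hp : ∀ r, p ≤ r → g r = none) :
    (fun r => if r ≤ p then some ((g r).getD c) else none) ∈ TQ := by
  classical
  rcases hg with h | ⟨n, q, cs, hq, hdom, h0, hi⟩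
  · right
    refine ⟨0, fun _ => p, fun _ => c, ?_, ?_, ?_, ?_⟩
    · intro a b hab
      have h1 : (a : ℕ) < b := hab
      have h2 := b.isLt
      omega
    · intro r
      dsimp only
      constructor
      · intro hne
        by_contra hrp
        rw [if_neg hrp] at hne; exact hne rfl
      · intro hrp
        rw [if_pos hrp]; exact Option.some_ne_none _
    · intro r hr
      dsimp only at hr ⊢
      rw [if_pos hr, h r]
      rfl
    · exact fun i => i.elim0
  · have hlt : q (Fin.last n) < p := by
      by_contra hle
      exact (hdom (q (Fin.last n))).2 le_rfl (hp _ (not_lt.1 hle))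
    right
    refine ⟨n+1, (fun j : Fin (n+2) => if h : (j:ℕ) < n+1 then q ⟨j, h⟩ else p),
      (fun j : Fin (n+2) => if h : (j:ℕ) < n+1 then cs ⟨j, h⟩ else c), ?_, ?_, ?_, ?_⟩
    · intro j1 j2 h12
      dsimp only
      have h12' : (j1 : ℕ) < (j2 : ℕ) := h12
      rcases lt_or_ge (j1 : ℕ) (n+1) with h1 | h1
      · rcases lt_or_ge (j2 : ℕ) (n+1) with h2 | h2
        · rw [dif_pos h1, dif_pos h2]
          exact hq h12'
        · rw [dif_pos h1, dif_neg (not_lt.2 h2)]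
          calc q ⟨j1, h1⟩ ≤ q (Fin.last n) := hq.monotone (by
                have : (j1:ℕ) ≤ n := by omega
                exact this)
            _ < p := hlt
      · exfalso
        have : (j2 : ℕ) ≤ n + 1 := by omega
        omega
    · intro r
      dsimp only
      rw [dif_neg (by simp : ¬ ((Fin.last (n+1) : Fin (n+2)) : ℕ) < n+1)]
      constructor
      · intro hne
        by_contra hrp
        rw [if_neg hrp] at hne; exact hne rfl
      · intro hrp
        rw [if_pos hrp]; exact Option.some_ne_none _
    · intro r hr
      dsimp only at hr ⊢
      rw [dif_pos (by simp : (((0 : Fin (n+2))) : ℕ) < n+1)] at hr ⊢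
      have h00 : (⟨(((0 : Fin (n+2))) : ℕ), by simp⟩ : Fin (n+1)) = 0 := by
        apply Fin.ext
        show ((0 : Fin (n+2)) : ℕ) = ((0 : Fin (n+1)) : ℕ)
        rw [Fin.val_zero, Fin.val_zero]
      rw [h00] at hr ⊢
      have hgr : g r = some (cs 0) := h0 r hr
      have hrp : r ≤ p := hr.trans ((hq.monotone (Fin.zero_le _)).trans hlt.le)
      rw [if_pos hrp, hgr]
      rfl
    · intro i r hr1 hr2
      dsimp only at hr1 hr2 ⊢
      have hic : ((i.castSucc : Fin (n+2)) : ℕ) = (i : ℕ) := rfl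
      have his : ((i.succ : Fin (n+2)) : ℕ) = (i : ℕ) + 1 := rfl
      have hik : (i : ℕ) < n + 1 := i.isLt
      rw [dif_pos (by omega : ((i.castSucc : Fin (n+2)) : ℕ) < n+1)] at hr1
      rcases lt_or_ge ((i : ℕ) + 1) (n+1) with h2 | h2
      · rw [dif_pos (by omega : ((i.succ : Fin (n+2)) : ℕ) < n+1)] at hr2 ⊢
        have hin : (i : ℕ) < n := by omega
        have hval : g r = some (cs (Fin.succ ⟨(i:ℕ), hin⟩)) := hi ⟨(i:ℕ), hin⟩ r hr1 hr2
        have hrp : r ≤ p := hr2.trans ((hq.monotone (Fin.le_last _)).trans hlt.le)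
        rw [if_pos hrp, hval]
        rfl
      · have h2' : (i : ℕ) = n := by omega
        rw [dif_neg (by omega : ¬ ((i.succ : Fin (n+2)) : ℕ) < n+1)] at hr2 ⊢
        have hlast : q (Fin.last n) < r := by
          have he : (⟨((i.castSucc : Fin (n+2)) : ℕ), by omega⟩ : Fin (n+1)) = Fin.last n := by
            apply Fin.ext
            show ((i.castSucc : Fin (n+2)) : ℕ) = n
            rw [hic]; exact h2'
          calc q (Fin.last n) = q ⟨((i.castSucc : Fin (n+2)) : ℕ), by omega⟩ := by rw [he]
            _ < r := hr1
        have hgr : g r = none := by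
          by_contra hne
          exact absurd ((hdom r).1 hne) (not_le.2 hlast)
        rw [if_pos hr2, hgr]
        rfl


lemma tq_antisymm (f g : ↥TQ) (hfg : TQle f.1 g.1) (hgf : TQle g.1 f.1) : f = g := by
  apply Subtype.ext
  funext q
  cases hf : f.1 q with
  | none =>
    cases hg : g.1 q with
    | none => rfl
    | some v =>
      have := hgf q v hg
      rw [hf] at this; cases this
  | some v => exact (hfg q v hf).symm

lemma tq_linear (a b c : ↥TQ) (hba : TQle b.1 a.1) (hca : TQle c.1 a.1) :
    TQle b.1 c.1 ∨ TQle c.1 b.1 := by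
  classical
  by_cases hbc : ∀ r, c.1 r ≠ none → b.1 r ≠ none
  · right
    intro r v hcv
    obtain ⟨w, hw⟩ := Option.ne_none_iff_exists'.1 (hbc r (by rw [hcv]; simp))
    have h1 := hba r w hw
    have h2 := hca r v hcv
    rw [h1] at h2
    rw [hw, ← Option.some.inj h2]
  · left
    push_neg at hbc
    obtain ⟨r, hcr, hbr⟩ := hbc
    intro s v hbv
    have hsr : s ≤ r := by
      by_contra h
      exact (tq_dom b.2 (not_le.1 h).le (by rw [hbv]; simp)) hbr
    obtain ⟨w, hw⟩ := Option.ne_none_iff_exists'.1 (tq_dom c.2 hsr hcr)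
    have h1 := hca s w hw
    have h2 := hba s v hbv
    rw [h1] at h2
    rw [hw, Option.some.inj h2]

lemma tq_inf (f g : ↥TQ) : ∃ m : ↥TQ, TQIsInf f g m := by
  classical
  -- the common part: h ≤ f and h ≤ g implies each point of h is an "agreement point"
  have hcommon : ∀ h : ↥TQ, TQle h.1 f.1 → TQle h.1 g.1 →
      ∀ r v, h.1 r = some v → (f.1 r = some v ∧ ∀ s ≤ r, f.1 s = g.1 s) := by
    intro h hhf hhg r v hv
    refine ⟨hhf r v hv, fun s hs => ?_⟩
    obtain ⟨w, hw⟩ := Option.ne_none_iff_exists'.1 (tq_dom h.2 hs (by rw [hv]; simp))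
    rw [hhf s w hw, hhg s w hw]
  by_cases hA : ∃ r : ℚ, f.1 r ≠ none ∧ ∀ s ≤ r, f.1 s = g.1 s
  · obtain ⟨r0, hr0⟩ := hA
    -- f and g are nonempty step functions
    obtain ⟨nf, qf, cf, hqf, hdomf, h0f, hif⟩ : ∃ (n : ℕ) (q : Fin (n + 1) → ℚ) (c : Fin (n + 1) → ℕ),
        StrictMono q ∧ (∀ r : ℚ, f.1 r ≠ none ↔ r ≤ q (Fin.last n)) ∧
        (∀ r : ℚ, r ≤ q 0 → f.1 r = some (c 0)) ∧
        ∀ i : Fin n, ∀ r : ℚ, q i.castSucc < r → r ≤ q i.succ → f.1 r = some (c i.succ) := by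
      rcases f.2 with h | h
      · exact absurd (h r0) hr0.1
      · exact h
    obtain ⟨ng, qg, cg, hqg, hdomg, h0g, hig⟩ : ∃ (n : ℕ) (q : Fin (n + 1) → ℚ) (c : Fin (n + 1) → ℕ),
        StrictMono q ∧ (∀ r : ℚ, g.1 r ≠ none ↔ r ≤ q (Fin.last n)) ∧
        (∀ r : ℚ, r ≤ q 0 → g.1 r = some (c 0)) ∧
        ∀ i : Fin n, ∀ r : ℚ, q i.castSucc < r → r ≤ q i.succ → g.1 r = some (c i.succ) := by
      rcases g.2 with h | h
      · exact absurd (h r0) (by rw [← hr0.2 r0 le_rfl]; exact hr0.1)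
      · exact h
    -- inner lemma: every agreement point is below an agreement breakpoint
    have inner : ∀ r, (f.1 r ≠ none ∧ ∀ s ≤ r, f.1 s = g.1 s) →
        ∃ b, b ∈ ((Finset.univ.image qf) ∪ (Finset.univ.image qg)) ∧ r ≤ b ∧
          (f.1 b ≠ none ∧ ∀ s ≤ b, f.1 s = g.1 s) := by
      intro r hr
      have hrf : r ≤ qf (Fin.last nf) := (hdomf r).1 hr.1
      have hrg : r ≤ qg (Fin.last ng) := (hdomg r).1 (by rw [← hr.2 r le_rfl]; exact hr.1)
      set e := min (qf (Fin.last nf)) (qg (Fin.last ng)) with he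
      have hre : r ≤ e := le_min hrf hrg
      set D := (((Finset.univ.image qf) ∪ (Finset.univ.image qg)).filter
        (fun d => r ≤ d ∧ d ≤ e)) with hD
      have heD : e ∈ D := by
        rw [hD, Finset.mem_filter]
        refine ⟨?_, hre, le_rfl⟩
        rcases min_cases (qf (Fin.last nf)) (qg (Fin.last ng)) with ⟨h1, _⟩ | ⟨h1, _⟩
        · exact Finset.mem_union_left _ (by rw [he, h1]; exact Finset.mem_image_of_mem _ (Finset.mem_univ _))
        · exact Finset.mem_union_right _ (by rw [he, h1]; exact Finset.mem_image_of_mem _ (Finset.mem_univ _))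
      have hne : D.Nonempty := ⟨e, heD⟩
      obtain ⟨hbU, hrb, hbe⟩ : D.min' hne ∈ ((Finset.univ.image qf) ∪ (Finset.univ.image qg)) ∧
          r ≤ D.min' hne ∧ D.min' hne ≤ e := by
        have := Finset.mem_filter.1 (D.min'_mem hne)
        exact ⟨this.1, this.2.1, this.2.2⟩
      refine ⟨D.min' hne, hbU, hrb, (hdomf _).2 (hbe.trans (min_le_left _ _)), ?_⟩
      intro s hs
      rcases le_or_gt s r with h | h
      · exact hr.2 s h
      obtain ⟨jf, hjf1, hjf2⟩ := tq_locate hqf h0f hif r hrf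
      obtain ⟨jg, hjg1, hjg2⟩ := tq_locate hqg h0g hig r hrg
      have hsf : s ≤ qf jf := by
        rcases le_or_gt (qf jf) e with h1 | h1
        · refine hs.trans (D.min'_le _ ?_)
          rw [hD, Finset.mem_filter]
          exact ⟨Finset.mem_union_left _ (Finset.mem_image_of_mem _ (Finset.mem_univ jf)), hjf1, h1⟩
        · exact hs.trans (hbe.trans h1.le)
      have hsg : s ≤ qg jg := by
        rcases le_or_gt (qg jg) e with h1 | h1
        · refine hs.trans (D.min'_le _ ?_)
          rw [hD, Finset.mem_filter]
          exact ⟨Finset.mem_union_right _ (Finset.mem_image_of_mem _ (Finset.mem_univ jg)), hjg1, h1⟩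
        · exact hs.trans (hbe.trans h1.le)
      rw [hjf2 s h.le hsf, hjg2 s h.le hsg, ← hjf2 r le_rfl hjf1, ← hjg2 r le_rfl hjg1]
      exact hr.2 r le_rfl
    -- the maximum agreement breakpoint
    obtain ⟨b0, hb0U, _, hb0A⟩ := inner r0 hr0
    set Dset := (((Finset.univ.image qf) ∪ (Finset.univ.image qg)).filter
      (fun d => f.1 d ≠ none ∧ ∀ s ≤ d, f.1 s = g.1 s)) with hDs
    have hDne : Dset.Nonempty := ⟨b0, by rw [hDs, Finset.mem_filter]; exact ⟨hb0U, hb0A⟩⟩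
    have hpA : f.1 (Dset.max' hDne) ≠ none ∧ ∀ s ≤ Dset.max' hDne, f.1 s = g.1 s := by
      exact (Finset.mem_filter.1 (Dset.max'_mem hDne)).2
    set p := Dset.max' hDne with hpdef
    have key : ∀ r, r ≤ p ↔ (f.1 r ≠ none ∧ ∀ s ≤ r, f.1 s = g.1 s) := by
      intro r
      constructor
      · intro h
        exact ⟨tq_dom f.2 h hpA.1, fun s hs => hpA.2 s (hs.trans h)⟩
      · intro h
        obtain ⟨b, hbU, hrb, hbA⟩ := inner r h
        refine hrb.trans (Dset.le_max' b ?_)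
        rw [hDs, Finset.mem_filter]
        exact ⟨hbU, hbA⟩
    refine ⟨⟨fun r => if r ≤ p then f.1 r else none, tq_restrict f.2 p hpA.1⟩, ?_, ?_, ?_⟩
    · intro r v hv
      dsimp only at hv
      by_cases hrp : r ≤ p
      · rw [if_pos hrp] at hv; exact hv
      · rw [if_neg hrp] at hv; cases hv
    · intro r v hv
      dsimp only at hv
      by_cases hrp : r ≤ p
      · rw [if_pos hrp] at hv
        rw [← ((key r).1 hrp).2 r le_rfl]
        exact hv
      · rw [if_neg hrp] at hv; cases hv
    · intro h hhf hhg r v hv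
      obtain ⟨h1, h2⟩ := hcommon h hhf hhg r v hv
      have hrp : r ≤ p := (key r).2 ⟨by rw [h1]; simp, h2⟩
      dsimp only
      rw [if_pos hrp]
      exact h1
  · refine ⟨⟨fun _ => none, Or.inl fun _ => rfl⟩, ?_, ?_, ?_⟩
    · intro r v hv; cases hv
    · intro r v hv; cases hv
    · intro h hhf hhg r v hv
      exact absurd ⟨by rw [(hcommon h hhf hhg r v hv).1]; simp,
        (hcommon h hhf hhg r v hv).2⟩ (fun hc => hA ⟨r, hc⟩)

lemma tq_split (g : ↥TQ) (n : ℕ) (F : Fin n → ↥TQ) (hgF : ∀ i, TQle g.1 (F i).1)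
    (hinf : ∀ i j : Fin n, i < j → TQIsInf (F i) (F j) g) :
    ∃ fn : ↥TQ, TQlt g.1 fn.1 ∧ ∀ i, TQIsInf (F i) fn g := by
  classical
  choose N hN using fun i => tq_bounded (F i).2
  set C := Finset.univ.sup N with hC
  have hP : ∃ p : ℚ, ∀ r, p ≤ r → g.1 r = none := by
    rcases g.2 with h | ⟨m, q, c, hq, hdom, _, _⟩
    · exact ⟨0, fun r _ => h r⟩
    · refine ⟨q (Fin.last m) + 1, fun r hr => ?_⟩
      by_contra hne
      have := (hdom r).1 hne
      linarith
  obtain ⟨p, hp⟩ := hP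
  have hmem := tq_extend g.2 p C hp
  have hgle : TQle g.1 (fun r => if r ≤ p then some ((g.1 r).getD C) else none) := by
    intro r v hv
    have hrp : r ≤ p := by
      by_contra h
      rw [hp r (not_le.1 h).le] at hv; cases hv
    show (if r ≤ p then some ((g.1 r).getD C) else none) = some v
    rw [if_pos hrp, hv]
    rfl
  refine ⟨⟨_, hmem⟩, ⟨hgle, ?_⟩, ?_⟩
  · intro hle
    have h1 := hle p C (by
      show (if p ≤ p then some ((g.1 p).getD C) else none) = some C
      rw [if_pos le_rfl, hp p le_rfl]; rfl)
    rw [hp p le_rfl] at h1; cases h1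
  · intro i
    refine ⟨hgF i, hgle, ?_⟩
    intro h hhF hhfn r v hv
    have h1 := hhF r v hv
    have h2 := hhfn r v hv
    dsimp only at h2
    have hrp : r ≤ p := by
      by_contra hh
      rw [if_neg hh] at h2; cases h2
    rw [if_pos hrp] at h2
    cases hgr : g.1 r with
    | some w =>
      rw [hgr] at h2
      exact h2
    | none =>
      exfalso
      rw [hgr] at h2
      have hvC : v = C := (Option.some.inj h2).symm
      have := hN i r v h1
      have hle : N i ≤ C := Finset.le_sup (Finset.mem_univ i)
      omega

lemma tq_density (g f : ↥TQ) (h : TQlt g.1 f.1) :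
    ∃ h : ↥TQ, TQlt g.1 h.1 ∧ TQlt h.1 f.1 := by
  classical
  obtain ⟨hle, hnle⟩ := h
  rw [TQle] at hnle
  push_neg at hnle
  obtain ⟨q, v, hfv, hgv⟩ := hnle
  have hgq : g.1 q = none := by
    cases hg : g.1 q with
    | none => rfl
    | some w =>
      have := hle q w hg
      rw [hfv] at this
      rw [← Option.some.inj this] at hg
      exact absurd hg hgv
  have hpex : ∃ p : ℚ, p < q ∧ g.1 p = none ∧ ∀ r w, g.1 r = some w → r < p := by
    rcases g.2 with h | ⟨m, qs, c, hq, hdom, _, _⟩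
    · exact ⟨q - 1, by linarith, h _, fun r w hw => by rw [h r] at hw; cases hw⟩
    · have haq : qs (Fin.last m) < q := by
        by_contra hh
        exact (hdom q).2 (not_lt.1 hh) hgq
      refine ⟨(qs (Fin.last m) + q) / 2, by linarith, ?_, ?_⟩
      · by_contra hh
        have := (hdom _).1 hh
        linarith
      · intro r w hw
        have : r ≤ qs (Fin.last m) := (hdom r).1 (by rw [hw]; simp)
        linarith
  obtain ⟨p, hpq, hgp, hgdom⟩ := hpex
  have hfp : f.1 p ≠ none := tq_dom f.2 hpq.le (by rw [hfv]; simp)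
  obtain ⟨w0, hw0⟩ := Option.ne_none_iff_exists'.1 hfp
  refine ⟨⟨fun r => if r ≤ p then f.1 r else none, tq_restrict f.2 p hfp⟩, ⟨?_, ?_⟩, ?_, ?_⟩
  · intro r v' hv'
    have hrp : r ≤ p := (hgdom r v' hv').le
    dsimp only
    rw [if_pos hrp]
    exact hle r v' hv'
  · intro hcon
    have := hcon p w0 (by dsimp only; rw [if_pos le_rfl]; exact hw0)
    rw [hgp] at this; cases this
  · intro r v' hv'
    dsimp only at hv'
    by_cases hrp : r ≤ p
    · rw [if_pos hrp] at hv'; exact hv'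
    · rw [if_neg hrp] at hv'; cases hv'
  · intro hcon
    have := hcon q v hfv
    dsimp only at this
    rw [if_neg (not_le.2 hpq)] at this
    cases this

/-- `T_ℚ`, ordered by inclusion, satisfies the axioms DPM: it is a
partially ordered pseudotree with least element `0` (the empty function), any two elements
have an infimum, and it satisfies Infinite Splitting and Density. -/
theorem stmt8 :
    -- inclusion is a partial order on T_ℚ
    (∀ f : ↥TQ, TQle f.1 f.1) ∧
    (∀ f g h : ↥TQ, TQle f.1 g.1 → TQle g.1 h.1 → TQle f.1 h.1) ∧
    (∀ f g : ↥TQ, TQle f.1 g.1 → TQle g.1 f.1 → f = g) ∧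
    -- pseudotree: linear below any element
    (∀ a b c : ↥TQ, TQle b.1 a.1 → TQle c.1 a.1 → TQle b.1 c.1 ∨ TQle c.1 b.1) ∧
    -- least element 0
    ((fun _ : ℚ => (none : Option ℕ)) ∈ TQ ∧ ∀ f : ↥TQ, TQle (fun _ => none) f.1) ∧
    -- binary infima
    (∀ f g : ↥TQ, ∃ m : ↥TQ, TQIsInf f g m) ∧
    -- Infinite Splitting
    (∀ (g : ↥TQ) (n : ℕ) (F : Fin n → ↥TQ), (∀ i, TQle g.1 (F i).1) →
      (∀ i j : Fin n, i < j → TQIsInf (F i) (F j) g) →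
      ∃ fn : ↥TQ, TQlt g.1 fn.1 ∧ ∀ i, TQIsInf (F i) fn g) ∧
    -- Density
    (∀ g f : ↥TQ, TQlt g.1 f.1 → ∃ h : ↥TQ, TQlt g.1 h.1 ∧ TQlt h.1 f.1) := by
  refine ⟨fun f q m h => h,
    fun f g h hfg hgh q m hm => hgh q m (hfg q m hm),
    tq_antisymm, tq_linear,
    ⟨Or.inl fun _ => rfl, fun f q m h => by simp at h⟩,
    tq_inf, tq_split, tq_density⟩
end

section
/- Suppose T satisfies PM, Q satisfies DPM, a ∈ T, S is a finite substructure of T (closed under ∧ and containing 0), and π : S → Q is an embedding. Then there is a finite substructure S' of T containing S ∪ {a} and an embedding π' : S' → Q extending π. -/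
/-- A pseudotree order: the elements below any given element are linearly ordered. -/
def PseudotreeOrd (T : Type*) [Preorder T] : Prop :=
  ∀ a b c : T, b ≤ a → c ≤ a → b ≤ c ∨ c ≤ b

/-- The Infinite Splitting axiom of the theory DPM. -/
def InfSplitting (T : Type*) [SemilatticeInf T] : Prop :=
  ∀ (g : T) (n : ℕ) (f : Fin n → T), (∀ i, g ≤ f i) →
    (∀ i j : Fin n, i < j → f i ⊓ f j = g) →
    ∃ fn : T, g < fn ∧ ∀ i, f i ⊓ fn = g

/-- The Density axiom of the theory DPM. -/
def DenseOrd (T : Type*) [Preorder T] : Prop :=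
  ∀ g f : T, g < f → ∃ h, g < h ∧ h < f

lemma dense_avoid {Q : Type*} [Preorder Q] (hdense : DenseOrd Q) :
    ∀ (F : Finset Q) (u v : Q), u < v → ∃ w, u < w ∧ w < v ∧ w ∉ F := by
  classical
  intro F
  induction F using Finset.strongInduction with
  | _ F ih =>
    intro u v huv
    obtain ⟨w, hw1, hw2⟩ := hdense u v huv
    by_cases hF : w ∈ F
    · obtain ⟨w', h1, h2, h3⟩ := ih (F.erase w) (Finset.erase_ssubset hF) u w hw1
      exact ⟨w', h1, h2.trans hw2, fun hmem => h3 (Finset.mem_erase.mpr ⟨h2.ne, hmem⟩)⟩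
    · exact ⟨w, hw1, hw2, hF⟩

lemma exists_max_linear {T : Type*} [PartialOrder T] {s : Set T} (hfin : s.Finite)
    (hne : s.Nonempty) (hlin : ∀ x ∈ s, ∀ y ∈ s, x ≤ y ∨ y ≤ x) :
    ∃ m ∈ s, ∀ x ∈ s, x ≤ m := by
  obtain ⟨m, hm, hmax⟩ := Set.Finite.exists_maximalFor id s hfin hne
  refine ⟨m, hm, fun x hx => ?_⟩
  rcases hlin x hx m hm with h | h
  · exact h
  · exact hmax hx h

lemma exists_minimal_le {T : Type*} [PartialOrder T] {E : Set T} (hfin : E.Finite)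
    {x : T} (hx : x ∈ E) : ∃ y ∈ E, y ≤ x ∧ ∀ z ∈ E, z ≤ y → z = y := by
  obtain ⟨y, hy, hmin⟩ := Set.Finite.exists_minimalFor id {z ∈ E | z ≤ x}
    (hfin.subset (Set.sep_subset _ _)) ⟨x, hx, le_refl x⟩
  exact ⟨y, hy.1, hy.2, fun z hz hzy => le_antisymm hzy (hmin ⟨hz, hzy.trans hy.2⟩ hzy)⟩

lemma ext1 {T Q : Type*} [SemilatticeInf T] [OrderBot T]
    [SemilatticeInf Q] [OrderBot Q]
    (hT : PseudotreeOrd T) (hQ : PseudotreeOrd Q)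
    (hsplit : InfSplitting Q) (hdense : DenseOrd Q)
    (b : T) (S : Set T) (hfin : S.Finite) (hbot : ⊥ ∈ S)
    (hcl : ∀ x ∈ S, ∀ y ∈ S, x ⊓ y ∈ S)
    (π : ↥S → Q) (hinj : Function.Injective π)
    (hπbot : π ⟨⊥, hbot⟩ = ⊥)
    (hπinf : ∀ x y : ↥S, π ⟨x.1 ⊓ y.1, hcl _ x.2 _ y.2⟩ = π x ⊓ π y)
    (hb : b ∉ S) (hclb : ∀ s ∈ S, s ⊓ b ∈ S ∨ b ≤ s) :
    ∃ (hbot' : ⊥ ∈ insert b S)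
      (hcl' : ∀ x ∈ insert b S, ∀ y ∈ insert b S, x ⊓ y ∈ insert b S),
      ∃ π' : ↥(insert b S) → Q, Function.Injective π' ∧
        π' ⟨⊥, hbot'⟩ = ⊥ ∧
        (∀ x y : ↥(insert b S), π' ⟨x.1 ⊓ y.1, hcl' _ x.2 _ y.2⟩ = π' x ⊓ π' y) ∧
        ∀ (x : T) (hx : x ∈ S), π' ⟨x, Set.mem_insert_of_mem b hx⟩ = π ⟨x, hx⟩ := by
  classical
  haveI := hfin.to_subtype
  -- monotonicity facts for π
  have hmono : ∀ x y : ↥S, x.1 ≤ y.1 → π x ≤ π y := by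
    intro x y h
    have h1 : (⟨x.1 ⊓ y.1, hcl _ x.2 _ y.2⟩ : ↥S) = x := Subtype.ext (inf_eq_left.mpr h)
    have h2 := hπinf x y
    rw [h1] at h2
    exact inf_eq_left.mp h2.symm
  have hrefl : ∀ x y : ↥S, π x ≤ π y → x.1 ≤ y.1 := by
    intro x y h
    have h2 : π ⟨x.1 ⊓ y.1, hcl _ x.2 _ y.2⟩ = π x := by
      rw [hπinf x y]; exact inf_eq_left.mpr h
    exact inf_eq_left.mp (congrArg Subtype.val (hinj h2))
  have hstrict : ∀ x y : ↥S, x.1 < y.1 → π x < π y := by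
    intro x y h
    refine lt_of_le_of_ne (hmono x y h.le) ?_
    intro he
    exact absurd (congrArg Subtype.val (hinj he)) h.ne
  -- the maximal element m of S below b
  obtain ⟨m, hm, hmax⟩ : ∃ m ∈ {x ∈ S | x ≤ b}, ∀ x ∈ {x ∈ S | x ≤ b}, x ≤ m := by
    refine exists_max_linear (hfin.subset (Set.sep_subset _ _)) ⟨⊥, hbot, bot_le⟩ ?_
    intro x hx y hy
    exact hT b x y hx.2 hy.2
  have hmS : m ∈ S := hm.1
  have hmb : m < b := lt_of_le_of_ne hm.2 (fun h => hb (h ▸ hmS))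
  have hkey : ∀ s ∈ S, ¬ b ≤ s → s ⊓ b = s ⊓ m ∧ s ⊓ b ≤ m := by
    intro s hs hnbs
    have hsbS : s ⊓ b ∈ S := (hclb s hs).resolve_right hnbs
    have hle : s ⊓ b ≤ m := hmax _ ⟨hsbS, inf_le_right⟩
    exact ⟨le_antisymm (le_inf inf_le_left hle) (inf_le_inf_left s hmb.le), hle⟩
  -- find the image q of b
  obtain ⟨q, H1, H2, H3⟩ :
      ∃ q : Q, (∀ s : ↥S, b ≤ s.1 → π s ⊓ q = q) ∧
        (∀ (s : ↥S) (h : s.1 ⊓ b ∈ S), π s ⊓ q = π ⟨s.1 ⊓ b, h⟩) ∧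
        (∀ s : ↥S, π s ≠ q) := by
    by_cases hA : ∃ s ∈ S, b ≤ s
    · -- someone above b: use density
      obtain ⟨s0, hs0S, hbs0⟩ := hA
      have hAfin : {s ∈ S | b ≤ s}.Finite := hfin.subset (Set.sep_subset _ _)
      have hne : hAfin.toFinset.Nonempty := ⟨s0, hAfin.mem_toFinset.mpr ⟨hs0S, hbs0⟩⟩
      set sstar := hAfin.toFinset.inf' hne id with hsdef
      have hsst : sstar ∈ {s ∈ S | b ≤ s} := by
        refine Finset.inf'_mem _ ?_ _ hne id (fun i hi => by simpa using hAfin.mem_toFinset.mp hi)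
        intro x hx y hy
        exact ⟨hcl x hx.1 y hy.1, le_inf hx.2 hy.2⟩
      have hsstle : ∀ s ∈ S, b ≤ s → sstar ≤ s := fun s hs hbs =>
        Finset.inf'_le id (hAfin.mem_toFinset.mpr ⟨hs, hbs⟩)
      have hms : m < sstar := lt_of_lt_of_le hmb hsst.2
      have hrfin : (Set.range π).Finite := Set.finite_range π
      obtain ⟨q, hq1, hq2, hq3⟩ := dense_avoid hdense hrfin.toFinset
        (π ⟨m, hmS⟩) (π ⟨sstar, hsst.1⟩) (hstrict _ _ hms)
      have hq3' : ∀ s : ↥S, π s ≠ q := fun s h => hq3 (hrfin.mem_toFinset.mpr ⟨s, h⟩)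
      refine ⟨q, ?_, ?_, hq3'⟩
      · intro s hbs
        exact inf_eq_right.mpr (hq2.le.trans (hmono ⟨sstar, hsst.1⟩ s (hsstle _ s.2 hbs)))
      · intro s h
        have hnbs : ¬ b ≤ s.1 := by
          intro hbs
          rw [inf_eq_right.mpr hbs] at h
          exact hb h
        have hss : s.1 ⊓ sstar = s.1 ⊓ b := by
          rcases hT sstar (s.1 ⊓ sstar) b inf_le_right hsst.2 with hcomp | hcomp
          · exact le_antisymm (le_inf inf_le_left hcomp) (inf_le_inf_left _ hsst.2)
          · exact absurd (hcomp.trans inf_le_left) hnbs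
        have e1 : π s ⊓ π ⟨sstar, hsst.1⟩ = π ⟨s.1 ⊓ b, h⟩ := by
          rw [← hπinf s ⟨sstar, hsst.1⟩]
          exact congrArg π (Subtype.ext hss)
        refine le_antisymm ?_ ?_
        · calc π s ⊓ q ≤ π s ⊓ π ⟨sstar, hsst.1⟩ := inf_le_inf_left _ hq2.le
            _ = π ⟨s.1 ⊓ b, h⟩ := e1
        · refine le_inf (hmono ⟨s.1 ⊓ b, h⟩ s inf_le_left) ?_
          have : π ⟨s.1 ⊓ b, h⟩ ≤ π ⟨m, hmS⟩ := hmono _ _ (hkey s.1 s.2 hnbs).2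
          exact this.trans hq1.le
    · -- nobody above b: use infinite splitting over the minimal elements above m
      push_neg at hA
      have hallS : ∀ s ∈ S, s ⊓ b ∈ S := fun s hs => (hclb s hs).resolve_right (hA s hs)
      set Cset := {y ∈ S | m < y ∧ ∀ z ∈ S, m < z → ¬ z < y} with hCdef
      have hCfin : Cset.Finite := hfin.subset (Set.sep_subset _ _)
      set Cfin := hCfin.toFinset with hCfdef
      set e := Cfin.equivFin with hedef
      have hmemC : ∀ i : Fin Cfin.card, (e.symm i).1 ∈ S :=
        fun i => (hCfin.mem_toFinset.mp (e.symm i).2).1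
      set f : Fin Cfin.card → Q := fun i => π ⟨(e.symm i).1, hmemC i⟩ with hfdef
      have hgle : ∀ i, π ⟨m, hmS⟩ ≤ f i :=
        fun i => hmono _ _ (hCfin.mem_toFinset.mp (e.symm i).2).2.1.le
      have hpair : ∀ i j : Fin Cfin.card, i < j → f i ⊓ f j = π ⟨m, hmS⟩ := by
        intro i j hij
        have hne' : (e.symm i).1 ≠ (e.symm j).1 := by
          intro h
          exact absurd (congrArg e (Subtype.ext h)) (by simp [hij.ne])
        have hyi := hCfin.mem_toFinset.mp (e.symm i).2
        have hyj := hCfin.mem_toFinset.mp (e.symm j).2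
        have hinfm : (e.symm i).1 ⊓ (e.symm j).1 = m := by
          by_contra hne2
          have hmle : m ≤ (e.symm i).1 ⊓ (e.symm j).1 := le_inf hyi.2.1.le hyj.2.1.le
          have hmlt : m < (e.symm i).1 ⊓ (e.symm j).1 := lt_of_le_of_ne hmle (Ne.symm hne2)
          have hmem : (e.symm i).1 ⊓ (e.symm j).1 ∈ S := hcl _ hyi.1 _ hyj.1
          have h1 : ¬ ((e.symm i).1 ⊓ (e.symm j).1 < (e.symm i).1) := hyi.2.2 _ hmem hmlt
          have h2 : ¬ ((e.symm i).1 ⊓ (e.symm j).1 < (e.symm j).1) := hyj.2.2 _ hmem hmlt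
          have e1 : (e.symm i).1 ⊓ (e.symm j).1 = (e.symm i).1 :=
            ((inf_le_left : (e.symm i).1 ⊓ (e.symm j).1 ≤ (e.symm i).1).lt_or_eq).resolve_left h1
          have e2 : (e.symm i).1 ⊓ (e.symm j).1 = (e.symm j).1 :=
            ((inf_le_right : (e.symm i).1 ⊓ (e.symm j).1 ≤ (e.symm j).1).lt_or_eq).resolve_left h2
          exact hne' (e1 ▸ e2)
        rw [hfdef]
        rw [← hπinf ⟨(e.symm i).1, hmemC i⟩ ⟨(e.symm j).1, hmemC j⟩]
        exact congrArg π (Subtype.ext hinfm)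
      obtain ⟨q, hq1, hq2⟩ := hsplit (π ⟨m, hmS⟩) Cfin.card f hgle hpair
      have hCq : ∀ (y : T) (hyC : y ∈ Cset), π ⟨y, hyC.1⟩ ⊓ q = π ⟨m, hmS⟩ := by
        intro y hyC
        have hy' : y ∈ Cfin := hCfin.mem_toFinset.mpr hyC
        have := hq2 (e ⟨y, hy'⟩)
        have hfe : f (e ⟨y, hy'⟩) = π ⟨y, hyC.1⟩ := by
          rw [hfdef]
          exact congrArg π (Subtype.ext (by simp))
        rwa [hfe] at this
      -- main claim
      have hall : ∀ s : ↥S, π s ⊓ q = π s ⊓ π ⟨m, hmS⟩ := by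
        intro s
        by_cases hsm : s.1 ≤ m
        · have h1 : π s ≤ π ⟨m, hmS⟩ := hmono _ _ hsm
          rw [inf_eq_left.mpr (h1.trans hq1.le), inf_eq_left.mpr h1]
        · by_cases hms' : m ≤ s.1
          · have hmlt : m < s.1 := lt_of_le_of_ne hms' (fun h => hsm h.ge)
            obtain ⟨y, hyE, hys, hymin⟩ := exists_minimal_le
              (hfin.subset (Set.sep_subset _ (fun z => m < z))) (⟨s.2, hmlt⟩ : s.1 ∈ {z ∈ S | m < z})
            have hyC : y ∈ Cset := ⟨hyE.1, hyE.2, fun z hz hmz hzy => hzy.ne (hymin z ⟨hz, hmz⟩ hzy.le)⟩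
            have hCy := hCq y hyC
            have hle1 : π ⟨m, hmS⟩ ≤ π s ⊓ q := le_inf (hmono _ _ hms') hq1.le
            have hcomp := hQ (π s) (π s ⊓ q) (π ⟨y, hyC.1⟩) inf_le_left (hmono ⟨y, hyC.1⟩ s hys)
            have hres : π s ⊓ q = π ⟨m, hmS⟩ := by
              rcases hcomp with h | h
              · refine le_antisymm ?_ hle1
                calc π s ⊓ q ≤ π ⟨y, hyC.1⟩ ⊓ q := le_inf h inf_le_right
                  _ = π ⟨m, hmS⟩ := hCy
              · exfalso
                have : π ⟨y, hyC.1⟩ ≤ q := h.trans inf_le_right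
                have h2 : π ⟨y, hyC.1⟩ = π ⟨m, hmS⟩ := by rw [← hCy, inf_eq_left.mpr this]
                have := congrArg Subtype.val (hinj h2)
                exact absurd this (hyC.2.1.ne')
            rw [hres, inf_eq_right.mpr (hmono ⟨m, hmS⟩ s hms')]
          · -- incomparable with m
            have hcomp := hQ q (π s ⊓ q) (π ⟨m, hmS⟩) inf_le_right hq1.le
            rcases hcomp with h | h
            · refine le_antisymm (le_inf inf_le_left h) ?_
              refine le_inf inf_le_left ?_
              exact inf_le_right.trans hq1.le
            · exfalso
              exact hms' (hrefl ⟨m, hmS⟩ s (h.trans inf_le_left))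
      have hsub2 : ∀ (s : ↥S) (h : s.1 ⊓ b ∈ S), π s ⊓ q = π ⟨s.1 ⊓ b, h⟩ := by
        intro s h
        have hnbs : ¬ b ≤ s.1 := hA s.1 s.2
        rw [hall s, ← hπinf s ⟨m, hmS⟩]
        exact congrArg π (Subtype.ext (hkey s.1 s.2 hnbs).1.symm)
      refine ⟨q, ?_, hsub2, ?_⟩
      · intro s hbs
        exact absurd hbs (hA s.1 s.2)
      · intro s he
        have := hall s
        rw [he, inf_idem] at this
        have : q ≤ π ⟨m, hmS⟩ := this.le.trans inf_le_right
        exact absurd this (not_le_of_gt hq1)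
  -- build the extension
  have hbot' : (⊥ : T) ∈ insert b S := Set.mem_insert_of_mem b hbot
  have hcl' : ∀ x ∈ insert b S, ∀ y ∈ insert b S, x ⊓ y ∈ insert b S := by
    intro x hx y hy
    rcases hx with rfl | hx
    · rcases hy with rfl | hy
      · rw [inf_idem]; exact Set.mem_insert _ _
      · rcases hclb y hy with h | h
        · exact Set.mem_insert_of_mem _ (by rwa [inf_comm])
        · rw [inf_eq_left.mpr h]; exact Set.mem_insert _ _
    · rcases hy with rfl | hy
      · rcases hclb x hx with h | h
        · exact Set.mem_insert_of_mem _ h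
        · rw [inf_eq_right.mpr h]; exact Set.mem_insert _ _
      · exact Set.mem_insert_of_mem _ (hcl x hx y hy)
  refine ⟨hbot', hcl',
    fun x => if h : x.1 ∈ S then π ⟨x.1, h⟩ else q, ?_, ?_, ?_, ?_⟩
  · -- injective
    rintro ⟨u, hu⟩ ⟨v, hv⟩ hxy
    dsimp only at hxy
    by_cases hus : u ∈ S
    · by_cases hvs : v ∈ S
      · rw [dif_pos hus, dif_pos hvs] at hxy
        exact Subtype.ext (show u = v from congrArg Subtype.val (hinj hxy))
      · rw [dif_pos hus, dif_neg hvs] at hxy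
        exact absurd hxy (H3 _)
    · by_cases hvs : v ∈ S
      · rw [dif_neg hus, dif_pos hvs] at hxy
        exact absurd hxy.symm (H3 _)
      · have h1 : u = b := (Set.mem_insert_iff.mp hu).resolve_right hus
        have h2 : v = b := (Set.mem_insert_iff.mp hv).resolve_right hvs
        exact Subtype.ext (h1.trans h2.symm)
  · -- bot
    dsimp only
    rw [dif_pos hbot]
    exact hπbot
  · -- inf preservation
    rintro ⟨u, hu⟩ ⟨v, hv⟩
    dsimp only
    by_cases hus : u ∈ S
    · by_cases hvs : v ∈ S
      · rw [dif_pos hus, dif_pos hvs, dif_pos (hcl u hus v hvs)]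
        exact hπinf ⟨u, hus⟩ ⟨v, hvs⟩
      · have hvb : v = b := (Set.mem_insert_iff.mp hv).resolve_right hvs
        subst hvb
        rw [dif_pos hus, dif_neg hvs]
        rcases hclb u hus with h | h
        · rw [dif_pos h]
          exact (H2 ⟨u, hus⟩ h).symm
        · have huv : u ⊓ v = v := inf_eq_right.mpr h
          rw [dif_neg (show u ⊓ v ∉ S by rw [huv]; exact hvs)]
          exact (H1 ⟨u, hus⟩ h).symm
    · have hub : u = b := (Set.mem_insert_iff.mp hu).resolve_right hus
      subst hub
      by_cases hvs : v ∈ S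
      · rw [dif_neg hus, dif_pos hvs]
        rcases hclb v hvs with h | h
        · rw [dif_pos (show u ⊓ v ∈ S by rw [inf_comm]; exact h), inf_comm q (π ⟨v, hvs⟩), H2 ⟨v, hvs⟩ h]
          exact congrArg π (Subtype.ext (inf_comm _ _))
        · have huv : u ⊓ v = u := inf_eq_left.mpr h
          rw [dif_neg (show u ⊓ v ∉ S by rw [huv]; exact hus), inf_comm q (π ⟨v, hvs⟩)]
          exact (H1 ⟨v, hvs⟩ h).symm
      · have hvb : v = u := (Set.mem_insert_iff.mp hv).resolve_right hvs
        subst hvb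
        rw [dif_neg (show v ⊓ v ∉ S by rw [inf_idem]; exact hus), dif_neg hus, inf_idem]
  · -- extends
    intro x hx
    dsimp only
    rw [dif_pos hx]

/-- Lemma 4.9, one-point extension: if `T ⊨ PM`, `Q ⊨ DPM`, `a ∈ T`,
`S` is a finite substructure of `T` and `π : S → Q` an embedding, then `π` extends to an
embedding of a finite substructure `S'` containing `S ∪ {a}`. -/
theorem stmt9 {T Q : Type*} [SemilatticeInf T] [OrderBot T]
    [SemilatticeInf Q] [OrderBot Q]
    (hT : PseudotreeOrd T) (hQ : PseudotreeOrd Q)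
    (hsplit : InfSplitting Q) (hdense : DenseOrd Q)
    (a : T) (S : Set T) (hfin : S.Finite) (hbot : ⊥ ∈ S)
    (hcl : ∀ x ∈ S, ∀ y ∈ S, x ⊓ y ∈ S)
    (π : ↥S → Q) (hinj : Function.Injective π)
    (hπbot : π ⟨⊥, hbot⟩ = ⊥)
    (hπinf : ∀ x y : ↥S, π ⟨x.1 ⊓ y.1, hcl _ x.2 _ y.2⟩ = π x ⊓ π y) :
    ∃ (S' : Set T) (hsub : S ⊆ S') (hbot' : ⊥ ∈ S')
      (hcl' : ∀ x ∈ S', ∀ y ∈ S', x ⊓ y ∈ S'),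
      S'.Finite ∧ a ∈ S' ∧
      ∃ π' : ↥S' → Q, Function.Injective π' ∧
        π' ⟨⊥, hbot'⟩ = ⊥ ∧
        (∀ x y : ↥S', π' ⟨x.1 ⊓ y.1, hcl' _ x.2 _ y.2⟩ = π' x ⊓ π' y) ∧
        ∀ (x : T) (hx : x ∈ S), π' ⟨x, hsub hx⟩ = π ⟨x, hx⟩ := by
  classical
  by_cases ha : a ∈ S
  · exact ⟨S, subset_rfl, hbot, hcl, hfin, ha, π, hinj, hπbot, hπinf, fun x hx => rfl⟩
  -- construct c, the maximum of {s ⊓ a : s ∈ S}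
  obtain ⟨c, hcmem, hcmax⟩ : ∃ c ∈ (fun s => s ⊓ a) '' S, ∀ x ∈ (fun s => s ⊓ a) '' S, x ≤ c := by
    refine exists_max_linear (hfin.image _) ⟨⊥ ⊓ a, ⟨⊥, hbot, rfl⟩⟩ ?_
    rintro x ⟨s, _, rfl⟩ y ⟨t, _, rfl⟩
    exact hT a _ _ inf_le_right inf_le_right
  obtain ⟨s0, hs0S, hs0c⟩ := hcmem
  have hca : c ≤ a := hs0c ▸ inf_le_right
  have hcs0 : c ≤ s0 := hs0c ▸ inf_le_left
  have hc : ∀ s ∈ S, s ⊓ a ≤ c := fun s hs => hcmax _ ⟨s, hs, rfl⟩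
  have hsc : ∀ s ∈ S, s ⊓ c = s ⊓ a := fun s hs =>
    le_antisymm (inf_le_inf_left s hca) (le_inf inf_le_left (hc s hs))
  have hdich : ∀ s ∈ S, s ⊓ c ∈ S ∨ c ≤ s := by
    intro s hs
    rcases hT s0 (s ⊓ s0) c inf_le_right hcs0 with h | h
    · left
      have : s ⊓ c = s ⊓ s0 :=
        le_antisymm (le_inf inf_le_left (inf_le_right.trans hcs0)) (le_inf inf_le_left h)
      rw [this]
      exact hcl s hs s0 hs0S
    · right
      exact h.trans inf_le_left
  by_cases hcS : c ∈ S
  · -- c already in S: one extension step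
    have hclb : ∀ s ∈ S, s ⊓ a ∈ S ∨ a ≤ s := by
      intro s hs
      left
      rcases hdich s hs with h | h
      · rwa [← hsc s hs]
      · rw [← hsc s hs, inf_eq_right.mpr h]
        exact hcS
    obtain ⟨hbot', hcl', π', hinj', hπbot', hπinf', hext'⟩ :=
      ext1 hT hQ hsplit hdense a S hfin hbot hcl π hinj hπbot hπinf ha hclb
    exact ⟨insert a S, Set.subset_insert a S, hbot', hcl', hfin.insert a,
      Set.mem_insert a S, π', hinj', hπbot', hπinf', hext'⟩
  · by_cases hceq : c = a
    · -- c = a: one extension step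
      have hclb : ∀ s ∈ S, s ⊓ a ∈ S ∨ a ≤ s := by
        intro s hs
        rcases hdich s hs with h | h
        · left; rwa [← hsc s hs]
        · right; rwa [← hceq]
      obtain ⟨hbot', hcl', π', hinj', hπbot', hπinf', hext'⟩ :=
        ext1 hT hQ hsplit hdense a S hfin hbot hcl π hinj hπbot hπinf ha hclb
      exact ⟨insert a S, Set.subset_insert a S, hbot', hcl', hfin.insert a,
        Set.mem_insert a S, π', hinj', hπbot', hπinf', hext'⟩
    · -- general case: add c first, then a
      obtain ⟨hbot1, hcl1, π1, hinj1, hπbot1, hπinf1, hext1'⟩ :=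
        ext1 hT hQ hsplit hdense c S hfin hbot hcl π hinj hπbot hπinf hcS hdich
      have ha1 : a ∉ insert c S := by
        intro h
        rcases h with h | h
        · exact hceq h.symm
        · exact ha h
      have hclb2 : ∀ s ∈ insert c S, s ⊓ a ∈ insert c S ∨ a ≤ s := by
        intro s hs
        left
        rcases hs with rfl | hs
        · rw [inf_eq_left.mpr hca]
          exact Set.mem_insert _ _
        · rw [← hsc s hs]
          rcases hdich s hs with h | h
          · exact Set.mem_insert_of_mem _ h
          · rw [inf_eq_right.mpr h]
            exact Set.mem_insert _ _
      obtain ⟨hbot2, hcl2, π2, hinj2, hπbot2, hπinf2, hext2⟩ :=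
        ext1 hT hQ hsplit hdense a (insert c S) (hfin.insert c) hbot1 hcl1
          π1 hinj1 hπbot1 hπinf1 ha1 hclb2
      refine ⟨insert a (insert c S),
        fun x hx => Set.mem_insert_of_mem _ (Set.mem_insert_of_mem _ hx),
        hbot2, hcl2, (hfin.insert c).insert a,
        Set.mem_insert a _, π2, hinj2, hπbot2, hπinf2, ?_⟩
      intro x hx
      have h1 := hext2 x (Set.mem_insert_of_mem c hx)
      have h2 := hext1' x hx
      exact h1.trans h2
end

section
/- Any countable model of PM embeds into any model of DPM. -/
section Stmt10Aux

open scoped Classical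

variable {T Q : Type*} [SemilatticeInf T] [OrderBot T] [SemilatticeInf Q] [OrderBot Q]

/-- A finite partial embedding. -/
structure PEmb (A : Finset T) (π : T → Q) : Prop where
  bot_mem : ⊥ ∈ A
  inf_mem : ∀ a ∈ A, ∀ b ∈ A, a ⊓ b ∈ A
  map_bot : π ⊥ = ⊥
  map_inf : ∀ a ∈ A, ∀ b ∈ A, π (a ⊓ b) = π a ⊓ π b
  inj : ∀ a ∈ A, ∀ b ∈ A, π a = π b → a = b

theorem PEmb.mono {A : Finset T} {π : T → Q} (h : PEmb A π) {a b : T}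
    (ha : a ∈ A) (hb : b ∈ A) (hab : a ≤ b) : π a ≤ π b := by
  have h1 : π (a ⊓ b) = π a ⊓ π b := h.map_inf a ha b hb
  rw [inf_eq_left.mpr hab] at h1
  exact h1.le.trans inf_le_right

theorem PEmb.smono {A : Finset T} {π : T → Q} (h : PEmb A π) {a b : T}
    (ha : a ∈ A) (hb : b ∈ A) (hab : a < b) : π a < π b :=
  (h.mono ha hb hab.le).lt_of_ne fun e => hab.ne (h.inj a ha b hb e)

/-- One-point extension lemma: if `t ∉ A` and all meets of `t` with `A` already lie in
`insert t A`, then the partial embedding extends to `insert t A`. -/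
theorem extend_point (hT : PseudotreeOrd T) (hQ : PseudotreeOrd Q)
    (hsplit : InfSplitting Q) (hdense : DenseOrd Q)
    {A : Finset T} {π : T → Q} (hI : PEmb A π) {t : T} (ht : t ∉ A)
    (hcl : ∀ a ∈ A, t ⊓ a ∈ insert t A) :
    ∃ π' : T → Q, PEmb (insert t A) π' ∧ ∀ a ∈ A, π' a = π a := by
  classical
  have htbot : t ≠ ⊥ := fun h => ht (h ▸ hI.bot_mem)
  set S : Finset T := A.filter (fun a => ¬ t ≤ a) with hSdef
  have hbotS : (⊥ : T) ∈ S := by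
    refine Finset.mem_filter.mpr ⟨hI.bot_mem, fun h => htbot (le_bot_iff.mp h)⟩
  set C : Finset T := S.image (fun a => t ⊓ a) with hCdef
  have hCne : C.Nonempty := ⟨t ⊓ ⊥, Finset.mem_image_of_mem _ hbotS⟩
  have hCle : ∀ x ∈ C, x ≤ t := by
    intro x hx
    obtain ⟨a, -, rfl⟩ := Finset.mem_image.mp hx
    exact inf_le_left
  obtain ⟨g, hgC, hgmax⟩ := C.exists_maximal hCne
  have hgtop : ∀ x ∈ C, x ≤ g := by
    intro x hx
    rcases hT t x g (hCle x hx) (hCle g hgC) with h | h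
    · exact h
    · exact hgmax hx h
  obtain ⟨a₀, ha₀S, hga₀⟩ := Finset.mem_image.mp hgC
  have ha₀A : a₀ ∈ A := (Finset.mem_filter.mp ha₀S).1
  have ha₀nt : ¬ t ≤ a₀ := (Finset.mem_filter.mp ha₀S).2
  have hglt : g ≤ t := hCle g hgC
  have hgA : g ∈ A := by
    have h1 := hcl a₀ ha₀A
    rw [hga₀] at h1
    rcases Finset.mem_insert.mp h1 with h | h
    · exact absurd (h ▸ (hga₀ ▸ (inf_le_right : t ⊓ a₀ ≤ a₀))) ha₀nt
    · exact h
  have hgne : g ≠ t := fun e => ht (e ▸ hgA)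
  have hgS : ∀ a ∈ S, t ⊓ a = g ⊓ a := by
    intro a haS
    have h1 : t ⊓ a ≤ g := hgtop _ (Finset.mem_image_of_mem _ haS)
    exact le_antisymm (le_inf h1 inf_le_right) (inf_le_inf_right a hglt)
  -- construct the image point q
  have key : ∃ q : Q, (∀ a ∈ A, ¬ t ≤ a → π a ⊓ q = π (t ⊓ a)) ∧
      (∀ a ∈ A, t ≤ a → π a ⊓ q = q) ∧ (∀ a ∈ A, q ≠ π a) := by
    by_cases hB : ∃ b ∈ A, t ≤ b
    · -- density case: there is an element above t
      obtain ⟨b₁, hb₁A, hb₁⟩ := hB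
      set B : Finset T := A.filter (fun a => t ≤ a) with hBdef
      have hBne : B.Nonempty := ⟨b₁, Finset.mem_filter.mpr ⟨hb₁A, hb₁⟩⟩
      set m : T := B.inf' hBne id with hmdef
      have hmA : m ∈ A := by
        apply Finset.inf'_mem (↑A : Set T)
        · intro x hx y hy; exact hI.inf_mem x hx y hy
        · intro i hi; exact (Finset.mem_filter.mp hi).1
      have htm : t ≤ m := Finset.le_inf' hBne id (fun b hb => (Finset.mem_filter.mp hb).2)
      have hmb : ∀ b ∈ A, t ≤ b → m ≤ b := fun b hbA hb =>
        Finset.inf'_le id (Finset.mem_filter.mpr ⟨hbA, hb⟩)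
      have hgm : g < m := lt_of_le_of_ne (hglt.trans htm)
        (fun e => hgne (le_antisymm hglt (e ▸ htm)))
      obtain ⟨q, hq1, hq2⟩ := hdense (π g) (π m) (hI.smono hgA hmA hgm)
      have hqle : ∀ a ∈ A, ¬ t ≤ a → π a ⊓ q ≤ π g := by
        intro a haA hna
        have haS : a ∈ S := Finset.mem_filter.mpr ⟨haA, hna⟩
        have hma_t : m ⊓ a ≤ t := by
          rcases hT m (m ⊓ a) t inf_le_left htm with h | h
          · exact h
          · exact absurd (h.trans inf_le_right) hna
        have hma : m ⊓ a = t ⊓ a :=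
          le_antisymm (le_inf hma_t inf_le_right) (inf_le_inf_right a htm)
        have hQ1 : π m ⊓ π a ≤ π g := by
          rw [← hI.map_inf m hmA a haA, hma, hgS a haS]
          exact hI.mono (hI.inf_mem g hgA a haA) hgA inf_le_left
        calc π a ⊓ q ≤ π a ⊓ π m := inf_le_inf_left _ hq2.le
          _ = π m ⊓ π a := inf_comm _ _
          _ ≤ π g := hQ1
      refine ⟨q, ?_, ?_, ?_⟩
      · intro a haA hna
        have haS : a ∈ S := Finset.mem_filter.mpr ⟨haA, hna⟩
        have h2 : π (t ⊓ a) = π g ⊓ π a := by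
          rw [hgS a haS]; exact hI.map_inf g hgA a haA
        rw [h2]
        refine le_antisymm (le_inf (hqle a haA hna) inf_le_left) ?_
        exact le_inf inf_le_right (inf_le_left.trans hq1.le)
      · intro a haA hta
        exact inf_eq_right.mpr (hq2.le.trans (hI.mono hmA haA (hmb a haA hta)))
      · intro a haA
        by_cases hta : t ≤ a
        · exact fun e => absurd (e ▸ (hq2.trans_le (hI.mono hmA haA (hmb a haA hta)))) (lt_irrefl _)
        · intro e
          have h3 : π a ⊓ q ≤ π g := hqle a haA hta
          rw [← e, inf_idem] at h3
          exact absurd (h3.trans_lt hq1) (lt_irrefl _)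
    · -- splitting case: nothing above t
      push_neg at hB
      set P : Finset Q := (A.image π).filter (fun x => π g < x) with hPdef
      set M : Finset Q := P.filter (fun x => ∀ y ∈ P, ¬ y < x) with hMdef
      have hMP : M ⊆ P := Finset.filter_subset _ _
      have hPinf : ∀ x ∈ P, ∀ y ∈ P, x ⊓ y ∈ A.image π := by
        intro x hx y hy
        obtain ⟨a, ha, rfl⟩ := Finset.mem_image.mp (Finset.mem_filter.mp hx).1
        obtain ⟨b, hb, rfl⟩ := Finset.mem_image.mp (Finset.mem_filter.mp hy).1
        exact Finset.mem_image.mpr ⟨a ⊓ b, hI.inf_mem a ha b hb, hI.map_inf a ha b hb⟩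
      have hpair : ∀ x ∈ M, ∀ y ∈ M, x ≠ y → x ⊓ y = π g := by
        intro x hx y hy hne
        have hgx : π g < x := (Finset.mem_filter.mp (hMP hx)).2
        have hgy : π g < y := (Finset.mem_filter.mp (hMP hy)).2
        have hle : π g ≤ x ⊓ y := le_inf hgx.le hgy.le
        by_contra hne2
        have hlt : π g < x ⊓ y := hle.lt_of_ne (Ne.symm hne2)
        have hxyP : x ⊓ y ∈ P :=
          Finset.mem_filter.mpr ⟨hPinf x (hMP hx) y (hMP hy), hlt⟩
        have hx' : ¬ x ⊓ y < x := (Finset.mem_filter.mp hx).2 _ hxyP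
        have hy' : ¬ x ⊓ y < y := (Finset.mem_filter.mp hy).2 _ hxyP
        have e1 : x ⊓ y = x := ((inf_le_left : x ⊓ y ≤ x).lt_or_eq).resolve_left hx'
        have e2 : x ⊓ y = y := ((inf_le_right : x ⊓ y ≤ y).lt_or_eq).resolve_left hy'
        exact hne (e1 ▸ e2)
      set f : Fin M.card → Q := fun i => ((M.equivFin.symm i : M) : Q) with hfdef
      have hmemf : ∀ i, f i ∈ M := fun i => (M.equivFin.symm i).2
      obtain ⟨q, hq1, hq2⟩ := hsplit (π g) M.card f
        (fun i => ((Finset.mem_filter.mp (hMP (hmemf i))).2).le)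
        (by
          intro i j hij
          refine hpair _ (hmemf i) _ (hmemf j) fun e => ?_
          have : M.equivFin.symm i = M.equivFin.symm j := Subtype.ext e
          exact hij.ne (M.equivFin.symm.injective this))
      have hq2M : ∀ x ∈ M, x ⊓ q = π g := by
        intro x hx
        have : f (M.equivFin ⟨x, hx⟩) = x := by
          simp [hfdef]
        rw [← this]; exact hq2 _
      have hqle : ∀ a ∈ A, π a ⊓ q ≤ π g := by
        intro a haA
        rcases hQ q (q ⊓ π a) (π g) inf_le_left hq1.le with h | h
        · rw [inf_comm]; exact h
        · rcases h.lt_or_eq with hlt | heq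
          · exfalso
            have haP : π a ∈ P := Finset.mem_filter.mpr
              ⟨Finset.mem_image_of_mem π haA, hlt.trans_le inf_le_right⟩
            have hne2 : (P.filter (fun y => y ≤ π a)).Nonempty :=
              ⟨π a, Finset.mem_filter.mpr ⟨haP, le_rfl⟩⟩
            obtain ⟨mm, hmm, hmmmin⟩ := Finset.exists_minimal hne2
            have hmmP : mm ∈ P := (Finset.mem_filter.mp hmm).1
            have hmmle : mm ≤ π a := (Finset.mem_filter.mp hmm).2
            have hmmM : mm ∈ M := by
              refine Finset.mem_filter.mpr ⟨hmmP, fun y hyP hlt2 => ?_⟩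
              exact lt_irrefl _ (hlt2.trans_le (hmmmin (Finset.mem_filter.mpr ⟨hyP, hlt2.le.trans hmmle⟩) hlt2.le))
            have hmq : mm ⊓ q = π g := hq2M mm hmmM
            rcases hQ (π a) mm (q ⊓ π a) hmmle inf_le_right with h2 | h2
            · have : mm ≤ q := h2.trans inf_le_left
              have : mm = π g := by rw [← hmq, inf_eq_left.mpr this]
              exact absurd (this ▸ (Finset.mem_filter.mp hmmP).2) (lt_irrefl _)
            · have : q ⊓ π a ≤ π g := by
                rw [← hmq]; exact le_inf h2 inf_le_left
              exact absurd (hlt.trans_le this) (lt_irrefl _)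
          · rw [inf_comm]; exact heq.ge
      refine ⟨q, ?_, ?_, ?_⟩
      · intro a haA hna
        have haS : a ∈ S := Finset.mem_filter.mpr ⟨haA, hna⟩
        have h2 : π (t ⊓ a) = π g ⊓ π a := by
          rw [hgS a haS]; exact hI.map_inf g hgA a haA
        rw [h2]
        refine le_antisymm (le_inf (hqle a haA) inf_le_left) ?_
        exact le_inf inf_le_right (inf_le_left.trans hq1.le)
      · intro a haA hta; exact absurd hta (hB a haA)
      · intro a haA e
        have h3 : π a ⊓ q ≤ π g := hqle a haA
        rw [← e, inf_idem] at h3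
        exact absurd (h3.trans_lt hq1) (lt_irrefl _)
  obtain ⟨q, hq_ns, hq_b, hq_ne⟩ := key
  have hup : ∀ a ∈ A, Function.update π t q a = π a :=
    fun a ha => Function.update_of_ne (fun e => ht (by rw [← e]; exact ha)) _ _
  refine ⟨Function.update π t q, ?_, hup⟩
  have hupt : Function.update π t q t = q := Function.update_self _ _ _
  have hqa : ∀ a ∈ A, Function.update π t q (t ⊓ a) = π a ⊓ q := by
    intro a ha
    by_cases hta : t ≤ a
    · rw [inf_eq_left.mpr hta, hupt, hq_b a ha hta]
    · have h1 : t ⊓ a ∈ A := by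
        rcases Finset.mem_insert.mp (hcl a ha) with h | h
        · exact absurd (h ▸ (inf_le_right : t ⊓ a ≤ a)) hta
        · exact h
      rw [hup _ h1, hq_ns a ha hta]
  constructor
  · exact Finset.mem_insert_of_mem hI.bot_mem
  · intro a ha b hb
    rcases Finset.mem_insert.mp ha with h | ha
    · rcases Finset.mem_insert.mp hb with h' | hb
      · rw [h, h', inf_idem]; exact Finset.mem_insert_self _ _
      · rw [h]; exact hcl _ hb
    · rcases Finset.mem_insert.mp hb with h' | hb
      · rw [h', inf_comm]; exact hcl _ ha
      · exact Finset.mem_insert_of_mem (hI.inf_mem a ha b hb)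
  · rw [hup ⊥ hI.bot_mem]; exact hI.map_bot
  · intro a ha b hb
    rcases Finset.mem_insert.mp ha with h | ha
    · rcases Finset.mem_insert.mp hb with h' | hb
      · rw [h, h', inf_idem, hupt]; exact (inf_idem q).symm
      · rw [h, hqa b hb, hupt, hup b hb, inf_comm]
    · rcases Finset.mem_insert.mp hb with h' | hb
      · rw [h', inf_comm a t, hqa a ha, hup a ha, hupt]
      · rw [hup a ha, hup b hb, hup _ (hI.inf_mem a ha b hb)]
        exact hI.map_inf a ha b hb
  · intro a ha b hb hab
    rcases Finset.mem_insert.mp ha with h | ha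
    · rcases Finset.mem_insert.mp hb with h' | hb
      · rw [h, h']
      · exfalso
        rw [h, hupt, hup b hb] at hab
        exact hq_ne b hb hab
    · rcases Finset.mem_insert.mp hb with h' | hb
      · exfalso
        rw [h', hupt, hup a ha] at hab
        exact hq_ne a ha hab.symm
      · rw [hup a ha, hup b hb] at hab; exact hI.inj a ha b hb hab

/-- Handle the case that the meet-closure condition already holds. -/
theorem extend_direct (hT : PseudotreeOrd T) (hQ : PseudotreeOrd Q)
    (hsplit : InfSplitting Q) (hdense : DenseOrd Q)
    {A : Finset T} {π : T → Q} (hI : PEmb A π) {t : T}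
    (hcl : ∀ a ∈ A, t ⊓ a ∈ insert t A) :
    ∃ (A' : Finset T) (π' : T → Q), A ⊆ A' ∧ t ∈ A' ∧ PEmb A' π' ∧ ∀ a ∈ A, π' a = π a := by
  by_cases ht : t ∈ A
  · exact ⟨A, π, Finset.Subset.refl _, ht, hI, fun _ _ => rfl⟩
  · obtain ⟨π', hI', hagree⟩ := extend_point hT hQ hsplit hdense hI ht hcl
    exact ⟨insert t A, π', Finset.subset_insert _ _, Finset.mem_insert_self _ _, hI', hagree⟩

/-- Any element can be added to a finite partial embedding. -/
theorem extend_elt (hT : PseudotreeOrd T) (hQ : PseudotreeOrd Q)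
    (hsplit : InfSplitting Q) (hdense : DenseOrd Q) :
    ∀ (n : ℕ) (A : Finset T) (π : T → Q), PEmb A π → ∀ t : T,
      ((A.image (fun a => t ⊓ a)).filter (fun x => x ∉ insert t A)).card ≤ n →
      ∃ (A' : Finset T) (π' : T → Q), A ⊆ A' ∧ t ∈ A' ∧ PEmb A' π' ∧ ∀ a ∈ A, π' a = π a := by
  intro n
  induction n with
  | zero =>
    intro A π hI t hcard
    have hD : ((A.image (fun a => t ⊓ a)).filter (fun x => x ∉ insert t A)) = ∅ :=
      Finset.card_eq_zero.mp (Nat.le_zero.mp hcard)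
    have hcl : ∀ a ∈ A, t ⊓ a ∈ insert t A := by
      intro a ha
      by_contra hmem
      have : t ⊓ a ∈ ((A.image (fun a => t ⊓ a)).filter (fun x => x ∉ insert t A)) :=
        Finset.mem_filter.mpr ⟨Finset.mem_image_of_mem _ ha, hmem⟩
      rw [hD] at this
      exact absurd this (Finset.notMem_empty _)
    exact extend_direct hT hQ hsplit hdense hI hcl
  | succ n ih =>
    intro A π hI t hcard
    set D := ((A.image (fun a => t ⊓ a)).filter (fun x => x ∉ insert t A)) with hDdef
    by_cases hDne : D.Nonempty
    · obtain ⟨c, hcD, hcmin⟩ := Finset.exists_minimal hDne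
      have hcim : c ∈ A.image (fun a => t ⊓ a) := (Finset.mem_filter.mp hcD).1
      have hcni : c ∉ insert t A := (Finset.mem_filter.mp hcD).2
      obtain ⟨a₀, ha₀, hc0⟩ := Finset.mem_image.mp hcim
      have hcA : c ∉ A := fun h => hcni (Finset.mem_insert_of_mem h)
      have hct : c ≤ t := hc0 ▸ inf_le_left
      have hcnet : c ≠ t := fun e => hcni (e ▸ Finset.mem_insert_self _ _)
      have hclc : ∀ a ∈ A, c ⊓ a ∈ insert c A := by
        intro a ha
        have hrw : c ⊓ a = t ⊓ (a₀ ⊓ a) := by rw [← hc0, inf_assoc]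
        have him : c ⊓ a ∈ A.image (fun a => t ⊓ a) := by
          rw [hrw]; exact Finset.mem_image_of_mem _ (hI.inf_mem a₀ ha₀ a ha)
        by_cases hmem : c ⊓ a ∈ insert t A
        · rcases Finset.mem_insert.mp hmem with h | h
          · exfalso
            have : t ≤ c := h ▸ (inf_le_left : c ⊓ a ≤ c)
            exact hcnet (le_antisymm hct this)
          · exact Finset.mem_insert_of_mem h
        · have hD' : c ⊓ a ∈ D := Finset.mem_filter.mpr ⟨him, hmem⟩
          have h1 : ¬ c ⊓ a < c := fun hlt => lt_irrefl _ (hlt.trans_le (hcmin hD' hlt.le))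
          have h2 : c ⊓ a = c := ((inf_le_left : c ⊓ a ≤ c).lt_or_eq).resolve_left h1
          rw [h2]; exact Finset.mem_insert_self _ _
      obtain ⟨π₁, hI₁, hag₁⟩ := extend_point hT hQ hsplit hdense hI hcA hclc
      -- the new defect set is smaller
      have hsub : (((insert c A).image (fun a => t ⊓ a)).filter
          (fun x => x ∉ insert t (insert c A))) ⊆ D.erase c := by
        intro x hx
        have hx1 : x ∈ (insert c A).image (fun a => t ⊓ a) := (Finset.mem_filter.mp hx).1
        have hx2 : x ∉ insert t (insert c A) := (Finset.mem_filter.mp hx).2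
        have hxc : x ≠ c := fun e =>
          hx2 (e ▸ Finset.mem_insert_of_mem (Finset.mem_insert_self _ _))
        have hxA : x ∈ A.image (fun a => t ⊓ a) := by
          rw [Finset.image_insert] at hx1
          rcases Finset.mem_insert.mp hx1 with h | h
          · exact absurd (h.trans (inf_eq_right.mpr hct)) hxc
          · exact h
        have hxni : x ∉ insert t A := by
          intro h
          rcases Finset.mem_insert.mp h with h | h
          · exact hx2 (h ▸ Finset.mem_insert_self _ _)
          · exact hx2 (Finset.mem_insert_of_mem (Finset.mem_insert_of_mem h))
        exact Finset.mem_erase.mpr ⟨hxc, Finset.mem_filter.mpr ⟨hxA, hxni⟩⟩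
      have hcard' : (((insert c A).image (fun a => t ⊓ a)).filter
          (fun x => x ∉ insert t (insert c A))).card ≤ n := by
        have h1 := Finset.card_le_card hsub
        rw [Finset.card_erase_of_mem hcD] at h1
        have h2 : 1 ≤ D.card := Finset.card_pos.mpr hDne
        omega
      obtain ⟨A', π', hsub', ht', hI', hag'⟩ := ih (insert c A) π₁ hI₁ t hcard'
      exact ⟨A', π', (Finset.subset_insert _ _).trans hsub', ht', hI',
        fun a ha => (hag' a (Finset.mem_insert_of_mem ha)).trans (hag₁ a ha)⟩
    · rw [Finset.not_nonempty_iff_eq_empty] at hDne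
      have hcl : ∀ a ∈ A, t ⊓ a ∈ insert t A := by
        intro a ha
        by_contra hmem
        have : t ⊓ a ∈ D := Finset.mem_filter.mpr ⟨Finset.mem_image_of_mem _ ha, hmem⟩
        rw [hDne] at this
        exact absurd this (Finset.notMem_empty _)
      exact extend_direct hT hQ hsplit hdense hI hcl

end Stmt10Aux

/-- any countable model of PM embeds into any model of DPM. -/
theorem stmt10 {T Q : Type*} [SemilatticeInf T] [OrderBot T] [Countable T]
    [SemilatticeInf Q] [OrderBot Q]
    (hT : PseudotreeOrd T) (hQ : PseudotreeOrd Q)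
    (hsplit : InfSplitting Q) (hdense : DenseOrd Q) :
    ∃ π : T → Q, Function.Injective π ∧ π ⊥ = ⊥ ∧
      ∀ x y : T, π (x ⊓ y) = π x ⊓ π y := by
  classical
  have hne : Nonempty T := ⟨⊥⟩
  obtain ⟨e, he⟩ := exists_surjective_nat T
  have base : PEmb ({⊥} : Finset T) (fun _ => (⊥ : Q)) := by
    refine ⟨Finset.mem_singleton_self _, ?_, rfl, ?_, ?_⟩
    · intro a ha b hb
      rw [Finset.mem_singleton.mp ha, Finset.mem_singleton.mp hb, inf_idem]
      exact Finset.mem_singleton_self _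
    · intro a _ b _; exact (inf_idem _).symm
    · intro a ha b hb _
      rw [Finset.mem_singleton.mp ha, Finset.mem_singleton.mp hb]
  have step : ∀ (x : {p : Finset T × (T → Q) // PEmb p.1 p.2}) (t : T),
      ∃ y : {p : Finset T × (T → Q) // PEmb p.1 p.2},
        x.1.1 ⊆ y.1.1 ∧ t ∈ y.1.1 ∧ ∀ a ∈ x.1.1, y.1.2 a = x.1.2 a := by
    rintro ⟨⟨A, π⟩, hI⟩ t
    obtain ⟨A', π', h1, h2, h3, h4⟩ := extend_elt hT hQ hsplit hdense _ A π hI t le_rfl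
    exact ⟨⟨⟨A', π'⟩, h3⟩, h1, h2, h4⟩
  choose nxt hsub hmem hagree using step
  let G : ℕ → {p : Finset T × (T → Q) // PEmb p.1 p.2} :=
    fun n => Nat.rec ⟨⟨{⊥}, fun _ => ⊥⟩, base⟩ (fun k p => nxt p (e k)) n
  have hGsucc : ∀ n, G (n + 1) = nxt (G n) (e n) := fun n => rfl
  have hstab : ∀ n m, n ≤ m → ∀ a ∈ (G n).1.1, a ∈ (G m).1.1 ∧ (G m).1.2 a = (G n).1.2 a := by
    intro n m hnm
    induction m, hnm using Nat.le_induction with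
    | base => exact fun a ha => ⟨ha, rfl⟩
    | succ m hm ih =>
      intro a ha
      obtain ⟨h1, h2⟩ := ih a ha
      refine ⟨?_, ?_⟩
      · rw [hGsucc m]; exact hsub (G m) (e m) h1
      · rw [hGsucc m, hagree (G m) (e m) a h1, h2]
  have hmem' : ∀ n, e n ∈ (G (n + 1)).1.1 := by
    intro n
    rw [hGsucc n]; exact hmem (G n) (e n)
  choose idx hidx using he
  have hmemx : ∀ x : T, x ∈ (G (idx x + 1)).1.1 := by
    intro x
    have := hmem' (idx x)
    rwa [hidx x] at this
  refine ⟨fun t => (G (idx t + 1)).1.2 t, ?_, ?_, ?_⟩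
  · intro x y hxy
    set N := max (idx x + 1) (idx y + 1) with hN
    obtain ⟨hx1, hx2⟩ := hstab _ N (le_max_left _ _) x (hmemx x)
    obtain ⟨hy1, hy2⟩ := hstab _ N (le_max_right _ _) y (hmemx y)
    exact (G N).2.inj x hx1 y hy1 (by rw [hx2, hy2]; exact hxy)
  · exact (G (idx (⊥ : T) + 1)).2.map_bot
  · intro x y
    set N := max (idx (x ⊓ y) + 1) (max (idx x + 1) (idx y + 1)) with hN
    obtain ⟨hx1, hx2⟩ := hstab _ N ((le_max_left _ _).trans (le_max_right _ _)) x (hmemx x)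
    obtain ⟨hy1, hy2⟩ := hstab _ N ((le_max_right _ _).trans (le_max_right _ _)) y (hmemx y)
    obtain ⟨hxy1, hxy2⟩ := hstab _ N (le_max_left _ _) (x ⊓ y) (hmemx (x ⊓ y))
    show (G (idx (x ⊓ y) + 1)).1.2 (x ⊓ y) = (G (idx x + 1)).1.2 x ⊓ (G (idx y + 1)).1.2 y
    rw [← hx2, ← hy2, ← hxy2]
    exact (G N).2.map_inf x hx1 y hy1
end

section
/- Any two countable models of DPM are isomorphic. -/
section DPMBF

open Finset

/-- maximum of a finite nonempty family all lying below `t` in a pseudotree -/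
lemma DPM_exists_max_im {γ δ : Type*} [SemilatticeInf δ] (hc : PseudotreeOrd δ) (t : δ)
    (f : γ → δ) (S : Finset γ) :
    S.Nonempty → (∀ a ∈ S, f a ≤ t) → ∃ m ∈ S, ∀ a ∈ S, f a ≤ f m := by
  induction S using Finset.cons_induction with
  | empty => intro h; simp at h
  | cons a S ha ih =>
    intro _ hb
    by_cases hS : S.Nonempty
    · obtain ⟨m, hm, hmax⟩ := ih hS fun x hx => hb x (Finset.mem_cons_of_mem hx)
      rcases hc t (f a) (f m) (hb a (Finset.mem_cons_self a S)) (hb m (Finset.mem_cons_of_mem hm))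
        with h1 | h1
      · refine ⟨m, Finset.mem_cons_of_mem hm, fun x hx => ?_⟩
        rcases Finset.mem_cons.1 hx with rfl | hx
        · exact h1
        · exact hmax x hx
      · refine ⟨a, Finset.mem_cons_self a S, fun x hx => ?_⟩
        rcases Finset.mem_cons.1 hx with rfl | hx
        · exact le_rfl
        · exact (hmax x hx).trans h1
    · refine ⟨a, Finset.mem_cons_self a S, fun x hx => ?_⟩
      rcases Finset.mem_cons.1 hx with rfl | hx
      · exact le_rfl
      · exact absurd ⟨x, hx⟩ hS

/-- minimum of a finite nonempty family all lying below `t` in a pseudotree -/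
lemma DPM_exists_min_im {γ δ : Type*} [SemilatticeInf δ] (hc : PseudotreeOrd δ) (t : δ)
    (f : γ → δ) (S : Finset γ) :
    S.Nonempty → (∀ a ∈ S, f a ≤ t) → ∃ m ∈ S, ∀ a ∈ S, f m ≤ f a := by
  induction S using Finset.cons_induction with
  | empty => intro h; simp at h
  | cons a S ha ih =>
    intro _ hb
    by_cases hS : S.Nonempty
    · obtain ⟨m, hm, hmin⟩ := ih hS fun x hx => hb x (Finset.mem_cons_of_mem hx)
      rcases hc t (f a) (f m) (hb a (Finset.mem_cons_self a S)) (hb m (Finset.mem_cons_of_mem hm))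
        with h1 | h1
      · refine ⟨a, Finset.mem_cons_self a S, fun x hx => ?_⟩
        rcases Finset.mem_cons.1 hx with rfl | hx
        · exact le_rfl
        · exact h1.trans (hmin x hx)
      · refine ⟨m, Finset.mem_cons_of_mem hm, fun x hx => ?_⟩
        rcases Finset.mem_cons.1 hx with rfl | hx
        · exact h1
        · exact hmin x hx
    · refine ⟨a, Finset.mem_cons_self a S, fun x hx => ?_⟩
      rcases Finset.mem_cons.1 hx with rfl | hx
      · exact le_rfl
      · exact absurd ⟨x, hx⟩ hS

variable {β : Type*} [SemilatticeInf β] [OrderBot β]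

/-- From infinite splitting: a point strictly above `p` meeting everything in a given
finite set of elements strictly above `p` exactly in `p`. -/
lemma DPM_splitter (hβ : PseudotreeOrd β) (hsplit : InfSplitting β) (p : β) :
    ∀ (N : ℕ) (S : Finset β), S.card ≤ N → (∀ b ∈ S, p < b) →
      ∃ q, p < q ∧ ∀ b ∈ S, q ⊓ b = p := by
  intro N
  induction N with
  | zero =>
    intro S hcard hS
    obtain ⟨q, hq, -⟩ := hsplit p 0 Fin.elim0 (fun i => i.elim0) (fun i => i.elim0)
    have hSe : S = ∅ := Finset.card_eq_zero.1 (Nat.le_zero.1 hcard)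
    subst hSe
    exact ⟨q, hq, fun b hb => absurd hb (Finset.notMem_empty b)⟩
  | succ N ih =>
    intro S hcard hS
    classical
    by_cases hpair : ∃ b ∈ S, ∃ b' ∈ S, b ≠ b' ∧ p < b ⊓ b'
    · obtain ⟨b, hb, b', hb', hne, hlt⟩ := hpair
      set S' := insert (b ⊓ b') ((S.erase b).erase b') with hS'def
      have hb'e : b' ∈ S.erase b := Finset.mem_erase.2 ⟨hne.symm, hb'⟩
      have hcard2 : 2 ≤ S.card := Finset.one_lt_card.2 ⟨b, hb, b', hb', hne⟩
      have hcard' : S'.card ≤ N := by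
        have h1 : ((S.erase b).erase b').card = S.card - 1 - 1 := by
          rw [Finset.card_erase_of_mem hb'e, Finset.card_erase_of_mem hb]
        have h2 : S'.card ≤ ((S.erase b).erase b').card + 1 := Finset.card_insert_le _ _
        omega
      have hS'p : ∀ c ∈ S', p < c := by
        intro c hc
        rcases Finset.mem_insert.1 hc with rfl | hc
        · exact hlt
        · exact hS c (Finset.mem_of_mem_erase (Finset.mem_of_mem_erase hc))
      obtain ⟨q, hq, hm⟩ := ih S' hcard' hS'p
      refine ⟨q, hq, fun c hc => ?_⟩
      have hkey : q ⊓ (b ⊓ b') = p := hm _ (Finset.mem_insert_self _ _)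
      by_cases hcb : c = b ∨ c = b'
      · have hcge : b ⊓ b' ≤ c := by
          rcases hcb with rfl | rfl
          · exact inf_le_left
          · exact inf_le_right
        rcases hβ c (q ⊓ c) (b ⊓ b') inf_le_right hcge with h2 | h2
        · exact le_antisymm ((le_inf inf_le_left h2).trans hkey.le) (le_inf hq.le (hS c hc).le)
        · exact absurd ((le_inf (h2.trans inf_le_left) le_rfl).trans hkey.le) hlt.not_ge
      · push_neg at hcb
        exact hm c (Finset.mem_insert_of_mem
          (Finset.mem_erase.2 ⟨hcb.2, Finset.mem_erase.2 ⟨hcb.1, hc⟩⟩))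
    · push_neg at hpair
      set f : Fin S.card → β := fun i => S.toList.get (Fin.cast (Finset.length_toList S).symm i)
        with hfdef
      have hfmem : ∀ i, f i ∈ S := fun i => Finset.mem_toList.1 (S.toList.get_mem _)
      have h1 : ∀ i, p ≤ f i := fun i => (hS _ (hfmem i)).le
      have h2 : ∀ i j : Fin S.card, i < j → f i ⊓ f j = p := by
        intro i j hij
        have hne : f i ≠ f j := by
          intro h
          have h3 := (List.Nodup.get_inj_iff (Finset.nodup_toList S)).1 h
          have h4 := congrArg Fin.val h3
          simp only [Fin.coe_cast] at h4
          have h5 : (i : ℕ) < (j : ℕ) := hij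
          omega
        have hnlt := hpair _ (hfmem i) _ (hfmem j) hne
        exact ((le_inf (h1 i) (h1 j)).lt_or_eq.resolve_left hnlt).symm
      obtain ⟨q, hq, hm⟩ := hsplit p S.card f h1 h2
      refine ⟨q, hq, fun b hb => ?_⟩
      obtain ⟨i, hi⟩ := List.mem_iff_get.1 (Finset.mem_toList.2 hb)
      have hfi : f (Fin.cast (Finset.length_toList S) i) = b := hi
      rw [inf_comm, ← hfi]
      exact hm _

/-- A point strictly above `p` whose meets with a given finite set agree with those of `p`. -/
lemma DPM_qext_above (hβ : PseudotreeOrd β) (hsplit : InfSplitting β)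
    (B : Finset β) (p : β) :
    ∃ q, p < q ∧ ∀ b ∈ B, q ⊓ b = p ⊓ b := by
  classical
  obtain ⟨q, hq, hm⟩ := DPM_splitter hβ hsplit p (B.filter (p < ·)).card (B.filter (p < ·))
    le_rfl (fun b hb => (Finset.mem_filter.1 hb).2)
  refine ⟨q, hq, fun b hb => ?_⟩
  by_cases hpb : p ≤ b
  · rcases hpb.lt_or_eq with h | h
    · rw [hm b (Finset.mem_filter.2 ⟨hb, h⟩)]
      exact (inf_eq_left.2 hpb).symm
    · subst h
      simp [inf_eq_right.2 hq.le]
  · rcases hβ q (q ⊓ b) p inf_le_left hq.le with h | h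
    · exact le_antisymm (le_inf h inf_le_right) (inf_le_inf_right b hq.le)
    · exact absurd (h.trans inf_le_right) hpb

/-- A point strictly between `p` and `v` suitable for the extension step. -/
lemma DPM_qext_between (hdense : DenseOrd β)
    (B : Finset β) (hBc : ∀ b ∈ B, ∀ b' ∈ B, b ⊓ b' ∈ B) (p v : β) (hv : v ∈ B) (hpv : p < v)
    (hstruct : ∀ b ∈ B, b < v → b ≤ p) :
    ∃ q, p < q ∧ q < v ∧ (∀ b ∈ B, b ≤ q → b ≤ p) ∧ (∀ b ∈ B, q ≤ b → v ≤ b) ∧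
      (∀ b ∈ B, ¬ q ≤ b → q ⊓ b = p ⊓ b) := by
  obtain ⟨q, h1, h2⟩ := hdense p v hpv
  refine ⟨q, h1, h2, ?_, ?_, ?_⟩
  · intro b hb hbq
    exact hstruct b hb (lt_of_le_of_lt hbq h2)
  · intro b hb hqb
    have hv' : v ⊓ b ∈ B := hBc v hv b hb
    have hqvb : q ≤ v ⊓ b := le_inf h2.le hqb
    rcases eq_or_lt_of_le (inf_le_left : v ⊓ b ≤ v) with he | hl
    · exact inf_eq_left.1 he
    · exact absurd (hqvb.trans (hstruct _ hv' hl)) h1.not_ge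
  · intro b hb hqb
    have hvb : v ⊓ b < v := by
      rcases eq_or_lt_of_le (inf_le_left : v ⊓ b ≤ v) with he | hl
      · exact absurd (h2.le.trans (inf_eq_left.1 he)) hqb
      · exact hl
    have h3 : v ⊓ b ≤ p := hstruct _ (hBc v hv b hb) hvb
    have h4 : q ⊓ b ≤ v ⊓ b := inf_le_inf_right b h2.le
    exact le_antisymm (le_inf (h4.trans h3) inf_le_right) (inf_le_inf_right b h1.le)

variable {α : Type*} [SemilatticeInf α] [OrderBot α]

/-- A finite partial isomorphism, coded as a finite set of pairs. -/
def GoodPI (P : Finset (α × β)) : Prop :=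
  (⊥, ⊥) ∈ P ∧
  (∀ x ∈ P, ∀ y ∈ P, (x.1 ⊓ y.1, x.2 ⊓ y.2) ∈ P) ∧
  (∀ x ∈ P, ∀ y ∈ P, (x.1 ≤ y.1 ↔ x.2 ≤ y.2))

lemma DPM_goodPI_swap [DecidableEq α] [DecidableEq β] {P : Finset (α × β)} (h : GoodPI P) :
    GoodPI (P.image Prod.swap) := by
  obtain ⟨hbot, hinf, hord⟩ := h
  refine ⟨Finset.mem_image.2 ⟨(⊥, ⊥), hbot, rfl⟩, ?_, ?_⟩
  · intro x hx y hy
    obtain ⟨a, ha, rfl⟩ := Finset.mem_image.1 hx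
    obtain ⟨b, hb, rfl⟩ := Finset.mem_image.1 hy
    exact Finset.mem_image.2 ⟨_, hinf a ha b hb, rfl⟩
  · intro x hx y hy
    obtain ⟨a, ha, rfl⟩ := Finset.mem_image.1 hx
    obtain ⟨b, hb, rfl⟩ := Finset.mem_image.1 hy
    exact (hord a ha b hb).symm

/-- One step of the extension lemma: adding an element whose meets with the domain
are already in the domain. -/
lemma DPM_ext_one [DecidableEq α] [DecidableEq β]
    (hα : PseudotreeOrd α) (hβ : PseudotreeOrd β)
    (hsplit : InfSplitting β) (hdense : DenseOrd β)
    {P : Finset (α × β)} (hP : GoodPI P) (t : α)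
    (ht : ∀ x ∈ P, x.1 ≠ t)
    (hmeet : ∀ x ∈ P, t ≤ x.1 ∨ ∃ y ∈ P, y.1 = t ⊓ x.1) :
    ∃ q : β, GoodPI (insert (t, q) P) := by
  classical
  obtain ⟨hbot, hinf, hord⟩ := hP
  obtain ⟨xm, hxmP, hxmt, hxmax⟩ :
      ∃ xm ∈ P, xm.1 ≤ t ∧ ∀ x ∈ P, x.1 ≤ t → x.1 ≤ xm.1 := by
    obtain ⟨xm, hxm, hmax⟩ := DPM_exists_max_im hα t (fun x : α × β => x.1)
      (P.filter fun x => x.1 ≤ t)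
      ⟨(⊥, ⊥), Finset.mem_filter.2 ⟨hbot, bot_le⟩⟩ (fun x hx => (Finset.mem_filter.1 hx).2)
    exact ⟨xm, (Finset.mem_filter.1 hxm).1, (Finset.mem_filter.1 hxm).2,
      fun x hx hxt => hmax x (Finset.mem_filter.2 ⟨hx, hxt⟩)⟩
  have hmlt : xm.1 < t := lt_of_le_of_ne hxmt (ht xm hxmP)
  have F1 : ∀ x ∈ P, ¬ t ≤ x.1 → t ⊓ x.1 = xm.1 ⊓ x.1 := by
    intro x hx hntx
    rcases hmeet x hx with h | ⟨y, hy, hy1⟩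
    · exact absurd h hntx
    · have h1 : y.1 ≤ xm.1 := hxmax y hy (hy1 ▸ inf_le_left)
      rw [hy1] at h1
      exact le_antisymm (le_inf h1 inf_le_right) (inf_le_inf_right _ hxmt)
  by_cases hup : ∃ x ∈ P, t ≤ x.1
  · -- there is something above t
    have hPune : (P.filter fun x => t ≤ x.1).Nonempty := by
      obtain ⟨x, hx, hxt⟩ := hup
      exact ⟨x, Finset.mem_filter.2 ⟨hx, hxt⟩⟩
    set Pu := P.filter fun x => t ≤ x.1 with hPudef
    have hPuclose : ∀ x ∈ (↑Pu : Set (α × β)), ∀ y ∈ (↑Pu : Set (α × β)),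
        x ⊓ y ∈ (↑Pu : Set (α × β)) := by
      intro x hx y hy
      rw [Finset.mem_coe, hPudef, Finset.mem_filter] at hx hy ⊢
      exact ⟨hinf x hx.1 y hy.1, le_inf hx.2 hy.2⟩
    have hxuPu : Pu.inf' hPune id ∈ Pu := by
      have := Finset.inf'_mem (↑Pu : Set (α × β)) hPuclose Pu hPune id
        (fun i hi => Finset.mem_coe.2 hi)
      exact Finset.mem_coe.1 this
    set xu := Pu.inf' hPune id with hxudef
    have hxuP : xu ∈ P := (Finset.mem_filter.1 hxuPu).1
    have hxulb : ∀ y ∈ Pu, xu ≤ y := fun y hy => Finset.inf'_le id hy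
    have htu : t ≤ xu.1 := (Finset.mem_filter.1 hxuPu).2
    have htu' : t < xu.1 := lt_of_le_of_ne htu (ht xu hxuP).symm
    have hpmpu : xm.2 < xu.2 := by
      have h1 : xm.2 ≤ xu.2 := (hord xm hxmP xu hxuP).1 (hxmt.trans htu)
      refine lt_of_le_of_ne h1 fun h => ?_
      have h2 : xu.1 ≤ xm.1 := (hord xu hxuP xm hxmP).2 h.ge
      exact absurd (htu.trans h2) hmlt.not_ge
    have hranclose : ∀ b ∈ P.image Prod.snd, ∀ b' ∈ P.image Prod.snd,
        b ⊓ b' ∈ P.image Prod.snd := by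
      intro b hb b' hb'
      obtain ⟨x, hx, rfl⟩ := Finset.mem_image.1 hb
      obtain ⟨y, hy, rfl⟩ := Finset.mem_image.1 hb'
      exact Finset.mem_image.2 ⟨_, hinf x hx y hy, rfl⟩
    have hstruct : ∀ b ∈ P.image Prod.snd, b < xu.2 → b ≤ xm.2 := by
      intro b hb hblt
      obtain ⟨x, hx, rfl⟩ := Finset.mem_image.1 hb
      have h1 : x.1 ≤ xu.1 := (hord x hx xu hxuP).2 hblt.le
      have h2 : ¬ t ≤ x.1 := by
        intro h
        have h3 := hxulb x (Finset.mem_filter.2 ⟨hx, h⟩)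
        exact absurd h3.2 hblt.not_ge
      rcases hα xu.1 x.1 t h1 htu with h3 | h3
      · exact (hord x hx xm hxmP).1 (hxmax x hx h3)
      · exact absurd h3 h2
    obtain ⟨q, hq1, hq2, hq3, hq4, hq5⟩ := DPM_qext_between hdense (P.image Prod.snd)
      hranclose xm.2 xu.2 (Finset.mem_image_of_mem _ hxuP) hpmpu hstruct
    have hq3' : ∀ x ∈ P, x.2 ≤ q → x.2 ≤ xm.2 :=
      fun x hx h => hq3 _ (Finset.mem_image_of_mem _ hx) h
    have hq4' : ∀ x ∈ P, q ≤ x.2 → xu.2 ≤ x.2 :=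
      fun x hx h => hq4 _ (Finset.mem_image_of_mem _ hx) h
    have hq5' : ∀ x ∈ P, ¬ q ≤ x.2 → q ⊓ x.2 = xm.2 ⊓ x.2 :=
      fun x hx h => hq5 _ (Finset.mem_image_of_mem _ hx) h
    have hup' : ∀ x ∈ P, t ≤ x.1 → q ≤ x.2 := by
      intro x hx h
      have h1 := hxulb x (Finset.mem_filter.2 ⟨hx, h⟩)
      exact hq2.le.trans h1.2
    have hdown' : ∀ x ∈ P, q ≤ x.2 → t ≤ x.1 := by
      intro x hx h
      exact htu.trans ((hord xu hxuP x hx).2 (hq4' x hx h))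
    have hnq : ∀ x ∈ P, ¬ t ≤ x.1 → ¬ q ≤ x.2 := fun x hx h hqx => h (hdown' x hx hqx)
    refine ⟨q, Finset.mem_insert_of_mem hbot, ?_, ?_⟩
    · intro x hx y hy
      rcases Finset.mem_insert.1 hx with rfl | hx
      · rcases Finset.mem_insert.1 hy with rfl | hy
        · simpa using Finset.mem_insert_self (t, q) P
        · show (t ⊓ y.1, q ⊓ y.2) ∈ insert (t, q) P
          by_cases hty : t ≤ y.1
          · rw [inf_eq_left.2 hty, inf_eq_left.2 (hup' y hy hty)]
            exact Finset.mem_insert_self _ _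
          · rw [F1 y hy hty, hq5' y hy (hnq y hy hty)]
            exact Finset.mem_insert_of_mem (hinf xm hxmP y hy)
      · rcases Finset.mem_insert.1 hy with rfl | hy
        · show (x.1 ⊓ t, x.2 ⊓ q) ∈ insert (t, q) P
          rw [inf_comm x.1 t, inf_comm x.2 q]
          by_cases hty : t ≤ x.1
          · rw [inf_eq_left.2 hty, inf_eq_left.2 (hup' x hx hty)]
            exact Finset.mem_insert_self _ _
          · rw [F1 x hx hty, hq5' x hx (hnq x hx hty)]
            exact Finset.mem_insert_of_mem (hinf xm hxmP x hx)
        · exact Finset.mem_insert_of_mem (hinf x hx y hy)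
    · intro x hx y hy
      rcases Finset.mem_insert.1 hx with rfl | hx
      · rcases Finset.mem_insert.1 hy with rfl | hy
        · simp
        · exact ⟨hup' y hy, hdown' y hy⟩
      · rcases Finset.mem_insert.1 hy with rfl | hy
        · show x.1 ≤ t ↔ x.2 ≤ q
          constructor
          · intro h
            exact ((hord x hx xm hxmP).1 (hxmax x hx h)).trans hq1.le
          · intro h
            exact ((hord x hx xm hxmP).2 (hq3' x hx h)).trans hxmt
        · exact hord x hx y hy
  · -- nothing above t
    push_neg at hup
    obtain ⟨q, hq, hqm⟩ := DPM_qext_above hβ hsplit (P.image Prod.snd) xm.2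
    have hqm' : ∀ x ∈ P, q ⊓ x.2 = xm.2 ⊓ x.2 :=
      fun x hx => hqm x.2 (Finset.mem_image_of_mem _ hx)
    have hql : ∀ x ∈ P, x.2 ≤ q → x.2 ≤ xm.2 := by
      intro x hx h
      have h1 : x.2 = xm.2 ⊓ x.2 := by
        rw [← hqm' x hx, inf_eq_right.2 h]
      rw [h1]
      exact inf_le_left
    have hqn : ∀ x ∈ P, ¬ q ≤ x.2 := by
      intro x hx h
      have h2 : q ≤ xm.2 := by
        rw [← inf_eq_left.2 h, hqm' x hx]
        exact inf_le_left
      exact absurd h2 hq.not_ge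
    refine ⟨q, Finset.mem_insert_of_mem hbot, ?_, ?_⟩
    · intro x hx y hy
      rcases Finset.mem_insert.1 hx with rfl | hx
      · rcases Finset.mem_insert.1 hy with rfl | hy
        · simpa using Finset.mem_insert_self (t, q) P
        · show (t ⊓ y.1, q ⊓ y.2) ∈ insert (t, q) P
          rw [F1 y hy (hup y hy), hqm' y hy]
          exact Finset.mem_insert_of_mem (hinf xm hxmP y hy)
      · rcases Finset.mem_insert.1 hy with rfl | hy
        · show (x.1 ⊓ t, x.2 ⊓ q) ∈ insert (t, q) P
          rw [inf_comm x.1 t, inf_comm x.2 q, F1 x hx (hup x hx), hqm' x hx]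
          exact Finset.mem_insert_of_mem (hinf xm hxmP x hx)
        · exact Finset.mem_insert_of_mem (hinf x hx y hy)
    · intro x hx y hy
      rcases Finset.mem_insert.1 hx with rfl | hx
      · rcases Finset.mem_insert.1 hy with rfl | hy
        · simp
        · exact ⟨fun h => absurd h (hup y hy), fun h => absurd h (hqn y hy)⟩
      · rcases Finset.mem_insert.1 hy with rfl | hy
        · show x.1 ≤ t ↔ x.2 ≤ q
          constructor
          · intro h
            exact ((hord x hx xm hxmP).1 (hxmax x hx h)).trans hq.le
          · intro h
            exact ((hord x hx xm hxmP).2 (hql x hx h)).trans hxmt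
        · exact hord x hx y hy

/-- Full extension lemma: any element can be added to the domain of a finite
partial isomorphism. -/
lemma DPM_ext_dom (hα : PseudotreeOrd α) (hβ : PseudotreeOrd β)
    (hsplit : InfSplitting β) (hdense : DenseOrd β)
    (P : Finset (α × β)) (hP : GoodPI P) (t : α) :
    ∃ P', P ⊆ P' ∧ GoodPI P' ∧ ∃ y ∈ P', y.1 = t := by
  classical
  suffices H : ∀ (n : ℕ) (P : Finset (α × β)), GoodPI P →
      ((P.image fun x => t ⊓ x.1).filter
        (fun c => (∀ y ∈ P, y.1 ≠ c) ∧ c ≠ t)).card ≤ n →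
      ∃ P', P ⊆ P' ∧ GoodPI P' ∧ ∃ y ∈ P', y.1 = t by
    exact H _ P hP le_rfl
  intro n
  induction n using Nat.strong_induction_on with
  | _ n ih =>
    intro P hP hcard
    by_cases ht0 : ∃ y ∈ P, y.1 = t
    · exact ⟨P, Finset.Subset.refl P, hP, ht0⟩
    push_neg at ht0
    by_cases hMe : ((P.image fun x => t ⊓ x.1).filter
        (fun c => (∀ y ∈ P, y.1 ≠ c) ∧ c ≠ t)).Nonempty
    · -- pick the minimal missing meet and add it first
      set M := (P.image fun x => t ⊓ x.1).filter
        (fun c => (∀ y ∈ P, y.1 ≠ c) ∧ c ≠ t) with hMdef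
      have hMle : ∀ c ∈ M, c ≤ t := by
        intro c hc
        obtain ⟨x, hx, rfl⟩ := Finset.mem_image.1 (Finset.mem_filter.1 hc).1
        exact inf_le_left
      obtain ⟨c, hcM, hcmin⟩ := DPM_exists_min_im hα t id M hMe hMle
      have hcP := Finset.mem_filter.1 hcM
      obtain ⟨x0, hx0, hc0⟩ := Finset.mem_image.1 hcP.1
      have hcdom : ∀ y ∈ P, y.1 ≠ c := hcP.2.1
      have hct : c ≠ t := hcP.2.2
      have hclet : c ≤ t := hMle c hcM
      have hmeetc : ∀ x ∈ P, c ≤ x.1 ∨ ∃ y ∈ P, y.1 = c ⊓ x.1 := by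
        intro x hx
        have hz : (x0.1 ⊓ x.1, x0.2 ⊓ x.2) ∈ P := hP.2.1 x0 hx0 x hx
        have hcx : c ⊓ x.1 = t ⊓ (x0.1 ⊓ x.1) := by
          rw [← hc0, inf_assoc]
        by_cases h1 : ∃ y ∈ P, y.1 = c ⊓ x.1
        · exact Or.inr h1
        · left
          by_cases h2 : c ⊓ x.1 = t
          · exact absurd (le_antisymm hclet (h2 ▸ inf_le_left)) hct
          · push_neg at h1
            have hmem : c ⊓ x.1 ∈ M := Finset.mem_filter.2
              ⟨by rw [hcx]; exact Finset.mem_image_of_mem _ hz, h1, h2⟩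
            exact (hcmin _ hmem).trans inf_le_right
      obtain ⟨q, hq⟩ := DPM_ext_one hα hβ hsplit hdense hP c hcdom hmeetc
      have hsubM : ((insert (c, q) P).image fun x => t ⊓ x.1).filter
          (fun d => (∀ y ∈ insert (c, q) P, y.1 ≠ d) ∧ d ≠ t) ⊆ M.erase c := by
        intro d hd
        have hd' := Finset.mem_filter.1 hd
        obtain ⟨x, hx, rfl⟩ := Finset.mem_image.1 hd'.1
        rcases Finset.mem_insert.1 hx with rfl | hx
        · exact absurd ((inf_eq_right.2 hclet).symm : ((c, q).1 : α) = t ⊓ (c, q).1)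
            (hd'.2.1 (c, q) (Finset.mem_insert_self _ _))
        · refine Finset.mem_erase.2 ⟨(hd'.2.1 (c, q) (Finset.mem_insert_self _ _)).symm ∘
            Eq.symm ∘ Eq.symm, ?_⟩
          exact Finset.mem_filter.2 ⟨Finset.mem_image_of_mem _ hx,
            fun y hy => hd'.2.1 y (Finset.mem_insert_of_mem hy), hd'.2.2⟩
      have hlt : (((insert (c, q) P).image fun x => t ⊓ x.1).filter
          (fun d => (∀ y ∈ insert (c, q) P, y.1 ≠ d) ∧ d ≠ t)).card < n := by
        have h1 := Finset.card_le_card hsubM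
        have h2 := Finset.card_erase_of_mem hcM
        have h3 : 0 < M.card := Finset.card_pos.2 ⟨c, hcM⟩
        omega
      obtain ⟨P', hsub', hgood', hy'⟩ := ih _ hlt (insert (c, q) P) hq le_rfl
      exact ⟨P', (Finset.subset_insert _ _).trans hsub', hgood', hy'⟩
    · -- no missing meets: add t itself
      have hmeet : ∀ x ∈ P, t ≤ x.1 ∨ ∃ y ∈ P, y.1 = t ⊓ x.1 := by
        intro x hx
        by_cases h1 : ∃ y ∈ P, y.1 = t ⊓ x.1
        · exact Or.inr h1
        by_cases h2 : t ⊓ x.1 = t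
        · exact Or.inl (inf_eq_left.1 h2)
        · push_neg at h1
          exact absurd ⟨t ⊓ x.1, Finset.mem_filter.2
            ⟨Finset.mem_image_of_mem _ hx, h1, h2⟩⟩ hMe
      obtain ⟨q, hq⟩ := DPM_ext_one hα hβ hsplit hdense hP t ht0 hmeet
      exact ⟨insert (t, q) P, Finset.subset_insert _ _, hq,
        (t, q), Finset.mem_insert_self _ _, rfl⟩

/-- Extension lemma for the range side. -/
lemma DPM_ext_rng (hα : PseudotreeOrd α) (hβ : PseudotreeOrd β)
    (hsplitα : InfSplitting α) (hdenseα : DenseOrd α)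
    (P : Finset (α × β)) (hP : GoodPI P) (s : β) :
    ∃ P', P ⊆ P' ∧ GoodPI P' ∧ ∃ y ∈ P', y.2 = s := by
  classical
  obtain ⟨P'', hsub, hgood, y, hy, hy1⟩ :=
    DPM_ext_dom hβ hα hsplitα hdenseα (P.image Prod.swap) (DPM_goodPI_swap hP) s
  refine ⟨P''.image Prod.swap, ?_, DPM_goodPI_swap hgood,
    Prod.swap y, Finset.mem_image_of_mem _ hy, hy1⟩
  intro x hx
  have hxsw : x.swap ∈ P'' := hsub (Finset.mem_image_of_mem _ hx)
  exact Finset.mem_image.2 ⟨x.swap, hxsw, Prod.swap_swap x⟩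

end DPMBF

/-- any two countable models of DPM are isomorphic. -/
theorem stmt11 {T Q : Type*} [SemilatticeInf T] [OrderBot T] [Countable T]
    [SemilatticeInf Q] [OrderBot Q] [Countable Q]
    (hT : PseudotreeOrd T) (hsplitT : InfSplitting T) (hdenseT : DenseOrd T)
    (hQ : PseudotreeOrd Q) (hsplitQ : InfSplitting Q) (hdenseQ : DenseOrd Q) :
    ∃ e : T ≃ Q, e ⊥ = ⊥ ∧ ∀ x y : T, e (x ⊓ y) = e x ⊓ e y := by
  classical
  have : Nonempty T := ⟨⊥⟩
  have : Nonempty Q := ⟨⊥⟩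
  obtain ⟨eT, heT⟩ := exists_surjective_nat T
  obtain ⟨eQ, heQ⟩ := exists_surjective_nat Q
  have hbase : GoodPI ({((⊥ : T), (⊥ : Q))} : Finset (T × Q)) := by
    refine ⟨Finset.mem_singleton_self _, ?_, ?_⟩
    · intro x hx y hy
      rw [Finset.mem_singleton] at hx hy
      subst hx; subst hy; simp
    · intro x hx y hy
      rw [Finset.mem_singleton] at hx hy
      subst hx; subst hy; simp
  have key : ∀ P : Finset (T × Q), GoodPI P → ∀ n : ℕ,
      ∃ P', P ⊆ P' ∧ GoodPI P' ∧ (∃ y ∈ P', y.1 = eT n) ∧ ∃ y ∈ P', y.2 = eQ n := by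
    intro P hP n
    obtain ⟨P1, h1, hg1, hy1⟩ := DPM_ext_dom hT hQ hsplitQ hdenseQ P hP (eT n)
    obtain ⟨P2, h2, hg2, hy2⟩ := DPM_ext_rng hT hQ hsplitT hdenseT P1 hg1 (eQ n)
    obtain ⟨y, hy, hyy⟩ := hy1
    exact ⟨P2, h1.trans h2, hg2, ⟨y, h2 hy, hyy⟩, hy2⟩
  let F : ℕ → {P : Finset (T × Q) // GoodPI P} := fun n =>
    Nat.rec ⟨{(⊥, ⊥)}, hbase⟩
      (fun n ih => ⟨(key ih.1 ih.2 n).choose, (key ih.1 ih.2 n).choose_spec.2.1⟩) n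
  have hFsucc : ∀ n, (F n).1 ⊆ (F (n + 1)).1 ∧
      (∃ y ∈ (F (n + 1)).1, y.1 = eT n) ∧ ∃ y ∈ (F (n + 1)).1, y.2 = eQ n := by
    intro n
    have hspec := (key (F n).1 (F n).2 n).choose_spec
    exact ⟨hspec.1, hspec.2.2.1, hspec.2.2.2⟩
  have hmono : ∀ m n, m ≤ n → (F m).1 ⊆ (F n).1 := by
    intro m n h
    induction h with
    | refl => exact Finset.Subset.refl _
    | @step k hk ih =>
      exact ih.trans (hFsucc k).1
  have func : ∀ (t : T) (q q' : Q),
      (∃ n, (t, q) ∈ (F n).1) → (∃ n, (t, q') ∈ (F n).1) → q = q' := by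
    rintro t q q' ⟨n, hn⟩ ⟨n', hn'⟩
    have h1 : (t, q) ∈ (F (max n n')).1 := hmono _ _ (le_max_left _ _) hn
    have h2 : (t, q') ∈ (F (max n n')).1 := hmono _ _ (le_max_right _ _) hn'
    have hord := (F (max n n')).2.2.2
    exact le_antisymm ((hord _ h1 _ h2).1 le_rfl) ((hord _ h2 _ h1).1 le_rfl)
  have inj : ∀ (t t' : T) (q : Q),
      (∃ n, (t, q) ∈ (F n).1) → (∃ n, (t', q) ∈ (F n).1) → t = t' := by
    rintro t t' q ⟨n, hn⟩ ⟨n', hn'⟩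
    have h1 : (t, q) ∈ (F (max n n')).1 := hmono _ _ (le_max_left _ _) hn
    have h2 : (t', q) ∈ (F (max n n')).1 := hmono _ _ (le_max_right _ _) hn'
    have hord := (F (max n n')).2.2.2
    exact le_antisymm ((hord _ h1 _ h2).2 le_rfl) ((hord _ h2 _ h1).2 le_rfl)
  have total : ∀ t : T, ∃ q, ∃ n, (t, q) ∈ (F n).1 := by
    intro t
    obtain ⟨n, rfl⟩ := heT t
    obtain ⟨y, hy, hy1⟩ := (hFsucc n).2.1
    rcases y with ⟨y1, y2⟩
    cases hy1
    exact ⟨y2, n + 1, hy⟩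
  have cototal : ∀ q : Q, ∃ t, ∃ n, (t, q) ∈ (F n).1 := by
    intro q
    obtain ⟨n, rfl⟩ := heQ q
    obtain ⟨y, hy, hy2⟩ := (hFsucc n).2.2
    rcases y with ⟨y1, y2⟩
    cases hy2
    exact ⟨y1, n + 1, hy⟩
  choose f hf using total
  choose g hg using cototal
  have left : ∀ t, g (f t) = t := fun t => inj _ _ _ (hg (f t)) (hf t)
  have right : ∀ q, f (g q) = q := fun q => func _ _ _ (hf (g q)) (hg q)
  refine ⟨⟨f, g, left, right⟩, ?_, ?_⟩
  · have h0 : ∃ n, ((⊥ : T), (⊥ : Q)) ∈ (F n).1 := ⟨0, Finset.mem_singleton_self _⟩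
    exact func _ _ _ (hf ⊥) h0
  · intro x y
    obtain ⟨n1, h1⟩ := hf x
    obtain ⟨n2, h2⟩ := hf y
    have hx' : (x, f x) ∈ (F (max n1 n2)).1 := hmono _ _ (le_max_left _ _) h1
    have hy' : (y, f y) ∈ (F (max n1 n2)).1 := hmono _ _ (le_max_right _ _) h2
    have hm := (F (max n1 n2)).2.2.1 _ hx' _ hy'
    exact func _ _ _ (hf (x ⊓ y)) ⟨max n1 n2, hm⟩
end

section
/- Every pseudotree is a substructure of a model of PM. Concretely, if T is a pseudotree, then the collection T* consisting of all down-sets S_t = { x ∈ T : x ≤ t } for t ∈ T, together with all pairwise intersections S_{t0} ∩ S_{t1} and the empty set, ordered by inclusion, is closed under finite intersections and is a pseudotree with least element in which every two elements have an infimum (given by intersection). -/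
/-- Two down-sets contained in a common `Iic t` are comparable. -/
lemma chainIic {T : Type*} [PartialOrder T] (hT : PseudotreeOrd T) {t : T}
    {u v : Set T} (hu : ∀ x ∈ u, ∀ y, y ≤ x → y ∈ u)
    (hv : ∀ x ∈ v, ∀ y, y ≤ x → y ∈ v)
    (hus : u ⊆ Set.Iic t) (hvs : v ⊆ Set.Iic t) : u ⊆ v ∨ v ⊆ u := by
  by_cases h : u ⊆ v
  · exact Or.inl h
  · right
    obtain ⟨a, ha, hav⟩ := Set.not_subset.mp h
    intro b hb
    rcases hT t a b (hus ha) (hvs hb) with h1 | h2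
    · exact (hav (hv b hb a h1)).elim
    · exact hu a ha b h2

lemma tri {T : Type*} [PartialOrder T] (hT : PseudotreeOrd T) (a b c : T) :
    Set.Iic a ∩ Set.Iic b ∩ Set.Iic c = Set.Iic a ∩ Set.Iic b ∨
    Set.Iic a ∩ Set.Iic b ∩ Set.Iic c = Set.Iic a ∩ Set.Iic c := by
  have hu : ∀ x ∈ Set.Iic a ∩ Set.Iic b, ∀ y, y ≤ x → y ∈ Set.Iic a ∩ Set.Iic b := by
    intro x hx y hy
    exact ⟨le_trans hy hx.1, le_trans hy hx.2⟩
  have hv : ∀ x ∈ Set.Iic a ∩ Set.Iic c, ∀ y, y ≤ x → y ∈ Set.Iic a ∩ Set.Iic c := by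
    intro x hx y hy
    exact ⟨le_trans hy hx.1, le_trans hy hx.2⟩
  rcases chainIic hT hu hv Set.inter_subset_left Set.inter_subset_left with h | h
  · left
    apply subset_antisymm Set.inter_subset_left
    intro x hx
    exact ⟨hx, (h hx).2⟩
  · right
    apply subset_antisymm
    · intro x hx
      exact ⟨hx.1.1, hx.2⟩
    · intro x hx
      exact ⟨⟨hx.1, (h hx).2⟩, hx.2⟩

lemma pairInt {T : Type*} [PartialOrder T] (hT : PseudotreeOrd T) (a b c d : T) :
    ∃ p q : T, (Set.Iic a ∩ Set.Iic b) ∩ (Set.Iic c ∩ Set.Iic d) =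
      Set.Iic p ∩ Set.Iic q := by
  have e : (Set.Iic a ∩ Set.Iic b) ∩ (Set.Iic c ∩ Set.Iic d) =
      Set.Iic a ∩ Set.Iic b ∩ Set.Iic c ∩ Set.Iic d := by
    ext x; simp [and_assoc]
  rcases tri hT a b c with h | h <;> rw [e, h]
  · rcases tri hT a b d with h2 | h2 <;> rw [h2]
    · exact ⟨a, b, rfl⟩
    · exact ⟨a, d, rfl⟩
  · rcases tri hT a c d with h2 | h2 <;> rw [h2]
    · exact ⟨a, c, rfl⟩
    · exact ⟨a, d, rfl⟩

/-- every pseudotree is a substructure of a model of PM: the collection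
`T*` of down-sets `S_t`, pairwise intersections thereof, and `∅`, ordered by inclusion, is
closed under finite intersections and is a pseudotree with least element in which every two
elements have an infimum, given by intersection; `T` embeds via `t ↦ S_t`. -/
theorem stmt12 {T : Type*} [PartialOrder T] (hT : PseudotreeOrd T) :
    ∀ Tstar : Set (Set T),
      Tstar = {s | ∃ t : T, s = Set.Iic t} ∪
          {s | ∃ t u : T, s = Set.Iic t ∩ Set.Iic u} ∪ {∅} →
      (∀ s ∈ Tstar, ∀ u ∈ Tstar, s ∩ u ∈ Tstar) ∧
      (∅ ∈ Tstar ∧ ∀ s ∈ Tstar, ∅ ⊆ s) ∧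
      (∀ s ∈ Tstar, ∀ u ∈ Tstar, ∀ v ∈ Tstar, u ⊆ s → v ⊆ s → u ⊆ v ∨ v ⊆ u) ∧
      (∀ s ∈ Tstar, ∀ u ∈ Tstar, s ∩ u ⊆ s ∧ s ∩ u ⊆ u ∧
        ∀ w ∈ Tstar, w ⊆ s → w ⊆ u → w ⊆ s ∩ u) ∧
      (∀ t : T, Set.Iic t ∈ Tstar) ∧
      (∀ t u : T, t ≤ u ↔ Set.Iic t ⊆ Set.Iic u) ∧
      Function.Injective (Set.Iic : T → Set T) := by
  intro Tstar hTs
  subst hTs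
  -- normal form: every member is ∅ or a pairwise intersection
  have norm : ∀ s ∈ ({s | ∃ t : T, s = Set.Iic t} ∪
      {s | ∃ t u : T, s = Set.Iic t ∩ Set.Iic u} ∪ {∅} : Set (Set T)),
      s = (∅ : Set T) ∨ ∃ a b : T, s = Set.Iic a ∩ Set.Iic b := by
    rintro s (( ⟨t, rfl⟩ | ⟨t, u, rfl⟩ ) | h)
    · exact Or.inr ⟨t, t, (Set.inter_self _).symm⟩
    · exact Or.inr ⟨t, u, rfl⟩
    · exact Or.inl h
  have pairMem : ∀ a b : T, Set.Iic a ∩ Set.Iic b ∈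
      ({s | ∃ t : T, s = Set.Iic t} ∪
        {s | ∃ t u : T, s = Set.Iic t ∩ Set.Iic u} ∪ {∅} : Set (Set T)) := by
    intro a b
    exact Or.inl (Or.inr ⟨a, b, rfl⟩)
  have emptyMem : (∅ : Set T) ∈ ({s | ∃ t : T, s = Set.Iic t} ∪
      {s | ∃ t u : T, s = Set.Iic t ∩ Set.Iic u} ∪ {∅} : Set (Set T)) :=
    Or.inr rfl
  have down : ∀ s ∈ ({s | ∃ t : T, s = Set.Iic t} ∪
      {s | ∃ t u : T, s = Set.Iic t ∩ Set.Iic u} ∪ {∅} : Set (Set T)),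
      ∀ x ∈ s, ∀ y, y ≤ x → y ∈ s := by
    intro s hs x hx y hy
    rcases norm s hs with rfl | ⟨a, b, rfl⟩
    · exact hx
    · exact ⟨le_trans hy hx.1, le_trans hy hx.2⟩
  refine ⟨?_, ⟨emptyMem, fun s _ => Set.empty_subset s⟩, ?_, ?_, ?_, ?_, ?_⟩
  · -- closure under intersection
    intro s hs u hu
    rcases norm s hs with rfl | ⟨a, b, rfl⟩
    · rw [Set.empty_inter]; exact emptyMem
    rcases norm u hu with rfl | ⟨c, d, rfl⟩
    · rw [Set.inter_empty]; exact emptyMem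
    obtain ⟨p, q, h⟩ := pairInt hT a b c d
    rw [h]; exact pairMem p q
  · -- pseudotree property
    intro s hs u hu v hv hus hvs
    rcases norm s hs with rfl | ⟨a, b, rfl⟩
    · exact Or.inl (fun x hx => absurd (hus hx) (Set.notMem_empty x))
    · exact chainIic hT (down u hu) (down v hv)
        (hus.trans Set.inter_subset_left) (hvs.trans Set.inter_subset_left)
  · -- infima
    intro s _ u _
    exact ⟨Set.inter_subset_left, Set.inter_subset_right,
      fun w _ h1 h2 => Set.subset_inter h1 h2⟩
  · intro t
    exact Or.inl (Or.inl ⟨t, rfl⟩)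
  · intro t u
    exact ⟨fun h => Set.Iic_subset_Iic.mpr h, fun h => Set.Iic_subset_Iic.mp h⟩
  · exact Set.Iic_injective
end

section
/- Every countable pseudotree embeds into T_ℚ. -/
namespace Stmt14Aux

variable {T : Type*} [PartialOrder T]

/-- The meet-completion: nonempty sets of lower bounds of finite nonempty sets. -/
def Fam (T : Type*) [PartialOrder T] : Set (Set T) :=
  {S | S.Nonempty ∧ ∃ F : Finset T, F.Nonempty ∧ S = lowerBounds (F : Set T)}

lemma Iic_mem_Fam (t : T) : Set.Iic t ∈ Fam T :=
  ⟨⟨t, le_rfl⟩, {t}, Finset.singleton_nonempty t, by simp [lowerBounds_singleton]⟩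

lemma Fam.down {S : Set T} (hS : S ∈ Fam T) {a b : T} (hab : a ≤ b) (hb : b ∈ S) : a ∈ S := by
  obtain ⟨-, F, -, rfl⟩ := hS
  exact fun x hx => hab.trans (hb hx)

/-- Below any element of `Fam T`, the family is linearly ordered by inclusion. -/
lemma Fam.chain (hT : PseudotreeOrd T) {A B W : Set T} (hA : A ∈ Fam T) (hB : B ∈ Fam T)
    (hW : W ∈ Fam T) (h1 : A ⊆ W) (h2 : B ⊆ W) : A ⊆ B ∨ B ⊆ A := by
  by_contra h
  push_neg at h
  obtain ⟨hAB, hBA⟩ := h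
  obtain ⟨x, hxA, hxB⟩ := Set.not_subset.mp hAB
  obtain ⟨y, hyB, hyA⟩ := Set.not_subset.mp hBA
  obtain ⟨-, H, ⟨w, hw⟩, rfl⟩ := hW
  have hx : x ≤ w := h1 hxA (by exact_mod_cast hw)
  have hy : y ≤ w := h2 hyB (by exact_mod_cast hw)
  rcases hT w x y hx hy with hxy | hyx
  · exact hxB (Fam.down hB hxy hyB)
  · exact hyA (Fam.down hA hyx hxA)

lemma Fam.inter {A B : Set T} (hA : A ∈ Fam T) (hB : B ∈ Fam T) (h : (A ∩ B).Nonempty) :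
    A ∩ B ∈ Fam T := by
  classical
  obtain ⟨-, F, hF, rfl⟩ := hA
  obtain ⟨-, G, hG, rfl⟩ := hB
  exact ⟨h, F ∪ G, Finset.Nonempty.inl hF, by
    rw [Finset.coe_union, lowerBounds_union]⟩

lemma Fam.countable [Countable T] : Countable ↥(Fam T) := by
  have : Fam T ⊆ Set.range (fun F : Finset T => lowerBounds (F : Set T)) := by
    rintro S ⟨-, F, -, rfl⟩; exact ⟨F, rfl⟩
  exact ((Set.countable_range _).mono this).to_subtype

section Key

variable [Countable T] [Nonempty T] (hT : PseudotreeOrd T)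

include hT in
theorem key : ∃ π : ↥(Fam T) → ↥TQ, ∀ X Y : ↥(Fam T),
    ((X : Set T) ⊆ (Y : Set T)) ↔ TQle (π X).1 (π Y).1 := by
  classical
  haveI : Countable ↥(Fam T) := Fam.countable
  haveI : Nonempty ↥(Fam T) := ⟨⟨Set.Iic Classical.ofNonempty, Iic_mem_Fam _⟩⟩
  obtain ⟨u, hu⟩ := exists_surjective_nat ↥(Fam T)
  -- the rational "level" function ε
  haveI : Countable (LinearExtension ↥(Fam T)) := inferInstanceAs (Countable ↥(Fam T))
  obtain ⟨emb⟩ := Order.embedding_from_countable_to_dense (LinearExtension ↥(Fam T)) ℚ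
  set ε : ↥(Fam T) → ℚ := fun X => emb (toLinearExtension X) with hεdef
  have hεmono : ∀ {X Y : ↥(Fam T)}, (X : Set T) ⊆ (Y : Set T) → ε X ≤ ε Y := by
    intro X Y h
    exact emb.monotone (toLinearExtension.monotone h)
  have hεstrict : ∀ {X Y : ↥(Fam T)}, (X : Set T) ⊆ (Y : Set T) → X ≠ Y → ε X < ε Y := by
    intro X Y h hne
    refine lt_of_le_of_ne (hεmono h) (fun he => hne ?_)
    have := emb.injective he
    exact Subtype.ext (congrArg (Subtype.val ∘ (fun x : LinearExtension ↥(Fam T) => x)) this)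
  have hεinj : ∀ {X Y : ↥(Fam T)}, ε X = ε Y → X = Y := by
    intro X Y h
    have := emb.injective h
    exact Subtype.ext (congrArg (Subtype.val ∘ (fun x : LinearExtension ↥(Fam T) => x)) this)
  -- the index function E
  have hex : ∀ X : ↥(Fam T), ∃ n, (X : Set T) ⊆ (u n : Set T) := by
    intro X
    obtain ⟨n, rfl⟩ := hu X
    exact ⟨n, subset_rfl⟩
  set E : ↥(Fam T) → ℕ := fun X => Nat.find (hex X) with hEdef
  have hEspec : ∀ X : ↥(Fam T), (X : Set T) ⊆ (u (E X) : Set T) := fun X => Nat.find_spec (hex X)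
  have hEmono : ∀ {X Y : ↥(Fam T)}, (X : Set T) ⊆ (Y : Set T) → E X ≤ E Y := by
    intro X Y h
    exact Nat.find_min' (hex X) (h.trans (hEspec Y))
  -- the value function v
  set Sv : ↥(Fam T) → ℚ → Set ℕ :=
    fun X r => {k | ∃ Y : ↥(Fam T), (Y : Set T) ⊆ (X : Set T) ∧ r ≤ ε Y ∧ E Y = k} with hSvdef
  set v : ↥(Fam T) → ℚ → ℕ := fun X r => sInf (Sv X r) with hvdef
  have hSvne : ∀ (X : ↥(Fam T)) (r : ℚ), r ≤ ε X → (Sv X r).Nonempty :=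
    fun X r hr => ⟨E X, X, subset_rfl, hr, rfl⟩
  have hvmem : ∀ (X : ↥(Fam T)) (r : ℚ), r ≤ ε X → v X r ∈ Sv X r :=
    fun X r hr => Nat.sInf_mem (hSvne X r hr)
  have hvleE : ∀ (X : ↥(Fam T)) (r : ℚ), r ≤ ε X → v X r ≤ E X :=
    fun X r hr => Nat.sInf_le ⟨X, subset_rfl, hr, rfl⟩
  have hvtop : ∀ X : ↥(Fam T), v X (ε X) = E X := by
    intro X
    obtain ⟨Y, hYX, hεY, hEY⟩ := hvmem X (ε X) le_rfl
    have hYeq : Y = X := by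
      rcases eq_or_ne Y X with h | h
      · exact h
      · exact absurd (hεstrict hYX h) (not_lt.mpr hεY)
    rw [← hEY, hYeq]
  -- coherence of values
  have hvcoh : ∀ (X Y : ↥(Fam T)) (r : ℚ), (X : Set T) ⊆ (Y : Set T) → r ≤ ε X →
      v Y r = v X r := by
    intro X Y r hXY hr
    have hrY : r ≤ ε Y := hr.trans (hεmono hXY)
    apply le_antisymm
    · obtain ⟨Z, hZX, hεZ, hEZ⟩ := hvmem X r hr
      have : v Y r ≤ E Z := Nat.sInf_le ⟨Z, hZX.trans hXY, hεZ, rfl⟩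
      rwa [hEZ] at this
    · obtain ⟨Z, hZY, hεZ, hEZ⟩ := hvmem Y r hrY
      rcases Fam.chain hT Z.2 X.2 Y.2 hZY hXY with hZX | hXZ
      · have : v X r ≤ E Z := Nat.sInf_le ⟨Z, hZX, hεZ, rfl⟩
        rwa [hEZ] at this
      · calc v X r ≤ E X := hvleE X r hr
          _ ≤ E Z := hEmono hXZ
          _ = v Y r := hEZ
  -- the embedding
  set f : ↥(Fam T) → ℚ → Option ℕ :=
    fun X r => if r ≤ ε X then some (v X r) else none with hfdef
  have hforward : ∀ X Y : ↥(Fam T), (X : Set T) ⊆ (Y : Set T) → TQle (f X) (f Y) := by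
    intro X Y hXY q k hq
    simp only [hfdef] at hq ⊢
    by_cases hr : q ≤ ε X
    · rw [if_pos hr] at hq
      rw [if_pos (hr.trans (hεmono hXY)), hvcoh X Y q hXY hr]
      exact hq
    · rw [if_neg hr] at hq; exact absurd hq (by simp)
  have hback : ∀ X Y : ↥(Fam T), TQle (f X) (f Y) → (X : Set T) ⊆ (Y : Set T) := by
    intro X Y h
    have h1 : f X (ε X) = some (E X) := by
      simp only [hfdef, if_pos le_rfl, hvtop]
    have h2 := h (ε X) (E X) h1
    simp only [hfdef] at h2
    by_cases hr : ε X ≤ ε Y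
    swap
    · rw [if_neg hr] at h2; exact absurd h2 (by simp)
    rw [if_pos hr] at h2
    have h3 : v Y (ε X) = E X := Option.some.inj h2
    obtain ⟨Z, hZY, hεZ, hEZ⟩ := hvmem Y (ε X) hr
    have hZu : (Z : Set T) ⊆ ((u (E X) : ↥(Fam T)) : Set T) := by
      have h4 := hEspec Z; rwa [hEZ, h3] at h4
    have hXu : (X : Set T) ⊆ ((u (E X) : ↥(Fam T)) : Set T) := hEspec X
    rcases Fam.chain hT X.2 Z.2 (u (E X)).2 hXu hZu with hXZ | hZX
    · exact hXZ.trans hZY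
    · have hZeq : Z = X := by
        rcases eq_or_ne Z X with he | hne
        · exact he
        · exact absurd (hεstrict hZX hne) (not_lt.mpr hεZ)
      rw [← hZeq]; exact hZY
  -- membership in TQ
  have hmem : ∀ X : ↥(Fam T), f X ∈ TQ := by
    intro X
    right
    set K : ℕ → Set ↥(Fam T) := fun c => {Y | (Y : Set T) ⊆ (X : Set T) ∧ E Y ≤ c} with hKdef
    have hKmax : ∀ c : ℕ, (K c).Nonempty → ∃ M : ↥(Fam T), M ∈ K c ∧
        ∀ Y ∈ K c, (Y : Set T) ⊆ (M : Set T) := by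
      intro c
      induction c with
      | zero =>
        rintro ⟨Y, hYX, hEY⟩
        have hYu : (Y : Set T) ⊆ ((u 0 : ↥(Fam T)) : Set T) := by
          have h5 := hEspec Y
          rwa [Nat.le_zero.mp hEY] at h5
        have hne : ((X : Set T) ∩ ((u 0 : ↥(Fam T)) : Set T)).Nonempty :=
          Y.2.1.mono (Set.subset_inter hYX hYu)
        refine ⟨⟨(X : Set T) ∩ ((u 0 : ↥(Fam T)) : Set T), Fam.inter X.2 (u 0).2 hne⟩,
          ⟨Set.inter_subset_left, Nat.le_zero.mpr ((Nat.find_eq_zero _).mpr Set.inter_subset_right)⟩, ?_⟩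
        rintro Z ⟨hZX, hEZ⟩
        have hZu : (Z : Set T) ⊆ ((u 0 : ↥(Fam T)) : Set T) := by
          have h5 := hEspec Z; rwa [Nat.le_zero.mp hEZ] at h5
        exact Set.subset_inter hZX hZu
      | succ c ih =>
        intro hKne
        have hsplit : ∀ Y' ∈ K (c+1), Y' ∈ K c ∨
            ((Y' : Set T) ⊆ (X : Set T) ∧ (Y' : Set T) ⊆ ((u (c+1) : ↥(Fam T)) : Set T)) := by
          rintro Y' ⟨hY'X, hEY'⟩
          rcases Nat.lt_or_ge (E Y') (c+1) with h | h
          · exact Or.inl ⟨hY'X, Nat.lt_succ_iff.mp h⟩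
          · have heq : E Y' = c + 1 := le_antisymm hEY' h
            have h5 := hEspec Y'
            rw [heq] at h5
            exact Or.inr ⟨hY'X, h5⟩
        by_cases hL : ∃ Z : ↥(Fam T), (Z : Set T) ⊆ (X : Set T) ∧
            (Z : Set T) ⊆ ((u (c+1) : ↥(Fam T)) : Set T)
        · obtain ⟨Z, hZX, hZu⟩ := hL
          have hne : ((X : Set T) ∩ ((u (c+1) : ↥(Fam T)) : Set T)).Nonempty :=
            Z.2.1.mono (Set.subset_inter hZX hZu)
          set M2 : ↥(Fam T) := ⟨(X : Set T) ∩ ((u (c+1) : ↥(Fam T)) : Set T),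
            Fam.inter X.2 (u (c+1)).2 hne⟩ with hM2def
          have hM2K : M2 ∈ K (c+1) :=
            ⟨Set.inter_subset_left, Nat.find_min' _ Set.inter_subset_right⟩
          by_cases hKc : (K c).Nonempty
          · obtain ⟨M1, hM1K, hM1max⟩ := ih hKc
            have hM1K1 : M1 ∈ K (c+1) := ⟨hM1K.1, hM1K.2.trans (Nat.le_succ c)⟩
            rcases Fam.chain hT M1.2 M2.2 X.2 hM1K.1 hM2K.1 with h12 | h21
            · refine ⟨M2, hM2K, fun Y' hY' => ?_⟩
              rcases hsplit Y' hY' with h | h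
              · exact (hM1max Y' h).trans h12
              · exact Set.subset_inter h.1 h.2
            · refine ⟨M1, hM1K1, fun Y' hY' => ?_⟩
              rcases hsplit Y' hY' with h | h
              · exact hM1max Y' h
              · exact (Set.subset_inter h.1 h.2).trans h21
          · refine ⟨M2, hM2K, fun Y' hY' => ?_⟩
            rcases hsplit Y' hY' with h | h
            · exact absurd ⟨Y', h⟩ hKc
            · exact Set.subset_inter h.1 h.2
        · obtain ⟨Y, hYK⟩ := hKne
          rcases hsplit Y hYK with h | h
          swap
          · exact absurd ⟨Y, h⟩ hL
          obtain ⟨M1, hM1K, hM1max⟩ := ih ⟨Y, h⟩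
          refine ⟨M1, ⟨hM1K.1, hM1K.2.trans (Nat.le_succ c)⟩, fun Y' hY' => ?_⟩
          rcases hsplit Y' hY' with h' | h'
          · exact hM1max Y' h'
          · exact absurd ⟨Y', h'⟩ hL
    -- attained values
    set Bv : Finset ℕ := (Finset.range (E X + 1)).filter (fun c => ∃ r, r ≤ ε X ∧ v X r = c)
      with hBvdef
    have hEXB : E X ∈ Bv :=
      Finset.mem_filter.mpr ⟨Finset.mem_range.mpr (Nat.lt_succ_self _), ε X, le_rfl, hvtop X⟩
    have hBle : ∀ c ∈ Bv, c ≤ E X := fun c hc =>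
      Nat.lt_succ_iff.mp (Finset.mem_range.mp (Finset.mem_filter.mp hc).1)
    obtain ⟨m, hm⟩ : ∃ m, Bv.card = m + 1 :=
      ⟨Bv.card - 1, (Nat.succ_pred_eq_of_pos (Finset.card_pos.mpr ⟨E X, hEXB⟩)).symm⟩
    set σ := Bv.orderIsoOfFin hm with hσdef
    have hKne : ∀ i : Fin (m+1), (K ((σ i : ℕ))).Nonempty := by
      intro i
      obtain ⟨-, r, hr, hvr⟩ := Finset.mem_filter.mp (σ i).2
      obtain ⟨Z, hZX, hεZ, hEZ⟩ := hvmem X r hr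
      exact ⟨Z, hZX, by rw [hEZ, hvr]⟩
    choose M hMK hMmax using fun i => hKmax _ (hKne i)
    set q : Fin (m+1) → ℚ := fun i => ε (M i) with hqdef
    have hMX : ∀ i, (M i : Set T) ⊆ (X : Set T) := fun i => (hMK i).1
    have hqle : ∀ i, q i ≤ ε X := fun i => hεmono (hMX i)
    have hiff : ∀ (i : Fin (m+1)) (r : ℚ), r ≤ ε X → (v X r ≤ (σ i : ℕ) ↔ r ≤ q i) := by
      intro i r hr
      constructor
      · intro hv
        obtain ⟨Z, hZX, hεZ, hEZ⟩ := hvmem X r hr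
        have hZK : Z ∈ K (σ i : ℕ) := ⟨hZX, by rw [hEZ]; exact hv⟩
        exact hεZ.trans (hεmono (hMmax i Z hZK))
      · intro hrq
        have h5 : v X r ≤ E (M i) := Nat.sInf_le ⟨M i, hMX i, hrq, rfl⟩
        exact h5.trans (hMK i).2
    have hσlt : ∀ {i j : Fin (m+1)}, i < j → (σ i : ℕ) < (σ j : ℕ) := by
      intro i j h
      exact Subtype.coe_lt_coe.mpr (σ.strictMono h)
    have hqmono : StrictMono q := by
      intro i j hij
      have hcij : (σ i : ℕ) < (σ j : ℕ) := hσlt hij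
      have hMsub : (M i : Set T) ⊆ (M j : Set T) :=
        hMmax j (M i) ⟨hMX i, (hMK i).2.trans hcij.le⟩
      refine hεstrict hMsub (fun he => ?_)
      obtain ⟨-, r, hr, hvr⟩ := Finset.mem_filter.mp (σ j).2
      have h1 : r ≤ q j := (hiff j r hr).mp (le_of_eq hvr)
      have h2 : r ≤ q i := by
        have : q i = q j := by simp only [hqdef, he]
        rw [this]; exact h1
      have h3 : v X r ≤ (σ i : ℕ) := (hiff i r hr).mpr h2
      rw [hvr] at h3
      exact absurd h3 (not_le.mpr hcij)
    have hvB : ∀ r : ℚ, r ≤ ε X → v X r ∈ Bv := fun r hr =>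
      Finset.mem_filter.mpr ⟨Finset.mem_range.mpr (Nat.lt_succ_iff.mpr (hvleE X r hr)), r, hr, rfl⟩
    have hσsurj : ∀ b ∈ Bv, ∃ i, (σ i : ℕ) = b := by
      intro b hb
      obtain ⟨i, hi⟩ := σ.surjective ⟨b, hb⟩
      exact ⟨i, by rw [hi]⟩
    have hlast : (σ (Fin.last m) : ℕ) = E X := by
      obtain ⟨i, hi⟩ := hσsurj (E X) hEXB
      have h1 : (σ i : ℕ) ≤ (σ (Fin.last m) : ℕ) :=
        Subtype.coe_le_coe.mpr (σ.monotone (Fin.le_last i))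
      exact le_antisymm (hBle _ (σ (Fin.last m)).2) (by rw [← hi]; exact h1)
    have hqlast : q (Fin.last m) = ε X := by
      have hXK : X ∈ K (σ (Fin.last m) : ℕ) := ⟨subset_rfl, by rw [hlast]⟩
      have h1 : (X : Set T) ⊆ (M (Fin.last m) : Set T) := hMmax _ X hXK
      have h2 : M (Fin.last m) = X := Subtype.ext (subset_antisymm (hMX _) h1)
      simp only [hqdef, h2]
    refine ⟨m, q, fun i => (σ i : ℕ), hqmono, ?_, ?_, ?_⟩
    · intro r
      rw [hqlast]
      constructor
      · intro h
        by_contra hr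
        simp only [hfdef, if_neg hr] at h
        exact h rfl
      · intro hr
        simp only [hfdef, if_pos hr]
        exact Option.some_ne_none _
    · intro r hr
      have hrX : r ≤ ε X := hr.trans (hqle 0)
      have h1 : v X r ≤ (σ 0 : ℕ) := (hiff 0 r hrX).mpr hr
      have h2 : (σ 0 : ℕ) ≤ v X r := by
        obtain ⟨i, hi⟩ := hσsurj _ (hvB r hrX)
        rw [← hi]
        exact Subtype.coe_le_coe.mpr (σ.monotone (Fin.zero_le i))
      simp only [hfdef, if_pos hrX, le_antisymm h1 h2]
    · intro i r hlt hle
      have hrX : r ≤ ε X := hle.trans (hqle i.succ)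
      have h1 : v X r ≤ (σ i.succ : ℕ) := (hiff i.succ r hrX).mpr hle
      have h2 : ¬ v X r ≤ (σ i.castSucc : ℕ) := fun h =>
        absurd ((hiff i.castSucc r hrX).mp h) (not_le.mpr hlt)
      obtain ⟨j, hj⟩ := hσsurj _ (hvB r hrX)
      have hj1 : i.castSucc < j := σ.lt_iff_lt.mp (Subtype.coe_lt_coe.mp (by rw [hj]; exact lt_of_not_ge h2))
      have hj2 : j ≤ i.succ := σ.le_iff_le.mp (Subtype.coe_le_coe.mp (by rw [hj]; exact h1))
      have hjeq : j = i.succ := le_antisymm hj2 (Fin.castSucc_lt_iff_succ_le.mp hj1)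
      simp only [hfdef, if_pos hrX]
      rw [← hjeq, hj]
  exact ⟨fun X => ⟨f X, hmem X⟩, fun X Y => ⟨hforward X Y, hback X Y⟩⟩

end Key

end Stmt14Aux

/-- every countable pseudotree embeds into `T_ℚ`. -/
theorem stmt14 {T : Type*} [PartialOrder T] [Countable T] (hT : PseudotreeOrd T) :
    ∃ π : T → ↥TQ, Function.Injective π ∧
      ∀ a b : T, a ≤ b ↔ TQle (π a).1 (π b).1 := by
  rcases isEmpty_or_nonempty T with h | h
  · exact ⟨fun t => isEmptyElim t, fun a => isEmptyElim a, fun a => isEmptyElim a⟩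
  · obtain ⟨π, hπ⟩ := Stmt14Aux.key hT
    set pi0 : T → ↥TQ := fun t => π ⟨Set.Iic t, Stmt14Aux.Iic_mem_Fam t⟩ with hpi0def
    have hIff : ∀ a b : T, a ≤ b ↔ TQle (pi0 a).1 (pi0 b).1 := by
      intro a b
      exact Iff.trans Set.Iic_subset_Iic.symm
        (hπ ⟨Set.Iic a, Stmt14Aux.Iic_mem_Fam a⟩ ⟨Set.Iic b, Stmt14Aux.Iic_mem_Fam b⟩)
    refine ⟨pi0, ?_, hIff⟩
    intro a b hab
    have h1 : a ≤ b := (hIff a b).mpr (by rw [hab]; exact fun q m h => h)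
    have h2 : b ≤ a := (hIff b a).mpr (by rw [hab]; exact fun q m h => h)
    exact le_antisymm h1 h2
end

section
/- Let S be a sequential tree in a model N (of ZF− with standard ω) with internal rank function ρ_S satisfying ρ_S(t) = sup_{s<t}(ρ_S(s)+1). If p ∈ S has internally limit, externally ill-founded rank, then p has infinitely many immediate successors in S, and among the immediate successors q of p there are at least two incomparable nodes whose ranks ρ_S(q) are ill-founded. -/
open FirstOrder FirstOrder.Language

/-- The language of set theory: one binary relation symbol. -/
def ZFLang : FirstOrder.Language :=
  ⟨fun _ => Empty, fun n => match n with | 2 => Unit | _ => Empty⟩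

def memRel : ZFLang.Relations 2 := ()

/-- The membership structure on a class of ZF-sets. -/
noncomputable instance zfStr (M : Set ZFSet) : ZFLang.Structure ↥M where
  funMap {n} f _ := f.elim
  RelMap {n} r v :=
    match n, r, v with
    | 2, _, v => ((v 0 : ↥M) : ZFSet) ∈ ((v 1 : ↥M) : ZFSet)
    | 0, r, _ => r.elim
    | 1, r, _ => r.elim
    | (_+3), r, _ => r.elim

/-- The formula `x ∈ y`. -/
def mem' {n : ℕ} (x y : Fin n) : ZFLang.BoundedFormula Empty n :=
  Relations.boundedFormula₂ memRel (Term.var (Sum.inr x)) (Term.var (Sum.inr y))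

/-- The formula `x = y`. -/
def eq' {n : ℕ} (x y : Fin n) : ZFLang.BoundedFormula Empty n :=
  Term.bdEqual (Term.var (Sum.inr x)) (Term.var (Sum.inr y))

def extAx : ZFLang.Sentence :=
  ∀' ∀' ((∀' (mem' 2 0 ⇔ mem' 2 1)) ⟹ eq' 0 1)

def pairAx : ZFLang.Sentence :=
  ∀' ∀' ∃' ∀' (mem' 3 2 ⇔ (eq' 3 0 ⊔ eq' 3 1))

def unionAx : ZFLang.Sentence :=
  ∀' ∃' ∀' (mem' 2 1 ⇔ ∃' (mem' 3 0 ⊓ mem' 2 3))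

def powerAx : ZFLang.Sentence :=
  ∀' ∃' ∀' (mem' 2 1 ⇔ ∀' (mem' 3 2 ⟹ mem' 3 0))

def infAx : ZFLang.Sentence :=
  ∃' ((∃' (mem' 1 0 ⊓ ∀' (∼(mem' 2 1)))) ⊓
    (∀' (mem' 1 0 ⟹ ∃' (mem' 2 0 ⊓ ∀' (mem' 3 2 ⇔ (mem' 3 1 ⊔ eq' 3 1))))))

def foundAx : ZFLang.Sentence :=
  ∀' ((∃' (mem' 1 0)) ⟹ ∃' (mem' 1 0 ⊓ ∀' (mem' 2 1 ⟹ ∼(mem' 2 0))))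

/-- The separation axiom for a formula with `k` parameters. -/
def sepAx {k : ℕ} (φ : ZFLang.BoundedFormula Empty (k + 1)) : ZFLang.Sentence :=
  (mem' ⟨k+2, by omega⟩ ⟨k+1, by omega⟩ ⇔
      (mem' ⟨k+2, by omega⟩ ⟨k, by omega⟩ ⊓ φ.liftAt 2 k)).all.ex.all.alls

/-- The collection axiom for a formula with `k` parameters. -/
def collAx {k : ℕ} (φ : ZFLang.BoundedFormula Empty (k + 2)) : ZFLang.Sentence :=
  (mem' ⟨k+2, by omega⟩ ⟨k, by omega⟩ ⟹
      ((φ.liftAt 2 k).ex ⟹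
        ((mem' ⟨k+3, by omega⟩ ⟨k+1, by omega⟩ ⊓ φ.liftAt 2 k).ex))).all.ex.all.alls

def choiceAx : ZFLang.Sentence :=
  (((∀' ((mem' 1 0) ⟹ (∃' (mem' 2 1)))) ⊓
    (∀' ∀' ((((mem' 1 0) ⊓ (mem' 2 0)) ⊓ (∼(eq' 1 2))) ⟹ (∀' (∼((mem' 3 1) ⊓ (mem' 3 2)))))))
   ⟹
   (∃' ∀' ((mem' 2 0) ⟹
      (∃' (((mem' 3 2) ⊓ (mem' 3 1)) ⊓
        (∀' (((mem' 4 2) ⊓ (mem' 4 1)) ⟹ (eq' 4 3)))))))).all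

/-- The ZFC axioms: extensionality, pairing, union, powerset, infinity, foundation, choice,
separation, and collection. -/
def ZFCTheory : ZFLang.Theory :=
  {extAx, pairAx, unionAx, powerAx, infAx, foundAx, choiceAx} ∪
    (⋃ (k : ℕ), Set.range (@sepAx k)) ∪ (⋃ (k : ℕ), Set.range (@collAx k))

/-- A class of ZF-sets is transitive. -/
def SetTransitive (M : Set ZFSet) : Prop := ∀ x ∈ M, ∀ y : ZFSet, y ∈ x → y ∈ M

/-- A transitive model of ZFC. -/
def IsZFCModel (M : Set ZFSet) : Prop := SetTransitive M ∧ ZFCTheory.Model ↥M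

/-- Two classes have the same ordinals. -/
def SameOrdinals (M N : Set ZFSet) : Prop :=
  ∀ x : ZFSet, x.IsOrdinal → (x ∈ M ↔ x ∈ N)

/-- `z` is the pointwise image `j[x]` of `x` under `j`. -/
def ImageSet (M N : Set ZFSet) (j : ↥M → ↥N) (x z : ZFSet) : Prop :=
  ∀ w : ZFSet, w ∈ z ↔ ∃ y : ↥M, (y : ZFSet) ∈ x ∧ ((j y : ↥N) : ZFSet) = w

/-- `j : M → N` is amenable: every pointwise image `j[x]`, `x ∈ M`, belongs to `N`. -/
def Amenable (M N : Set ZFSet) (j : ↥M → ↥N) : Prop :=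
  ∀ x ∈ M, ∃ z ∈ N, ImageSet M N j x z

/-- `κ` is the critical point of `j`: the least ordinal moved. -/
def IsCrit (M N : Set ZFSet) (j : ↥M → ↥N) (κ : ZFSet) : Prop :=
  κ.IsOrdinal ∧ ∃ h : κ ∈ M, ((j ⟨κ, h⟩ : ↥N) : ZFSet) ≠ κ ∧
    ∀ β : ZFSet, β ∈ κ → ∀ hb : β ∈ M, ((j ⟨β, hb⟩ : ↥N) : ZFSet) = β

/-- `f` is a cofinal map from `β` into the ordinal `α`. -/
def CofinalIn (β α f : ZFSet) : Prop :=
  ∀ γ, γ ∈ α → ∃ ξ, ξ ∈ β ∧ ∃ η, ξ.pair η ∈ f ∧ (γ ∈ η ∨ γ = η)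

/-- `α` is a regular ordinal from the point of view of the class `M`. -/
def RegularIn (M : Set ZFSet) (α : ZFSet) : Prop :=
  ∀ β, β ∈ α → ∀ f, f ∈ M → ZFSet.IsFunc β α f → ¬ CofinalIn β α f

/-- The theory ZF minus Powerset (extensionality, pairing, union, infinity, foundation,
separation, collection). -/
def ZFminusP : ZFLang.Theory :=
  {extAx, pairAx, unionAx, infAx, foundAx} ∪
    (⋃ (k : ℕ), Set.range (@sepAx k)) ∪ (⋃ (k : ℕ), Set.range (@collAx k))

section IllFounded
variable {W : Type*} [ZFLang.Structure W]

/-- The membership relation of a model of set theory. -/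
def E (x y : W) : Prop := Structure.RelMap memRel ![x, y]

/-- `x` is an ordinal of the model: transitive and linearly ordered by `E`. -/
def IsOrdW (x : W) : Prop :=
  (∀ y : W, E y x → ∀ z : W, E z y → E z x) ∧
    ∀ y z : W, E y x → E z x → (E y z ∨ y = z ∨ E z y)

/-- The predecessors of `α` are (externally) well-founded. -/
def WfBelow (α : W) : Prop := {y : W | E y α}.WellFoundedOn (fun a b : W => E a b)

/-- `n` is an internal natural number. -/
def IsNatW (n : W) : Prop :=
  IsOrdW n ∧ ∀ m : W, (E m n ∨ m = n) →
    ((¬ ∃ p : W, E p m) ∨ ∃ p : W, E p m ∧ ∀ q : W, E q m ↔ (E q p ∨ q = p))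

/-- The model has standard `ω`: internal naturals have finitely many predecessors. -/
def StdOmega (W : Type*) [ZFLang.Structure W] : Prop :=
  ∀ n : W, IsNatW n → {y : W | E y n}.Finite

/-- `i` is the purely ill-founded part `i(α)` of the Cantor normal form decomposition
`α = i(α) + w(α)`: the interval `[i, α)` is externally well-founded (so `w(α)` is in the
well-founded part), while every proper final segment of `i` is ill-founded (so `i` has no
Cantor normal form term with exponent in the well-founded part). -/
def SplitsAt (α i : W) : Prop :=
  IsOrdW i ∧ (E i α ∨ i = α) ∧
    ({y : W | (E i y ∨ i = y) ∧ E y α}.WellFoundedOn (fun a b : W => E a b)) ∧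
    ((¬ ∃ y : W, E y i) ∨
      ∀ β : W, E β i →
        ¬ ({y : W | (E β y ∨ β = y) ∧ E y i}.WellFoundedOn (fun a b : W => E a b)))

end IllFounded

/-- Auxiliary: a finite nonempty set that is linearly preordered by a transitive
relation has a maximal element. -/
lemma exists_max_of_finite {α : Type*} (r : α → α → Prop)
    (htr : ∀ a b c, r a b → r b c → r a c) (A : Set α) (hA : A.Finite) :
    A.Nonempty → (∀ a ∈ A, ∀ b ∈ A, r a b ∨ a = b ∨ r b a) →
    ∃ b ∈ A, ∀ a ∈ A, r a b ∨ a = b := by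
  refine Set.Finite.induction_on
    (motive := fun A _ => A.Nonempty → (∀ a ∈ A, ∀ b ∈ A, r a b ∨ a = b ∨ r b a) →
      ∃ b ∈ A, ∀ a ∈ A, r a b ∨ a = b) A hA ?_ ?_
  · rintro ⟨x, hx⟩; exact absurd hx (Set.notMem_empty x)
  · rintro x s hxs hs ih - htri
    by_cases hne : s.Nonempty
    · obtain ⟨b, hb, hmax⟩ := ih hne (fun a ha b hb => htri a (Set.mem_insert_of_mem _ ha)
        b (Set.mem_insert_of_mem _ hb))
      rcases htri x (Set.mem_insert _ _) b (Set.mem_insert_of_mem _ hb) with h | h | h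
      · refine ⟨b, Set.mem_insert_of_mem _ hb, ?_⟩
        rintro a (rfl | ha)
        · exact Or.inl h
        · exact hmax a ha
      · refine ⟨b, Set.mem_insert_of_mem _ hb, ?_⟩
        rintro a (rfl | ha)
        · exact Or.inr h
        · exact hmax a ha
      · refine ⟨x, Set.mem_insert _ _, ?_⟩
        rintro a (rfl | ha)
        · exact Or.inr rfl
        · rcases hmax a ha with h' | rfl
          · exact Or.inl (htr a b x h' h)
          · exact Or.inl h
    · refine ⟨x, Set.mem_insert _ _, ?_⟩
      rintro a (rfl | ha)
      · exact Or.inr rfl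
      · exact absurd ⟨a, ha⟩ hne
/-- in a model `N` of ZF⁻ with standard `ω` whose ill-founded ordinals
have no least element, if `S` is a sequential tree of `N` with internal rank function
`ρ` satisfying `ρ(t) = sup_{s<t}(ρ(s)+1)`, and `p ∈ S` has internally-limit, externally
ill-founded rank, then `p` has infinitely many immediate successors, among which are two
incomparable nodes of ill-founded rank. -/
theorem stmt16 (W : Type*) [ZFLang.Structure W] [ZFminusP.Model W]
    (hstd : StdOmega W)
    (hnoleast : ∀ α : W, IsOrdW α → ¬ WfBelow α → ∃ β : W, E β α ∧ ¬ WfBelow β)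
    (S : Set (List ℕ)) (hpre : ∀ l ∈ S, ∀ l' : List ℕ, l' <+: l → l' ∈ S)
    (ρ : List ℕ → W) (hρord : ∀ l ∈ S, IsOrdW (ρ l))
    (hrank₁ : ∀ t ∈ S, ∀ s ∈ S, t <+: s → t ≠ s → E (ρ s) (ρ t))
    (hrank₂ : ∀ t ∈ S, ∀ γ : W, E γ (ρ t) →
      ∃ s ∈ S, t <+: s ∧ t ≠ s ∧ (E γ (ρ s) ∨ γ = ρ s))
    (p : List ℕ) (hp : p ∈ S)
    (hlim₁ : ∃ y : W, E y (ρ p))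
    (hlim₂ : ∀ β : W, E β (ρ p) → ∃ γ : W, E β γ ∧ E γ (ρ p))
    (hillp : ¬ WfBelow (ρ p)) :
    {m : ℕ | p ++ [m] ∈ S}.Infinite ∧
      ∃ m₁ m₂ : ℕ, m₁ ≠ m₂ ∧ p ++ [m₁] ∈ S ∧ p ++ [m₂] ∈ S ∧
        ¬ WfBelow (ρ (p ++ [m₁])) ∧ ¬ WfBelow (ρ (p ++ [m₂])) := by
  classical
  -- pairing in the model
  have pair : ∀ a b : W, ∃ c : W, ∀ z : W, E z c ↔ z = a ∨ z = b := by
    have h := ZFminusP.realize_sentence_of_mem (M := W) (φ := pairAx)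
      (by left; left; simp)
    unfold pairAx at h
    simp only [Sentence.Realize, Formula.Realize] at h
    simp [mem', eq', Fin.snoc, show ((3:Fin 4):ℕ) = 3 from rfl,
      show ((2:Fin 3):ℕ) = 2 from rfl, show ((1:Fin 2):ℕ) = 1 from rfl,
      show ((0:Fin 1):ℕ) = 0 from rfl] at h
    exact fun a b => h a b
  -- foundation in the model
  have found : ∀ x : W, (∃ y : W, E y x) → ∃ y : W, E y x ∧ ∀ z : W, E z y → ¬ E z x := by
    have h := ZFminusP.realize_sentence_of_mem (M := W) (φ := foundAx)
      (by left; left; simp)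
    unfold foundAx at h
    simp only [Sentence.Realize, Formula.Realize] at h
    simp [mem', eq', Fin.snoc, show ((2:Fin 3):ℕ) = 2 from rfl,
      show ((1:Fin 2):ℕ) = 1 from rfl, show ((0:Fin 1):ℕ) = 0 from rfl] at h
    exact fun x hx => hx.elim fun y hy => h x y hy
  have irrefl : ∀ a : W, ¬ E a a := by
    intro a ha
    obtain ⟨c, hc⟩ := pair a a
    obtain ⟨y, hyc, hmin⟩ := found c ⟨a, (hc a).2 (Or.inl rfl)⟩
    rcases (hc y).1 hyc with h | h <;> subst h <;>
      exact hmin y ha ((hc y).2 (Or.inl rfl))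
  -- transitivity through an ordinal
  have htrans : ∀ c : W, IsOrdW c → ∀ a b : W, E a b → E b c → E a c :=
    fun c hc a b h1 h2 => hc.1 b h2 a h1
  have hle_trans : ∀ c : W, IsOrdW c → ∀ a b : W, E a b → (E b c ∨ b = c) → E a c := by
    rintro c hc a b h1 (h2 | rfl)
    · exact htrans c hc a b h1 h2
    · exact h1
  -- every immediate successor has rank below ρ p
  have hplt : ∀ m : ℕ, p ≠ p ++ [m] := by intro m h; simpa using congrArg List.length h
  have mem_succ : ∀ m : ℕ, p ++ [m] ∈ S → E (ρ (p ++ [m])) (ρ p) :=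
    fun m hm => hrank₁ p hp _ hm ⟨[m], rfl⟩ (hplt m)
  -- cofinality of the successor ranks
  have cofinal : ∀ γ : W, E γ (ρ p) → ∃ m : ℕ, p ++ [m] ∈ S ∧
      (E γ (ρ (p ++ [m])) ∨ γ = ρ (p ++ [m])) := by
    intro γ hγ
    obtain ⟨s, hs, hps, hne, hle⟩ := hrank₂ p hp γ hγ
    obtain ⟨t, rfl⟩ := hps
    match t with
    | [] => exact absurd (by simp) hne
    | m :: t' =>
      have hm : p ++ [m] ∈ S := hpre _ hs _ ⟨t', by simp⟩
      refine ⟨m, hm, ?_⟩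
      rcases eq_or_ne t' [] with rfl | ht'
      · exact hle
      · have hne2 : p ++ [m] ≠ p ++ m :: t' := by
          intro h; apply ht'
          have := congrArg List.length h; simp at this
          exact this
        have hlt : E (ρ (p ++ m :: t')) (ρ (p ++ [m])) :=
          hrank₁ _ hm _ hs ⟨t', by simp⟩ hne2
        left
        rcases hle with h | rfl
        · exact htrans _ (hρord _ hm) _ _ h hlt
        · exact hlt
  -- ill-foundedness transfers upwards
  have illmono : ∀ a b : W, IsOrdW b → (E a b ∨ a = b) → ¬ WfBelow a → ¬ WfBelow b := by
    rintro a b hb (hab | rfl) hilla hwfb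
    · exact hilla (hwfb.subset fun y hy => htrans b hb y a hy hab)
    · exact hilla hwfb
  -- Part 1: infinitely many immediate successors
  have hinf : {m : ℕ | p ++ [m] ∈ S}.Infinite := by
    intro hfin
    set A : Set W := (fun m => ρ (p ++ [m])) '' {m | p ++ [m] ∈ S} with hAdef
    have hAfin : A.Finite := hfin.image _
    have hAne : A.Nonempty := by
      obtain ⟨y, hy⟩ := hlim₁
      obtain ⟨m, hm, _⟩ := cofinal y hy
      exact ⟨_, ⟨m, hm, rfl⟩⟩
    have hAord : ∀ a ∈ A, IsOrdW a ∧ E a (ρ p) := by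
      rintro a ⟨m, hm, rfl⟩
      exact ⟨hρord _ hm, mem_succ m hm⟩
    have htri : ∀ a ∈ A, ∀ b ∈ A, (E a b ∧ IsOrdW b) ∨ a = b ∨ (E b a ∧ IsOrdW a) := by
      intro a ha b hb
      rcases (hρord p hp).2 a b (hAord a ha).2 (hAord b hb).2 with h | h | h
      · exact Or.inl ⟨h, (hAord b hb).1⟩
      · exact Or.inr (Or.inl h)
      · exact Or.inr (Or.inr ⟨h, (hAord a ha).1⟩)
    obtain ⟨b, hbA, hmax⟩ := exists_max_of_finite (fun a b => E a b ∧ IsOrdW b)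
      (fun a b c h1 h2 => ⟨htrans c h2.2 a b h1.1 h2.1, h2.2⟩) A hAfin hAne htri
    have hbord := (hAord b hbA).1
    obtain ⟨γ, hbγ, hγρ⟩ := hlim₂ b (hAord b hbA).2
    obtain ⟨m, hm, hγm⟩ := cofinal γ hγρ
    have hbm : E b (ρ (p ++ [m])) := hle_trans _ (hρord _ hm) b γ hbγ hγm
    have hmA : ρ (p ++ [m]) ∈ A := ⟨m, hm, rfl⟩
    rcases hmax _ hmA with ⟨h, _⟩ | h
    · exact irrefl b (htrans b hbord b _ hbm h)
    · rw [h] at hbm; exact irrefl b hbm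
  -- Part 2: two distinct successors of ill-founded rank
  obtain ⟨β₁, hβ₁, hill₁⟩ := hnoleast (ρ p) (hρord p hp) hillp
  obtain ⟨m₁, hm₁, hle₁⟩ := cofinal β₁ hβ₁
  have hill_m₁ : ¬ WfBelow (ρ (p ++ [m₁])) := illmono β₁ _ (hρord _ hm₁) hle₁ hill₁
  obtain ⟨γ, h1γ, hγρ⟩ := hlim₂ (ρ (p ++ [m₁])) (mem_succ m₁ hm₁)
  obtain ⟨m₂, hm₂, hγm₂⟩ := cofinal γ hγρ
  have h12 : E (ρ (p ++ [m₁])) (ρ (p ++ [m₂])) := hle_trans _ (hρord _ hm₂) _ γ h1γ hγm₂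
  have hne12 : m₁ ≠ m₂ := by rintro rfl; exact irrefl _ h12
  exact ⟨hinf, m₁, m₂, hne12, hm₁, hm₂, hill_m₁,
    illmono _ _ (hρord _ hm₂) (Or.inl h12) hill_m₁⟩
end

section
/- Rowbottom-style partition theorem for supercompactness measures: if U is a normal fine κ-complete ultrafilter on P_κ(λ) and F : [P_κ(λ)]^{<ω} → 2, then there exist A ∈ U and r ∈ 2^ω such that for every n and every sequence x_0 ⊆ x_1 ⊆ … ⊆ x_{n-1} of elements of A with |x_i| < x_{i+1} ∩ κ ∈ κ for each i, we have F({x_0, …, x_{n-1}}) = r(n). -/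
/-- `P_κ(λ)`: the collection of subsets of (the ordinals below) `λ` of size `< κ`. -/
def Pkl (κ lam : Cardinal.{0}) : Set (Set Ordinal.{0}) :=
  {x | x ⊆ Set.Iio lam.ord ∧ Cardinal.mk ↥x < Cardinal.lift.{1,0} κ}

namespace S19

open Cardinal Set

def Hcomp (κ lam : Cardinal.{0}) (U : Ultrafilter ↥(Pkl κ lam)) : Prop :=
  ∀ I : Set (Set ↥(Pkl κ lam)), Cardinal.mk ↥I < Cardinal.lift.{1,0} κ →
      (∀ s ∈ I, s ∈ U) → ⋂₀ I ∈ U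

def Hfine (κ lam : Cardinal.{0}) (U : Ultrafilter ↥(Pkl κ lam)) : Prop :=
  ∀ a : Ordinal, a < lam.ord → {x : ↥(Pkl κ lam) | a ∈ x.1} ∈ U

def Hnorm (κ lam : Cardinal.{0}) (U : Ultrafilter ↥(Pkl κ lam)) : Prop :=
  ∀ Fm : Ordinal → Set ↥(Pkl κ lam), (∀ a, a < lam.ord → Fm a ∈ U) →
      {x : ↥(Pkl κ lam) | ∀ a ∈ x.1, x ∈ Fm a} ∈ U

/-- Fodor / pressing-down from normality. -/
theorem fodor {κ lam : Cardinal.{0}} {U : Ultrafilter ↥(Pkl κ lam)}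
    (hnorm : Hnorm κ lam U) {S : Set ↥(Pkl κ lam)} (hS : S ∈ U)
    (g : ↥(Pkl κ lam) → Ordinal.{0}) (hg : ∀ y ∈ S, g y ∈ y.1) :
    ∃ a, {y | y ∈ S ∧ g y = a} ∈ U := by
  by_contra h
  push_neg at h
  have h1 : ∀ a : Ordinal, {y : ↥(Pkl κ lam) | ¬ (y ∈ S ∧ g y = a)} ∈ U := by
    intro a
    have := (Ultrafilter.compl_mem_iff_notMem (f := U)
      (s := {y | y ∈ S ∧ g y = a})).2 (h a)
    simpa [Set.compl_setOf] using this
  have hN := hnorm (fun a => {y | ¬ (y ∈ S ∧ g y = a)}) (fun a _ => h1 a)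
  have hmem : {x : ↥(Pkl κ lam) | ∀ a ∈ x.1, ¬ (x ∈ S ∧ g x = a)} ∩ S ∈ U :=
    Filter.inter_mem hN hS
  obtain ⟨y, hy1, hy2⟩ := U.nonempty_of_mem hmem
  exact hy1 (g y) (hg y hy2) ⟨hy2, rfl⟩

theorem aleph0_lt {κ lam : Cardinal.{0}} (hκ : κ.IsRegular) (hκlam : κ ≤ lam)
    {U : Ultrafilter ↥(Pkl κ lam)} (hfine : Hfine κ lam U) (hnorm : Hnorm κ lam U) :
    ℵ₀ < κ := by
  rcases lt_or_eq_of_le hκ.aleph0_le with h | h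
  · exact h
  exfalso
  have hlim : Order.IsSuccLimit lam.ord := Cardinal.isSuccLimit_ord (hκ.aleph0_le.trans hκlam)
  set Fm : Ordinal → Set ↥(Pkl κ lam) := fun a =>
    if a + 1 < lam.ord then {y | a + 1 ∈ y.1} else Set.univ with hFm
  have hN := hnorm Fm (by
    intro a ha
    have h1 : a + 1 < lam.ord := by
      rw [Ordinal.add_one_eq_succ]
      exact hlim.succ_lt ha
    rw [hFm]; simp only [if_pos h1]
    exact hfine _ h1)
  have h0 : (0 : Ordinal) < lam.ord := hlim.pos
  have hZ := Filter.inter_mem hN (hfine 0 h0)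
  obtain ⟨y, hy1, hy2⟩ := U.nonempty_of_mem hZ
  have key : ∀ n : ℕ, ((n : Ordinal)) ∈ y.1 := by
    intro n
    induction n with
    | zero => exact_mod_cast hy2
    | succ n ih =>
      have halam : (n : Ordinal) < lam.ord := y.2.1 ih
      have h1 : (n : Ordinal) + 1 < lam.ord := by
        rw [Ordinal.add_one_eq_succ]; exact hlim.succ_lt halam
      have := hy1 (n : Ordinal) ih
      rw [hFm] at this; simp only [if_pos h1] at this
      push_cast
      exact this
  have hinf : Infinite ↥(y.1) := by
    refine Infinite.of_injective (fun n : ℕ => (⟨(n : Ordinal), key n⟩ : ↥(y.1))) ?_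
    intro a b hab
    have : ((a : ℕ) : Ordinal) = ((b : ℕ) : Ordinal) := congrArg Subtype.val hab
    exact_mod_cast this
  have h1 : ℵ₀ ≤ Cardinal.mk ↥(y.1) := Cardinal.aleph0_le_mk ↥(y.1)
  have h2 : Cardinal.mk ↥(y.1) < Cardinal.lift.{1,0} κ := y.2.2
  have h3 : Cardinal.mk ↥(y.1) < ℵ₀ := by
    calc Cardinal.mk ↥(y.1) < Cardinal.lift.{1,0} κ := h2
    _ = ℵ₀ := by rw [← h, Cardinal.lift_aleph0]
  exact absurd (h1.trans_lt h3) (lt_irrefl _)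

/-- the set of `y` whose intersection with `κ` is an initial segment is large -/
theorem good_mem {κ lam : Cardinal.{0}} (hκlam : κ ≤ lam)
    {U : Ultrafilter ↥(Pkl κ lam)} (hcomp : Hcomp κ lam U) (hfine : Hfine κ lam U)
    (hnorm : Hnorm κ lam U) :
    {y : ↥(Pkl κ lam) | ∃ β : Ordinal, β < κ.ord ∧
      y.1 ∩ Set.Iio κ.ord = Set.Iio β} ∈ U := by
  have hordle : κ.ord ≤ lam.ord := Cardinal.ord_le_ord.2 hκlam
  set Fm : Ordinal → Set ↥(Pkl κ lam) := fun b =>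
    if b < κ.ord then {y | ∀ a < b, a ∈ y.1} else Set.univ with hFm
  have hFmU : ∀ b, b < lam.ord → Fm b ∈ U := by
    intro b _
    rw [hFm]
    by_cases hb : b < κ.ord
    · simp only [if_pos hb]
      have hI : {y : ↥(Pkl κ lam) | ∀ a < b, a ∈ y.1} =
          ⋂₀ ((fun a : Ordinal => {y : ↥(Pkl κ lam) | a ∈ y.1}) '' (Set.Iio b)) := by
        ext y
        simp only [Set.mem_sInter, Set.mem_image, Set.mem_Iio, Set.mem_setOf_eq]
        constructor
        · rintro h S ⟨a, ha, rfl⟩; exact h a ha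
        · intro h a ha; exact h _ ⟨a, ha, rfl⟩
      rw [hI]
      refine hcomp _ ?_ ?_
      · calc Cardinal.mk ↥((fun a : Ordinal => {y : ↥(Pkl κ lam) | a ∈ y.1}) '' (Set.Iio b))
            ≤ Cardinal.mk ↥(Set.Iio b) := Cardinal.mk_image_le
        _ = Cardinal.lift.{1,0} b.card := Ordinal.mk_Iio_ordinal b
        _ < Cardinal.lift.{1,0} κ := by
            exact Cardinal.lift_lt.2 (Cardinal.lt_ord.1 hb)
      · rintro S ⟨a, ha, rfl⟩
        exact hfine a (lt_of_lt_of_le (ha.trans hb) hordle)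
    · simp only [if_neg hb]; exact Filter.univ_mem
  have hN := hnorm Fm hFmU
  refine Filter.mem_of_superset hN ?_
  intro y hy
  simp only [Set.mem_setOf_eq] at hy ⊢
  -- downward closedness
  set s : Set Ordinal := y.1 ∩ Set.Iio κ.ord with hs
  have hdc : ∀ b ∈ s, ∀ a < b, a ∈ s := by
    rintro b ⟨hby, hbκ⟩ a hab
    have hbκ' : b < κ.ord := hbκ
    have h2 := hy b hby
    simp only [hFm, if_pos hbκ', Set.mem_setOf_eq] at h2
    exact ⟨h2 a hab, lt_trans hab hbκ'⟩
  have hne : {γ : Ordinal | γ ∉ s}.Nonempty := ⟨κ.ord, fun hx => lt_irrefl κ.ord (Set.mem_Iio.1 hx.2)⟩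
  set β := sInf {γ : Ordinal | γ ∉ s} with hβ
  have hβnot : β ∉ s := csInf_mem hne
  have hseq : s = Set.Iio β := by
    ext a
    simp only [Set.mem_Iio]
    constructor
    · intro ha
      by_contra hcon
      have hle : β ≤ a := not_lt.1 hcon
      rcases lt_or_eq_of_le hle with h' | h'
      · exact hβnot (hdc a ha β h')
      · rw [h'] at hβnot; exact hβnot ha
    · intro ha
      by_contra hcon
      have : β ≤ a := csInf_le (OrderBot.bddBelow _) hcon
      exact absurd this (not_le.2 ha)
  have hβle : β ≤ κ.ord := csInf_le (OrderBot.bddBelow _)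
    (fun hx => lt_irrefl κ.ord (Set.mem_Iio.1 hx.2))
  have hβlt : β < κ.ord := by
    rcases lt_or_eq_of_le hβle with h' | h'
    · exact h'
    exfalso
    have h1 : Cardinal.mk ↥s = Cardinal.lift.{1,0} κ := by
      rw [hseq, h']
      rw [Ordinal.mk_Iio_ordinal, Cardinal.card_ord]
    have h2 : Cardinal.mk ↥s ≤ Cardinal.mk ↥(y.1) :=
      Cardinal.mk_le_mk_of_subset (Set.inter_subset_left)
    have := h2.trans_lt y.2.2
    rw [h1] at this
    exact absurd this (lt_irrefl _)
  exact ⟨β, hβlt, hseq⟩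

noncomputable def otype (s : Set Ordinal.{0}) : Ordinal.{1} :=
  Ordinal.type ((·<·) : s → s → Prop)

theorem card_otype (s : Set Ordinal.{0}) : (otype s).card = Cardinal.mk ↥s :=
  Ordinal.card_type _

/-- the `i`-th element of a set of ordinals (junk value `0` if out of range) -/
noncomputable def elt (s : Set Ordinal.{0}) (i : Ordinal.{0}) : Ordinal.{0} :=
  if h : Ordinal.lift.{1,0} i < otype s then
    ((Ordinal.enum ((·<·) : s → s → Prop) ⟨_, h⟩ : s) : Ordinal.{0}) else 0

theorem elt_mem {s : Set Ordinal.{0}} {i : Ordinal.{0}}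
    (h : Ordinal.lift.{1,0} i < otype s) : elt s i ∈ s := by
  rw [elt, dif_pos h]
  exact (Ordinal.enum ((·<·) : s → s → Prop) ⟨_, h⟩ : s).2

theorem mem_iff_elt {s : Set Ordinal.{0}} {δ : Ordinal.{0}}
    (hot : otype s = Ordinal.lift.{1,0} δ) (a : Ordinal.{0}) :
    a ∈ s ↔ ∃ i : Ordinal.{0}, i < δ ∧ elt s i = a := by
  constructor
  · intro ha
    set o : Ordinal.{1} := (Ordinal.typein ((·<·) : s → s → Prop)).toRelEmbedding ⟨a, ha⟩
      with ho
    have holt : o < otype s := Ordinal.typein_lt_type _ _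
    rw [hot] at holt
    obtain ⟨i, hi, hlift⟩ := Ordinal.lt_lift_iff.1 holt
    refine ⟨i, hi, ?_⟩
    have hlt : Ordinal.lift.{1,0} i < otype s := by rw [hot]; exact Ordinal.lift_lt.2 hi
    rw [elt, dif_pos hlt]
    have : (⟨Ordinal.lift.{1,0} i, hlt⟩ : Iio (Ordinal.type ((·<·) : s → s → Prop))) =
        ⟨o, show o < otype s from hot ▸ holt⟩ :=
      Subtype.ext hlift
    rw [this]
    have := Ordinal.enum_typein ((·<·) : s → s → Prop) (⟨a, ha⟩ : s)
    rw [show (⟨o, show o < otype s from hot ▸ holt⟩ : Iio (Ordinal.type ((·<·) : s → s → Prop))) =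
      ⟨(Ordinal.typein ((·<·) : s → s → Prop)).toRelEmbedding ⟨a, ha⟩,
        Ordinal.typein_lt_type _ _⟩ from Subtype.ext ho]
    rw [this]
  · rintro ⟨i, hi, rfl⟩
    have hlt : Ordinal.lift.{1,0} i < otype s := by rw [hot]; exact Ordinal.lift_lt.2 hi
    exact elt_mem hlt

theorem otype_lt {s : Set Ordinal.{0}} {β : Ordinal.{0}}
    (h : Cardinal.mk ↥s < Cardinal.lift.{1,0} β.card) :
    otype s < Ordinal.lift.{1,0} β := by
  by_contra hcon
  have hle : Ordinal.lift.{1,0} β ≤ otype s := not_lt.1 hcon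
  have h2 := Ordinal.card_le_card hle
  rw [card_otype s] at h2
  rw [← Ordinal.lift_card] at h2
  exact absurd (h2.trans_lt h) (lt_irrefl _)

/-- set-valued Fodor -/
theorem svFodor {κ lam : Cardinal.{0}} {U : Ultrafilter ↥(Pkl κ lam)}
    (hcomp : Hcomp κ lam U) (hnorm : Hnorm κ lam U)
    {S : Set ↥(Pkl κ lam)} (hS : S ∈ U) (g : ↥(Pkl κ lam) → Set Ordinal.{0})
    (hg : ∀ y ∈ S, g y ⊆ y.1 ∧ ∃ β : Ordinal, β < κ.ord ∧
      y.1 ∩ Set.Iio κ.ord = Set.Iio β ∧ Cardinal.mk ↥(g y) < Cardinal.lift.{1,0} β.card) :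
    ∃ t : Set Ordinal.{0}, {y | y ∈ S ∧ g y = t} ∈ U := by
  classical
  -- the order type of `g y`, as a lifted ordinal
  set γf : ↥(Pkl κ lam) → Ordinal.{0} := fun y =>
    if h : ∃ γ : Ordinal.{0}, Ordinal.lift.{1,0} γ = otype (g y) then h.choose else 0
    with hγf
  have hγspec : ∀ y ∈ S, Ordinal.lift.{1,0} (γf y) = otype (g y) ∧
      ∃ β : Ordinal, β < κ.ord ∧ y.1 ∩ Set.Iio κ.ord = Set.Iio β ∧ γf y < β := by
    intro y hy
    obtain ⟨hsub, β, hβκ, hβeq, hβcard⟩ := hg y hy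
    have hlt : otype (g y) < Ordinal.lift.{1,0} β := otype_lt hβcard
    obtain ⟨γ, hγβ, hγe⟩ := Ordinal.lt_lift_iff.1 hlt
    have hex : ∃ γ : Ordinal.{0}, Ordinal.lift.{1,0} γ = otype (g y) := ⟨γ, hγe⟩
    have he : Ordinal.lift.{1,0} (γf y) = otype (g y) := by
      rw [hγf]; simp only [dif_pos hex]; exact hex.choose_spec
    refine ⟨he, β, hβκ, hβeq, ?_⟩
    have : Ordinal.lift.{1,0} (γf y) = Ordinal.lift.{1,0} γ := by rw [he, hγe]
    rw [Ordinal.lift_inj] at this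
    rw [this]; exact hγβ
  -- γf is regressive on S
  have hγreg : ∀ y ∈ S, γf y ∈ y.1 := by
    intro y hy
    obtain ⟨-, β, hβκ, hβeq, hγβ⟩ := hγspec y hy
    have : γf y ∈ y.1 ∩ Set.Iio κ.ord := by rw [hβeq]; exact hγβ
    exact this.1
  obtain ⟨δ, hδU⟩ := fodor hnorm hS γf hγreg
  set S1 : Set ↥(Pkl κ lam) := {y | y ∈ S ∧ γf y = δ} with hS1
  -- each coordinate is regressive on S1
  have hcoord : ∀ i : Ordinal.{0}, i < δ → ∀ y ∈ S1, elt (g y) i ∈ y.1 := by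
    rintro i hi y ⟨hyS, hyδ⟩
    obtain ⟨he, _⟩ := hγspec y hyS
    have hlt : Ordinal.lift.{1,0} i < otype (g y) := by
      rw [← he, Ordinal.lift_lt, hyδ]; exact hi
    exact (hg y hyS).1 (elt_mem hlt)
  have hc : ∀ i : Ordinal.{0}, i < δ → ∃ a, {y | y ∈ S1 ∧ elt (g y) i = a} ∈ U := by
    intro i hi
    exact fodor hnorm hδU (fun y => elt (g y) i) (hcoord i hi)
  set c : Ordinal.{0} → Ordinal.{0} := fun i =>
    if h : ∃ a, {y | y ∈ S1 ∧ elt (g y) i = a} ∈ U then h.choose else 0 with hcdef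
  have hcU : ∀ i : Ordinal.{0}, i < δ → {y | y ∈ S1 ∧ elt (g y) i = c i} ∈ U := by
    intro i hi
    have hex := hc i hi
    rw [hcdef]; simp only [dif_pos hex]; exact hex.choose_spec
  -- δ < κ.ord
  obtain ⟨y0, hy0S, hy0δ⟩ := U.nonempty_of_mem hδU
  have hδκ : δ < κ.ord := by
    obtain ⟨-, β, hβκ, -, hγβ⟩ := hγspec y0 hy0S
    rw [hy0δ] at hγβ; exact hγβ.trans hβκ
  -- intersect
  set I : Set (Set ↥(Pkl κ lam)) :=
    (fun i : Ordinal.{0} => {y | y ∈ S1 ∧ elt (g y) i = c i}) '' (Set.Iio δ) with hI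
  have hIU : ⋂₀ I ∈ U := by
    refine hcomp I ?_ ?_
    · calc Cardinal.mk ↥I ≤ Cardinal.mk ↥(Set.Iio δ) := Cardinal.mk_image_le
      _ = Cardinal.lift.{1,0} δ.card := Ordinal.mk_Iio_ordinal δ
      _ < Cardinal.lift.{1,0} κ := Cardinal.lift_lt.2 (Cardinal.lt_ord.1 hδκ)
    · rintro T ⟨i, hi, rfl⟩; exact hcU i hi
  refine ⟨{a | ∃ i : Ordinal.{0}, i < δ ∧ a = c i}, ?_⟩
  have hsub : ⋂₀ I ∩ S1 ⊆ {y | y ∈ S ∧ g y = {a | ∃ i, i < δ ∧ a = c i}} := by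
    rintro y ⟨hyI, hyS1⟩
    obtain ⟨hyS, hyδ⟩ := hyS1
    refine ⟨hyS, ?_⟩
    have hot : otype (g y) = Ordinal.lift.{1,0} δ := by
      rw [← (hγspec y hyS).1, hyδ]
    ext a
    rw [mem_iff_elt hot a]
    constructor
    · rintro ⟨i, hi, rfl⟩
      have := hyI _ (Set.mem_image_of_mem _ hi)
      exact ⟨i, hi, this.2⟩
    · rintro ⟨i, hi, rfl⟩
      have := hyI _ (Set.mem_image_of_mem _ hi)
      exact ⟨i, hi, this.2⟩
  exact Filter.mem_of_superset (Filter.inter_mem hIU hδU) hsub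


/-- the "suitable successor" relation -/
def suit (κ : Cardinal.{0}) (x y : Set Ordinal.{0}) : Prop :=
  x ⊆ y ∧ ∃ β : Ordinal, β < κ.ord ∧ y ∩ Set.Iio κ.ord = Set.Iio β ∧
    Cardinal.mk ↥x < Cardinal.lift.{1,0} β.card

/-- diagonal intersection over `P_κ(λ)` -/
theorem diag {κ lam : Cardinal.{0}} {U : Ultrafilter ↥(Pkl κ lam)}
    (hcomp : Hcomp κ lam U) (hnorm : Hnorm κ lam U)
    (A : ↥(Pkl κ lam) → Set ↥(Pkl κ lam)) (hA : ∀ x, A x ∈ U) :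
    {y : ↥(Pkl κ lam) | ∀ x : ↥(Pkl κ lam), suit κ x.1 y.1 → y ∈ A x} ∈ U := by
  classical
  by_contra hcon
  have hC : {y : ↥(Pkl κ lam) | ∃ x : ↥(Pkl κ lam), suit κ x.1 y.1 ∧ y ∉ A x} ∈ U := by
    have := (Ultrafilter.compl_mem_iff_notMem (f := U)
      (s := {y | ∀ x : ↥(Pkl κ lam), suit κ x.1 y.1 → y ∈ A x})).2 hcon
    have he : {y : ↥(Pkl κ lam) | ∀ x : ↥(Pkl κ lam), suit κ x.1 y.1 → y ∈ A x}ᶜ =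
        {y : ↥(Pkl κ lam) | ∃ x : ↥(Pkl κ lam), suit κ x.1 y.1 ∧ y ∉ A x} := by
      ext y; simp [Set.mem_compl_iff, not_forall]
    rwa [he] at this
  set w : ↥(Pkl κ lam) → ↥(Pkl κ lam) := fun y =>
    if h : ∃ x : ↥(Pkl κ lam), suit κ x.1 y.1 ∧ y ∉ A x then h.choose else y with hw
  have hwspec : ∀ y ∈ {y : ↥(Pkl κ lam) | ∃ x, suit κ x.1 y.1 ∧ y ∉ A x},
      suit κ (w y).1 y.1 ∧ y ∉ A (w y) := by
    intro y hy
    have : w y = hy.choose := by rw [hw]; exact dif_pos hy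
    rw [this]
    exact hy.choose_spec
  obtain ⟨t, htU⟩ := svFodor hcomp hnorm hC (fun y => (w y).1) (by
    intro y hy
    obtain ⟨⟨hsub, β, h1, h2, h3⟩, -⟩ := hwspec y hy
    exact ⟨hsub, β, h1, h2, h3⟩)
  obtain ⟨y0, hy0, hy0t⟩ := U.nonempty_of_mem htU
  have hfin : {y | y ∈ {y : ↥(Pkl κ lam) | ∃ x, suit κ x.1 y.1 ∧ y ∉ A x} ∧ (w y).1 = t}
      ∩ A (w y0) ∈ U := Filter.inter_mem htU (hA (w y0))
  obtain ⟨y1, ⟨hy1C, hy1t⟩, hy1A⟩ := U.nonempty_of_mem hfin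
  have : w y1 = w y0 := Subtype.ext (by rw [hy1t, hy0t])
  rw [← this] at hy1A
  exact (hwspec y1 hy1C).2 hy1A


theorem hom {κ lam : Cardinal.{0}} {U : Ultrafilter ↥(Pkl κ lam)}
    (hcomp : Hcomp κ lam U) (hnorm : Hnorm κ lam U) (n : ℕ) :
    ∀ F : Set (Set Ordinal.{0}) → Fin 2,
      ∃ A ∈ U, ∃ c : Fin 2, ∀ x : ℕ → ↥(Pkl κ lam),
        (∀ i < n, x i ∈ A) → (∀ i, i + 1 < n → suit κ (x i).1 (x (i+1)).1) →
        F {s | ∃ i < n, s = (x i).1} = c := by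
  induction n with
  | zero =>
    intro F
    refine ⟨Set.univ, Filter.univ_mem, F ∅, ?_⟩
    intro x _ _
    congr 1
    ext s; simp
  | succ n ih =>
    intro F
    choose AA hAAU cc hcc using fun z : ↥(Pkl κ lam) => ih (fun S => F (insert z.1 S))
    obtain ⟨cstar, hcst⟩ : ∃ cs : Fin 2, {z : ↥(Pkl κ lam) | cc z = cs} ∈ U := by
      rcases U.mem_or_compl_mem {z : ↥(Pkl κ lam) | cc z = 0} with h | h
      · exact ⟨0, h⟩
      · refine ⟨1, Filter.mem_of_superset h ?_⟩
        intro z hz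
        simp only [Set.mem_compl_iff, Set.mem_setOf_eq] at hz ⊢
        have : ∀ v : Fin 2, v ≠ 0 → v = 1 := by decide
        exact this _ hz
    have hD := diag hcomp hnorm AA hAAU
    refine ⟨{z | cc z = cstar} ∩ {y | ∀ x : ↥(Pkl κ lam), suit κ x.1 y.1 → y ∈ AA x},
      Filter.inter_mem hcst hD, cstar, ?_⟩
    intro x hmem hch
    have hx0 : x 0 ∈ {z | cc z = cstar} ∩ {y | ∀ x' : ↥(Pkl κ lam), suit κ x'.1 y.1 → y ∈ AA x'} :=
      hmem 0 (Nat.succ_pos n)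
    have hsub : ∀ j, j < n + 1 → (x 0).1 ⊆ (x j).1 := by
      intro j
      induction j with
      | zero => intro _; exact subset_rfl
      | succ j ihj => intro h; exact (ihj (by omega)).trans (hch j (by omega)).1
    have htail : ∀ i < n, x (i+1) ∈ AA (x 0) := by
      intro i hi
      have hmemA := hmem (i+1) (by omega)
      obtain ⟨hss, β, h1, h2, h3⟩ := hch i (by omega)
      have hsu : suit κ (x 0).1 (x (i+1)).1 :=
        ⟨hsub (i+1) (by omega), β, h1, h2,
          lt_of_le_of_lt (Cardinal.mk_le_mk_of_subset (hsub i (by omega))) h3⟩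
      exact hmemA.2 (x 0) hsu
    have happ : F (insert (x 0).1 {s | ∃ i < n, s = (x (i+1)).1}) = cc (x 0) :=
      hcc (x 0) (fun i => x (i+1)) (fun i hi => htail i hi) (fun i hi => hch (i+1) (by omega))
    have hseteq : {s | ∃ i < n + 1, s = (x i).1} =
        insert (x 0).1 {s | ∃ i < n, s = (x (i+1)).1} := by
      ext s
      simp only [Set.mem_insert_iff, Set.mem_setOf_eq]
      constructor
      · rintro ⟨i, hi, rfl⟩
        cases i with
        | zero => left; rfl
        | succ i => right; exact ⟨i, by omega, rfl⟩
      · rintro (rfl | ⟨i, hi, rfl⟩)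
        · exact ⟨0, by omega, rfl⟩
        · exact ⟨i + 1, by omega, rfl⟩
    rw [hseteq, happ]
    exact hx0.1


end S19

/-- Rowbottom-style partition theorem for supercompactness measures:
if `U` is a normal fine `κ`-complete ultrafilter on `P_κ(λ)` and
`F : [P_κ(λ)]^{<ω} → 2`, then there are `A ∈ U` and `r : ω → 2` such that
`F({x₀, …, x_{n-1}}) = r(n)` for every `⊆`-increasing chain `x₀ ⊆ ⋯ ⊆ x_{n-1}` from `A`
with `|xᵢ| < x_{i+1} ∩ κ ∈ κ`. -/
theorem stmt19 (κ lam : Cardinal.{0}) (hκ : κ.IsRegular) (hκlam : κ ≤ lam)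
    (U : Ultrafilter ↥(Pkl κ lam))
    -- κ-completeness:
    (hcomp : ∀ I : Set (Set ↥(Pkl κ lam)), Cardinal.mk ↥I < Cardinal.lift.{1,0} κ →
      (∀ s ∈ I, s ∈ U) → ⋂₀ I ∈ U)
    -- fineness:
    (hfine : ∀ a : Ordinal, a < lam.ord → {x : ↥(Pkl κ lam) | a ∈ x.1} ∈ U)
    -- normality (closure under diagonal intersections):
    (hnorm : ∀ Fm : Ordinal → Set ↥(Pkl κ lam), (∀ a, a < lam.ord → Fm a ∈ U) →
      {x : ↥(Pkl κ lam) | ∀ a ∈ x.1, x ∈ Fm a} ∈ U)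
    (F : Set (Set Ordinal) → Fin 2) :
    ∃ A ∈ U, ∃ r : ℕ → Fin 2,
      ∀ (n : ℕ) (x : Fin n → ↥(Pkl κ lam)), (∀ i, x i ∈ A) →
        (∀ (i : Fin n) (hi : (i : ℕ) + 1 < n),
          (x i).1 ⊆ (x ⟨(i : ℕ) + 1, hi⟩).1 ∧
          ∃ β : Ordinal, β < κ.ord ∧
            (x ⟨(i : ℕ) + 1, hi⟩).1 ∩ Set.Iio κ.ord = Set.Iio β ∧
            Cardinal.mk ↥(x i).1 < Cardinal.lift.{1,0} β.card) →
        F {s | ∃ i : Fin n, s = (x i).1} = r n := by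
  classical
  have hcomp' : S19.Hcomp κ lam U := hcomp
  have hnorm' : S19.Hnorm κ lam U := hnorm
  have hfine' : S19.Hfine κ lam U := hfine
  have hκ0 : Cardinal.aleph0.{0} < κ := S19.aleph0_lt hκ hκlam hfine' hnorm'
  choose An hAnU cn hcn using fun n => S19.hom hcomp' hnorm' n F
  have hAU : ⋂₀ (Set.range An) ∈ U := by
    refine hcomp _ ?_ ?_
    · have h := Cardinal.mk_range_le_lift (f := An)
      rw [Cardinal.lift_id'.{0,1}, Cardinal.mk_nat, Cardinal.lift_aleph0] at h
      refine h.trans_lt ?_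
      rw [← Cardinal.lift_aleph0.{1,0}]
      exact Cardinal.lift_lt.2 hκ0
    · rintro s ⟨m, rfl⟩; exact hAnU m
  refine ⟨⋂₀ (Set.range An), hAU, cn, ?_⟩
  intro n x hxA hxch
  have hempty : (∅ : Set Ordinal.{0}) ∈ Pkl κ lam := by
    have h0 : Cardinal.lift.{1,0} (0 : Cardinal.{0}) < Cardinal.lift.{1,0} κ :=
      Cardinal.lift_lt.2 hκ.pos
    rw [Cardinal.lift_zero] at h0
    show (∅ : Set Ordinal.{0}) ⊆ Set.Iio lam.ord ∧
      Cardinal.mk ↥(∅ : Set Ordinal.{0}) < Cardinal.lift.{1,0} κ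
    refine ⟨Set.empty_subset _, ?_⟩
    rw [Cardinal.mk_emptyCollection]
    exact h0
  set x' : ℕ → ↥(Pkl κ lam) := fun i => if h : i < n then x ⟨i, h⟩ else ⟨∅, hempty⟩ with hx'
  have hx'eq : ∀ i (h : i < n), x' i = x ⟨i, h⟩ := by
    intro i h; rw [hx']; simp only [dif_pos h]
  have h1 : ∀ i < n, x' i ∈ An n := by
    intro i hi
    rw [hx'eq i hi]
    exact Set.sInter_subset_of_mem (Set.mem_range_self n) (hxA ⟨i, hi⟩)
  have h2 : ∀ i, i + 1 < n → S19.suit κ (x' i).1 (x' (i+1)).1 := by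
    intro i hi
    have hi' : i < n := by omega
    have h := hxch ⟨i, hi'⟩ hi
    rw [hx'eq i hi', hx'eq (i+1) hi]
    unfold S19.suit
    exact h
  have heq : {s | ∃ i : Fin n, s = (x i).1} = {s | ∃ i < n, s = (x' i).1} := by
    ext s
    simp only [Set.mem_setOf_eq]
    constructor
    · rintro ⟨i, rfl⟩
      exact ⟨i.1, i.2, by rw [hx'eq i.1 i.2]⟩
    · rintro ⟨i, hi, rfl⟩
      exact ⟨⟨i, hi⟩, by rw [hx'eq i hi]⟩
  rw [heq]
  exact hcn n x' h1 h2
end
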